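/- arXiv:0909.0307 — 9 statements merged into one kernel-verified Lean document; each statement's English description precedes it below -/
import Mathlib

section
/- Let n ≥ 1, m ≥ 0, r ≥ 0 be integers with r < n and 2m < 2n + r. Then the following identity holds in the rational numbers: Σ_{ℓ=1}^{n-r} ℓ^m (ℓ+r)^m (2ℓ+r) C(2n, n-ℓ) C(2n, n+ℓ+r) = n · C(2n, n) · C(2n, n-r-1) · Σ_{k=0}^{m} C(n-1, k) · C(n+r+1, k+1) · (k!·(k+1)!/(2n-k)) · α_k(m,n,r). -/
open Finset

/-- The coefficient `α_k(m,n,r)` from the Newton interpolation: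
`α_k(m,n,r) = Σ_{i=0}^{k} C(2n+r, i) · C(2k-2n-r, k-i) · ((n-i)² + r(n-i))^m · (2n+r-2i) / (2n+r-2k)_{2k+1}`,
where `C(2k-2n-r, k-i)` is the generalized binomial coefficient of the integer `2k-2n-r`
(formalized by `Ring.choose`), and `(a)_{2k+1} = a(a+1)⋯(a+2k)` is the Pochhammer symbol. -/
noncomputable def alphaCoeff (m n r k : ℕ) : ℚ :=
  ∑ i ∈ Finset.range (k + 1),
    ((2 * n + r).choose i : ℚ) *
      ((Ring.choose ((2 * k : ℤ) - 2 * n - r) (k - i) : ℤ) : ℚ) *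
      (((n : ℚ) - i) ^ 2 + (r : ℚ) * ((n : ℚ) - i)) ^ m *
      (2 * (n : ℚ) + r - 2 * i) /
      (∏ j ∈ Finset.range (2 * k + 1), (2 * (n : ℚ) + (r : ℚ) - 2 * k + j))

section Helpers
open Polynomial

lemma tele (u : ℕ → ℚ) (t : ℚ) (i : ℕ) :
    ∀ M, i ≤ M → (∀ j, j ≤ M → j ≠ i → u i - u j ≠ 0) →
      ∑ k ∈ Icc i M, (∏ j ∈ (range (k+1)).erase i, (u i - u j))⁻¹ * ∏ j ∈ range k, (t - u j)
        = (∏ j ∈ (range (M+1)).erase i, (t - u j)) *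
            (∏ j ∈ (range (M+1)).erase i, (u i - u j))⁻¹ := by
  intro M
  induction M with
  | zero =>
    intro hi _
    interval_cases i
    simp
  | succ M ih =>
    intro hi hu
    rcases Nat.lt_or_ge M i with h | h
    · -- i = M + 1 : base case
      have hiM : i = M + 1 := by omega
      subst hiM
      rw [Finset.Icc_self, Finset.sum_singleton]
      have : (range (M+1+1)).erase (M+1) = range (M+1) := by
        rw [Finset.range_add_one, Finset.erase_insert (by simp)]
      rw [this, mul_comm]
    · -- step
      have hE : (range (M+1+1)).erase i = insert (M+1) ((range (M+1)).erase i) := by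
        rw [Finset.range_add_one, Finset.erase_insert_of_ne (by omega)]
      rw [Finset.sum_Icc_succ_top (by omega), ih h (fun j hj => hu j (by omega)), hE,
        Finset.prod_insert (by simp), Finset.prod_insert (by simp)]
      have hW : (∏ j ∈ (range (M+1)).erase i, (u i - u j)) ≠ 0 := by
        refine Finset.prod_ne_zero_iff.2 fun j hj => ?_
        have := Finset.mem_erase.1 hj
        exact hu j (by have := Finset.mem_range.1 this.2; omega) this.1
      have hnew : u i - u (M+1) ≠ 0 := hu _ le_rfl (by omega)
      have hNk : ∏ j ∈ range (M+1), (t - u j)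
          = (t - u i) * ∏ j ∈ (range (M+1)).erase i, (t - u j) :=
        (Finset.mul_prod_erase _ _ (by simp; omega)).symm
      rw [hNk]
      field_simp
      ring

lemma newton (m : ℕ) (u : ℕ → ℚ) (hu : ∀ i j, i ≤ m → j ≤ m → i ≠ j → u i ≠ u j) (t : ℚ) :
    t ^ m = ∑ k ∈ range (m+1),
      (∑ i ∈ range (k+1), u i ^ m * (∏ j ∈ (range (k+1)).erase i, (u i - u j))⁻¹) *
        ∏ j ∈ range k, (t - u j) := by
  have hinj : Set.InjOn u (range (m+1)) := by
    intro a ha b hb hab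
    simp only [coe_range, Set.mem_Iio] at ha hb
    by_contra h
    exact hu a b (by omega) (by omega) h hab
  have swap : ∑ k ∈ range (m+1),
      (∑ i ∈ range (k+1), u i ^ m * (∏ j ∈ (range (k+1)).erase i, (u i - u j))⁻¹) *
        ∏ j ∈ range k, (t - u j)
      = ∑ i ∈ range (m+1), u i ^ m *
          ∑ k ∈ Icc i m, (∏ j ∈ (range (k+1)).erase i, (u i - u j))⁻¹ * ∏ j ∈ range k, (t - u j) := by
    simp only [Finset.sum_mul, Finset.mul_sum]
    rw [Finset.sum_comm' (t' := range (m+1)) (s' := fun i => Icc i m)]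
    · exact Finset.sum_congr rfl fun i _ => Finset.sum_congr rfl fun k _ => by ring
    · intro k i
      simp only [mem_range, mem_Icc]
      omega
  rw [swap]
  have key : ∀ i ∈ range (m+1), u i ^ m *
      (∑ k ∈ Icc i m, (∏ j ∈ (range (k+1)).erase i, (u i - u j))⁻¹ * ∏ j ∈ range k, (t - u j))
      = u i ^ m * ∏ j ∈ (range (m+1)).erase i, ((t - u j) * (u i - u j)⁻¹) := by
    intro i hi
    simp only [mem_range] at hi
    rw [tele u t i m (by omega)
        (fun j hj hji => sub_ne_zero.2 (hu i j (by omega) (by omega) (Ne.symm hji))),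
      Finset.prod_mul_distrib, Finset.prod_inv_distrib]
  rw [Finset.sum_congr rfl key]
  -- now Lagrange
  have hdeg : ((X : ℚ[X]) ^ m).degree < (range (m+1)).card := by
    simp [degree_X_pow]
    exact_mod_cast Nat.lt_succ_self m
  have h := Lagrange.eq_interpolate (v := u) (f := (X : ℚ[X]) ^ m) hinj hdeg
  have h2 := congrArg (Polynomial.eval t) h
  rw [Lagrange.interpolate_apply] at h2
  simp only [Polynomial.eval_pow, Polynomial.eval_X, Polynomial.eval_finset_sum, Polynomial.eval_mul,
    Polynomial.eval_C, Lagrange.basis, Polynomial.eval_prod, Lagrange.basisDivisor,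
    Polynomial.eval_sub] at h2
  rw [h2]
  refine Finset.sum_congr rfl fun i hi => ?_
  congr 1
  refine Finset.prod_congr rfl fun j hj => ?_
  ring

lemma castDesc (M k : ℕ) (h : k ≤ M) :
    ((M.descFactorial k : ℕ) : ℚ) = ∏ i ∈ range k, ((M : ℚ) - i) := by
  rw [Nat.descFactorial_eq_prod_range, Nat.cast_prod]
  exact Finset.prod_congr rfl fun i hi => by
    have : i ≤ M := by have := Finset.mem_range.1 hi; omega
    push_cast [this]; ring

lemma castDescFac (M k : ℕ) (h : k ≤ M) :
    ((M.descFactorial k : ℕ) : ℚ) = (M.factorial : ℚ) / ((M - k).factorial : ℚ) := by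
  have := Nat.factorial_mul_descFactorial h
  have h2 : (((M - k).factorial : ℚ)) * (M.descFactorial k : ℚ) = (M.factorial : ℚ) := by
    exact_mod_cast congrArg (Nat.cast (R := ℚ)) this
  field_simp [← h2]
  linear_combination h2

lemma b34 (a b k : ℕ) (hk : k ≤ a) :
    (((a+b).choose a : ℕ) : ℚ) * (a.descFactorial k : ℕ)
      = (((a+b).descFactorial k : ℕ) : ℚ) * (((a - k) + b).choose (a - k) : ℕ) := by
  obtain ⟨c, rfl⟩ : ∃ c, a = k + c := ⟨a - k, by omega⟩
  simp only [Nat.add_sub_cancel_left]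
  have e1 : k + c - k = c := by omega
  have e2 : k + c + b - k = c + b := by omega
  have e3 : k + c + b - (k + c) = b := by omega
  have d1 : (((k+c).descFactorial k : ℕ) : ℚ) = ((k+c).factorial : ℚ) / (c.factorial : ℚ) := by
    rw [castDescFac _ _ (by omega), e1]
  have d2 : (((k+c+b).descFactorial k : ℕ) : ℚ)
      = ((k+c+b).factorial : ℚ) / ((c+b).factorial : ℚ) := by
    rw [castDescFac _ _ (by omega), e2]
  have f3 : (((k+c+b).choose (k+c) : ℕ) : ℚ)
      = ((k+c+b).factorial : ℚ) / (((k+c).factorial : ℚ) * (b.factorial : ℚ)) := by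
    rw [Nat.cast_choose ℚ (by omega), e3]
  have f4 : (((c+b).choose c : ℕ) : ℚ)
      = ((c+b).factorial : ℚ) / ((c.factorial : ℚ) * (b.factorial : ℚ)) := by
    have e4 : c + b - c = b := by omega
    rw [Nat.cast_choose ℚ (by omega), e4]
  rw [d1, d2, f3, f4]
  have n1 : ((k+c).factorial : ℚ) ≠ 0 := by exact_mod_cast (Nat.factorial_pos _).ne'
  have n2 : ((c+b).factorial : ℚ) ≠ 0 := by exact_mod_cast (Nat.factorial_pos _).ne'
  have n3 : (c.factorial : ℚ) ≠ 0 := by exact_mod_cast (Nat.factorial_pos _).ne'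
  have n4 : (b.factorial : ℚ) ≠ 0 := by exact_mod_cast (Nat.factorial_pos _).ne'
  field_simp

lemma b5a (N b : ℕ) (hN : 1 ≤ N) (hb : b ≤ N) :
    ((N : ℚ) - b) * (N.choose b : ℕ) = (N : ℚ) * ((N-1).choose b : ℕ) := by
  obtain ⟨N', rfl⟩ : ∃ N', N = N' + 1 := ⟨N - 1, by omega⟩
  have h := Nat.choose_mul_succ_eq N' b
  have h' : ((N'.choose b : ℕ) : ℚ) * (N' + 1) = ((N'+1).choose b : ℕ) * ((N' + 1 - b : ℕ) : ℚ) := by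
    exact_mod_cast congrArg (Nat.cast (R := ℚ)) h
  have hc : ((N' + 1 - b : ℕ) : ℚ) = (N' : ℚ) + 1 - b := by
    push_cast [Nat.cast_sub hb]; ring
  rw [hc] at h'
  simp only [Nat.add_sub_cancel]
  push_cast
  linarith [h']

lemma b5main (N a b : ℕ) (ha : 1 ≤ a) (hb : 1 ≤ b) (hab : a + b ≤ N) :
    ((N : ℚ) - a - b) * (N.choose a : ℕ) * (N.choose b : ℕ)
      = (N : ℚ) * (((N-1).choose a : ℕ) * ((N-1).choose b : ℕ)
          - ((N-1).choose (a-1) : ℕ) * ((N-1).choose (b-1) : ℕ)) := by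
  obtain ⟨a', rfl⟩ : ∃ a', a = a' + 1 := ⟨a - 1, by omega⟩
  obtain ⟨b', rfl⟩ : ∃ b', b = b' + 1 := ⟨b - 1, by omega⟩
  obtain ⟨N', rfl⟩ : ∃ N', N = N' + 1 := ⟨N - 1, by omega⟩
  simp only [Nat.add_sub_cancel]
  have Pa : ((N' : ℚ) + 1) * (N'.choose a' : ℕ) = ((N'+1).choose (a'+1) : ℕ) * ((a' : ℚ) + 1) := by
    exact_mod_cast congrArg (Nat.cast (R := ℚ)) (Nat.add_one_mul_choose_eq N' a')
  have Pb : ((N' : ℚ) + 1) * (N'.choose b' : ℕ) = ((N'+1).choose (b'+1) : ℕ) * ((b' : ℚ) + 1) := by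
    exact_mod_cast congrArg (Nat.cast (R := ℚ)) (Nat.add_one_mul_choose_eq N' b')
  have Qa : (((N'+1).choose (a'+1) : ℕ) : ℚ) = (N'.choose a' : ℕ) + (N'.choose (a'+1) : ℕ) := by
    exact_mod_cast congrArg (Nat.cast (R := ℚ)) (Nat.choose_succ_succ N' a')
  have Qb : (((N'+1).choose (b'+1) : ℕ) : ℚ) = (N'.choose b' : ℕ) + (N'.choose (b'+1) : ℕ) := by
    exact_mod_cast congrArg (Nat.cast (R := ℚ)) (Nat.choose_succ_succ N' b')
  rw [Qa] at Pa
  rw [Qb] at Pb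
  rw [Qa, Qb]
  push_cast
  linear_combination (((N'.choose b' : ℕ) : ℚ) + (N'.choose (b'+1) : ℕ)) * Pa
    + (((N'.choose a' : ℕ) : ℚ) + (N'.choose (a'+1) : ℕ)) * Pb

lemma Tk_closed (n r k : ℕ) (hn : 1 ≤ n) (hr : r < n) (hk : k + 1 ≤ n) :
    ∑ ℓ ∈ Icc 1 (n-r), ((2*(ℓ:ℚ)+r) * (∏ i ∈ range k, (((ℓ:ℚ) - n + i) * ((ℓ:ℚ) + n - i + r)))
        * ((2*n).choose (n-ℓ) : ℕ) * ((2*n).choose (n+ℓ+r) : ℕ))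
      = (-1:ℚ)^k * ((2*n).descFactorial k : ℕ)^2 * ((2*n - k : ℕ) : ℚ)
          * ((2*n-k-1).choose (n-k-1) : ℕ) * ((2*n-k-1).choose (n-r-1) : ℕ) := by
  set G : ℕ → ℚ := fun ℓ =>
    if ℓ + k ≤ n ∧ ℓ + r ≤ n then
      (((2*n-k-1).choose (n-k-ℓ) : ℕ) : ℚ) * (((2*n-k-1).choose (n-r-ℓ) : ℕ) : ℚ)
    else 0 with hG
  set D : ℚ := (((2*n).descFactorial k : ℕ) : ℚ) with hD
  have pointwise : ∀ ℓ ∈ Icc 1 (n-r),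
      (2*(ℓ:ℚ)+r) * (∏ i ∈ range k, (((ℓ:ℚ) - n + i) * ((ℓ:ℚ) + n - i + r)))
        * ((2*n).choose (n-ℓ) : ℕ) * ((2*n).choose (n+ℓ+r) : ℕ)
      = (-1:ℚ)^k * D^2 * ((2*n - k : ℕ) : ℚ) * (G ℓ - G (ℓ+1)) := by
    intro ℓ hℓ
    rw [Finset.mem_Icc] at hℓ
    obtain ⟨hℓ1, hℓ2⟩ := hℓ
    have hℓr : ℓ + r ≤ n := by omega
    by_cases hA : ℓ + k ≤ n
    case neg =>
      have hz : ∏ i ∈ range k, (((ℓ:ℚ) - n + i) * ((ℓ:ℚ) + n - i + r)) = 0 := by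
        apply Finset.prod_eq_zero (i := n - ℓ) (Finset.mem_range.2 (by omega))
        have hc : ((n - ℓ : ℕ) : ℚ) = (n : ℚ) - ℓ := by
          rw [Nat.cast_sub (by omega)]
        rw [hc]
        ring
      have hg1 : G ℓ = 0 := by rw [hG]; simp only; rw [if_neg (by omega)]
      have hg2 : G (ℓ+1) = 0 := by rw [hG]; simp only; rw [if_neg (by omega)]
      rw [hz, hg1, hg2]
      ring
    case pos =>
      rw [Finset.prod_mul_distrib]
      have P1 : ∏ i ∈ range k, ((ℓ:ℚ) - n + i)
          = (-1:ℚ)^k * (((n-ℓ).descFactorial k : ℕ) : ℚ) := by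
        have step : ∏ i ∈ range k, ((ℓ:ℚ) - n + i)
            = ∏ i ∈ range k, ((-1) * (((n - ℓ : ℕ) : ℚ) - i)) := by
          refine Finset.prod_congr rfl fun i hi => ?_
          rw [Nat.cast_sub (by omega)]
          ring
        rw [step, Finset.prod_mul_distrib, Finset.prod_const, Finset.card_range,
          castDesc _ _ (by omega)]
      have P2 : ∏ i ∈ range k, ((ℓ:ℚ) + n - i + r)
          = (((n+ℓ+r).descFactorial k : ℕ) : ℚ) := by
        rw [castDesc _ _ (by omega)]
        refine Finset.prod_congr rfl fun i hi => ?_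
        push_cast
        ring
      rw [P1, P2]
      have e2n : (n - ℓ) + (n + ℓ) = 2*n := by omega
      have H3 : (((2*n).choose (n-ℓ) : ℕ) : ℚ) * (((n-ℓ).descFactorial k : ℕ) : ℚ)
          = D * (((2*n-k).choose (n-k-ℓ) : ℕ) : ℚ) := by
        have hb := b34 (n-ℓ) (n+ℓ) k (by omega)
        rw [e2n] at hb
        rw [hb, hD]
        have e1 : n - ℓ - k = n - k - ℓ := by omega
        have e2 : n - k - ℓ + (n + ℓ) = 2*n - k := by omega
        rw [e1, e2]
      have H4 : (((2*n).choose (n+ℓ+r) : ℕ) : ℚ) * (((n+ℓ+r).descFactorial k : ℕ) : ℚ)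
          = D * (((2*n-k).choose (n-r-ℓ) : ℕ) : ℚ) := by
        have e2n' : (n + ℓ + r) + (n - ℓ - r) = 2*n := by omega
        have hb := b34 (n+ℓ+r) (n-ℓ-r) k (by omega)
        rw [e2n'] at hb
        rw [hb, hD]
        have e2 : n + ℓ + r - k + (n - ℓ - r) = 2*n - k := by omega
        rw [e2]
        congr 1
        have hsym := Nat.choose_symm (n := 2*n-k) (k := n + ℓ + r - k) (by omega)
        have e3 : 2*n - k - (n + ℓ + r - k) = n - r - ℓ := by omega
        rw [e3] at hsym
        rw [hsym]
      have H5 : (2*(ℓ:ℚ)+r) * (((2*n-k).choose (n-k-ℓ) : ℕ) : ℚ) * (((2*n-k).choose (n-r-ℓ) : ℕ) : ℚ)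
          = ((2*n - k : ℕ) : ℚ) * (G ℓ - G (ℓ+1)) := by
        have hgl : G ℓ = (((2*n-k-1).choose (n-k-ℓ) : ℕ) : ℚ) * (((2*n-k-1).choose (n-r-ℓ) : ℕ) : ℚ) := by
          rw [hG]; simp only; rw [if_pos ⟨hA, hℓr⟩]
        by_cases hB : ℓ + 1 + k ≤ n
        · by_cases hC : ℓ + 1 + r ≤ n
          · have hgl2 : G (ℓ+1) = (((2*n-k-1).choose (n-k-(ℓ+1)) : ℕ) : ℚ)
                * (((2*n-k-1).choose (n-r-(ℓ+1)) : ℕ) : ℚ) := by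
              rw [hG]; simp only; rw [if_pos ⟨by omega, by omega⟩]
            have hb5 := b5main (2*n-k) (n-k-ℓ) (n-r-ℓ) (by omega) (by omega) (by omega)
            have ec : ((2*n-k : ℕ) : ℚ) - ((n-k-ℓ : ℕ) : ℚ) - ((n-r-ℓ : ℕ) : ℚ) = 2*(ℓ:ℚ)+r := by
              rw [Nat.cast_sub (by omega), Nat.cast_sub (by omega), Nat.cast_sub (by omega),
                Nat.cast_sub (by omega), Nat.cast_sub (by omega)]
              push_cast
              ring
            rw [ec] at hb5
            rw [hgl, hgl2, hb5]
            have e4 : n - k - ℓ - 1 = n - k - (ℓ+1) := by omega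
            have e5 : n - r - ℓ - 1 = n - r - (ℓ+1) := by omega
            rw [e4, e5]
          · -- b = 0 boundary (ℓ = n - r)
            have hb0 : n - r - ℓ = 0 := by omega
            have hgl2 : G (ℓ+1) = 0 := by rw [hG]; simp only; rw [if_neg (by omega)]
            have hb5 := b5a (2*n-k) (n-k-ℓ) (by omega) (by omega)
            have ec : ((2*n-k : ℕ) : ℚ) - ((n-k-ℓ : ℕ) : ℚ) = 2*(ℓ:ℚ)+r := by
              rw [Nat.cast_sub (by omega), Nat.cast_sub (by omega), Nat.cast_sub (by omega)]
              have hnr : (n : ℚ) = (ℓ : ℚ) + r := by exact_mod_cast (by omega : n = ℓ + r)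
              push_cast
              linarith [hnr]
            rw [ec] at hb5
            rw [hgl, hgl2, hb0]
            simp only [Nat.choose_zero_right, Nat.cast_one, mul_one, sub_zero]
            rw [hb5]
        · -- a = 0 boundary (ℓ = n - k)
          have ha0 : n - k - ℓ = 0 := by omega
          have hgl2 : G (ℓ+1) = 0 := by rw [hG]; simp only; rw [if_neg (by omega)]
          by_cases hC : ℓ + 1 + r ≤ n
          · have hb5 := b5a (2*n-k) (n-r-ℓ) (by omega) (by omega)
            have ec : ((2*n-k : ℕ) : ℚ) - ((n-r-ℓ : ℕ) : ℚ) = 2*(ℓ:ℚ)+r := by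
              rw [Nat.cast_sub (by omega), Nat.cast_sub (by omega), Nat.cast_sub (by omega)]
              have hnk : (n : ℚ) = (ℓ : ℚ) + k := by exact_mod_cast (by omega : n = ℓ + k)
              push_cast
              linarith [hnk]
            rw [ec] at hb5
            rw [hgl, hgl2, ha0]
            simp only [Nat.choose_zero_right, Nat.cast_one, one_mul, sub_zero]
            rw [mul_comm (2*(ℓ:ℚ)+r) 1, one_mul, hb5]
          · -- a = b = 0
            have hb0 : n - r - ℓ = 0 := by omega
            have ec : ((2*n-k : ℕ) : ℚ) = 2*(ℓ:ℚ)+r := by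
              rw [Nat.cast_sub (by omega)]
              have hnk : (n : ℚ) = (ℓ : ℚ) + k := by exact_mod_cast (by omega : n = ℓ + k)
              have hkr : (k : ℚ) = r := by exact_mod_cast (by omega : k = r)
              push_cast
              linarith [hnk, hkr]
            rw [hgl, hgl2, ha0, hb0, ec]
            simp
      -- assemble
      linear_combination ((-1:ℚ)^k) * (2*(ℓ:ℚ)+r) * (((n+ℓ+r).descFactorial k : ℕ) : ℚ)
            * (((2*n).choose (n+ℓ+r) : ℕ) : ℚ) * H3
        + ((-1:ℚ)^k) * (2*(ℓ:ℚ)+r) * D * (((2*n-k).choose (n-k-ℓ) : ℕ) : ℚ) * H4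
        + ((-1:ℚ)^k) * D^2 * H5
  rw [Finset.sum_congr rfl pointwise]
  have pull : ∑ ℓ ∈ Icc 1 (n-r), (-1:ℚ)^k * D^2 * ((2*n - k : ℕ) : ℚ) * (G ℓ - G (ℓ+1))
      = (-1:ℚ)^k * D^2 * ((2*n - k : ℕ) : ℚ) * ∑ ℓ ∈ Icc 1 (n-r), (G ℓ - G (ℓ+1)) := by
    rw [Finset.mul_sum]
  rw [pull]
  have tele2 : ∑ ℓ ∈ Icc 1 (n-r), (G ℓ - G (ℓ+1)) = G 1 - G (1 + (n-r)) := by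
    rw [← Finset.Ico_add_one_right_eq_Icc, Finset.sum_Ico_eq_sum_range]
    have e : n - r + 1 - 1 = n - r := by omega
    rw [e]
    exact Finset.sum_range_sub' (fun i => G (1+i)) (n-r)
  rw [tele2]
  have hG1 : G 1 = (((2*n-k-1).choose (n-k-1) : ℕ) : ℚ) * (((2*n-k-1).choose (n-r-1) : ℕ) : ℚ) := by
    rw [hG]; simp only; rw [if_pos ⟨by omega, by omega⟩]
  have hG2 : G (1 + (n-r)) = 0 := by
    rw [hG]; simp only; rw [if_neg (by omega)]
  rw [hG1, hG2]
  ring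

lemma castDesc' (M k : ℕ) (h : k ≤ M) :
    ((M.descFactorial k : ℕ) : ℚ) = ∏ i ∈ range k, ((M : ℚ) - i) := by
  rw [Nat.descFactorial_eq_prod_range, Nat.cast_prod]
  exact Finset.prod_congr rfl fun i hi => by
    have : i ≤ M := by have := Finset.mem_range.1 hi; omega
    push_cast [this]; ring

lemma prod_add_one_eq_factorial (s : ℕ) : ∏ t ∈ range s, ((t:ℚ)+1) = (s.factorial : ℚ) := by
  induction s with
  | zero => simp
  | succ s ih => rw [Finset.prod_range_succ, ih, Nat.factorial_succ]; push_cast; ring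

lemma descPochhammer_eval_rat (j : ℕ) (x : ℚ) :
    (descPochhammer ℚ j).eval x = ∏ t ∈ range j, (x - t) := by
  induction j with
  | zero => simp
  | succ j ih => rw [descPochhammer_succ_eval, ih, Finset.prod_range_succ]

lemma ringChoose_cast (z : ℤ) (j : ℕ) :
    ((Ring.choose z j : ℤ) : ℚ) = (∏ t ∈ range j, ((z : ℚ) - t)) / (j.factorial : ℚ) := by
  have h := Ring.descPochhammer_eq_factorial_smul_choose (R := ℤ) z j
  rw [← Polynomial.eval_eq_smeval, nsmul_eq_mul] at h
  have h2 : (((descPochhammer ℤ j).eval z : ℤ) : ℚ) = ((j.factorial : ℚ)) * ((Ring.choose z j : ℤ) : ℚ) := by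
    exact_mod_cast congrArg (fun x : ℤ => (x : ℚ)) h
  have hprod : (((descPochhammer ℤ j).eval z : ℤ) : ℚ) = ∏ t ∈ range j, ((z : ℚ) - t) := by
    rw [descPochhammer_eval_cast (R := ℚ) j z, descPochhammer_eval_rat]
  rw [hprod] at h2
  have : (j.factorial : ℚ) ≠ 0 := by exact_mod_cast (Nat.factorial_pos j).ne'
  field_simp [h2]
  linear_combination -h2

lemma algebra_step (e1 e2 U F S C Q B W : ℚ) (he1 : e1 * e1 = 1) (he2 : e2 * e2 = 1)
    (hF : F ≠ 0) (hS : S ≠ 0) (hC : C ≠ 0) (hQ : Q ≠ 0) (hB : B ≠ 0) (hW : W ≠ 0) :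
    U * (e1 * F * S * W)⁻¹ = e1 * e2 * (C * (e2 * Q / S) * U * B / ((F * C * Q) * (B * W))) := by
  have he1' : e1 ≠ 0 := by intro h; rw [h] at he1; simp at he1
  have he2' : e2 ≠ 0 := by intro h; rw [h] at he2; simp at he2
  field_simp
  linear_combination (-U * e2 * e2) * he1 + (-U) * he2


set_option maxHeartbeats 400000 in
lemma beta_alpha (n m r k : ℕ) (hk : k ≤ m) (hm : 2*m < 2*n + r) :
    ∑ i ∈ range (k+1), (((n:ℚ)-i)^2 + (r:ℚ)*((n:ℚ)-i))^m
        * (∏ j ∈ (range (k+1)).erase i,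
            ((((n:ℚ)-i)^2 + (r:ℚ)*((n:ℚ)-i)) - (((n:ℚ)-j)^2 + (r:ℚ)*((n:ℚ)-j))))⁻¹
      = (-1:ℚ)^k * alphaCoeff m n r k := by
  set A : ℚ := 2*(n:ℚ) + r with hA
  have hne : ∀ c : ℕ, c < 2*n+r → (A - c) ≠ 0 := by
    intro c hc
    have h1 : (c:ℚ) < ((2*n+r : ℕ) : ℚ) := by exact_mod_cast hc
    push_cast at h1
    rw [hA]
    intro h
    rw [sub_eq_zero] at h
    rw [h] at h1
    linarith
  rw [alphaCoeff, Finset.mul_sum]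
  refine Finset.sum_congr rfl fun i hi => ?_
  rw [Finset.mem_range] at hi
  obtain ⟨s, rfl⟩ : ∃ s, k = i + s := ⟨k - i, by omega⟩
  have hks : i + s - i = s := by omega
  rw [hks]
  have hfac : ∀ j : ℕ, (((n:ℚ)-i)^2 + (r:ℚ)*((n:ℚ)-i)) - (((n:ℚ)-j)^2 + (r:ℚ)*((n:ℚ)-j))
      = ((j:ℚ) - i) * (A - i - j) := fun j => by rw [hA]; ring
  have hsplitE : (range (i+s+1)).erase i = (range i) ∪ (Ico (i+1) (i+s+1)) := by
    ext j
    simp only [Finset.mem_erase, Finset.mem_range, Finset.mem_union, Finset.mem_Ico]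
    omega
  have hdisj : Disjoint (range i) (Ico (i+1) (i+s+1)) := by
    rw [Finset.disjoint_left]
    intro j hj hj2
    rw [Finset.mem_range] at hj
    rw [Finset.mem_Ico] at hj2
    omega
  have hprod1 : ∏ j ∈ range i, ((j:ℚ) - i) = (-1:ℚ)^i * (i.factorial : ℚ) := by
    have step : ∀ j ∈ range i, ((j:ℚ) - i) = (-1) * ((i:ℚ) - j) := fun j _ => by ring
    rw [Finset.prod_congr rfl step, Finset.prod_mul_distrib, Finset.prod_const, Finset.card_range,
      ← castDesc' i i le_rfl, Nat.descFactorial_self]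
  have hprod2 : ∏ j ∈ Ico (i+1) (i+s+1), ((j:ℚ) - i) = (s.factorial : ℚ) := by
    rw [Finset.prod_Ico_eq_prod_range]
    have e : i + s + 1 - (i+1) = s := by omega
    rw [e, ← prod_add_one_eq_factorial s]
    refine Finset.prod_congr rfl fun t _ => by push_cast; ring
  have hWsplit : ∏ j ∈ (range (i+s+1)).erase i,
      ((((n:ℚ)-i)^2 + (r:ℚ)*((n:ℚ)-i)) - (((n:ℚ)-j)^2 + (r:ℚ)*((n:ℚ)-j)))
      = ((-1:ℚ)^i * (i.factorial : ℚ) * (s.factorial : ℚ)) *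
          (∏ j ∈ (range (i+s+1)).erase i, (A - i - j)) := by
    rw [Finset.prod_congr rfl (fun j _ => hfac j), Finset.prod_mul_distrib]
    congr 1
    rw [hsplitE, Finset.prod_union hdisj, hprod1, hprod2]
  have hWfull : ∏ j ∈ range (i+s+1), (A - i - (j:ℚ))
      = (A - 2*i) * ∏ j ∈ (range (i+s+1)).erase i, (A - i - j) := by
    have h0 := Finset.mul_prod_erase (range (i+s+1)) (fun j : ℕ => A - i - (j:ℚ))
      (show i ∈ range (i+s+1) from Finset.mem_range.2 (by omega))
    rw [← h0]
    congr 1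
    ring
  have hRC : ((Ring.choose (2 * ((i+s : ℕ) : ℤ) - 2 * (n : ℤ) - (r : ℤ)) s : ℤ) : ℚ)
      = (-1:ℚ)^s * (∏ t ∈ range s, (A - 2*((i+s:ℕ):ℚ) + t)) / (s.factorial : ℚ) := by
    rw [ringChoose_cast]
    congr 1
    have step : ∀ t ∈ range s, ((2 * ((i+s : ℕ) : ℤ) - 2 * (n : ℤ) - (r : ℤ) : ℤ) : ℚ) - t
        = (-1) * (A - 2*((i+s:ℕ):ℚ) + t) := by
      intro t _
      rw [hA]
      push_cast
      ring
    rw [Finset.prod_congr rfl step, Finset.prod_mul_distrib, Finset.prod_const, Finset.card_range]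
  have hPI : ∏ j ∈ range (2*(i+s)+1), (A - 2*((i+s:ℕ):ℚ) + (j:ℚ))
      = (∏ t ∈ range i, (A - t)) * (∏ t ∈ range s, (A - 2*((i+s:ℕ):ℚ) + t))
          * (∏ j ∈ range (i+s+1), (A - i - (j:ℚ))) := by
    have l1 : ∏ j ∈ range (2*(i+s)+1), (A - 2*((i+s:ℕ):ℚ) + (j:ℚ))
        = ∏ j ∈ range (2*(i+s)+1), (A - (j:ℚ)) := by
      rw [← Finset.prod_range_reflect (fun j => A - (j:ℚ)) (2*(i+s)+1)]
      refine Finset.prod_congr rfl fun j hj => ?_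
      rw [Finset.mem_range] at hj
      rw [Nat.cast_sub (by omega), Nat.cast_sub (by omega)]
      push_cast
      ring
    have l2 : ∏ j ∈ range (2*(i+s)+1), (A - (j:ℚ))
        = (∏ j ∈ range i, (A - (j:ℚ))) * ((∏ j ∈ Ico i (i+(i+s)+1), (A - (j:ℚ)))
            * (∏ j ∈ Ico (i+(i+s)+1) (2*(i+s)+1), (A - (j:ℚ)))) := by
      rw [Finset.prod_Ico_consecutive (fun j : ℕ => A - (j:ℚ))
          (by omega : i ≤ i+(i+s)+1) (by omega : i+(i+s)+1 ≤ 2*(i+s)+1)]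
      rw [Finset.range_eq_Ico, Finset.range_eq_Ico,
        Finset.prod_Ico_consecutive (fun j : ℕ => A - (j:ℚ))
          (Nat.zero_le i) (by omega : i ≤ 2*(i+s)+1)]
    have m2 : ∏ j ∈ Ico i (i+(i+s)+1), (A - (j:ℚ)) = ∏ j ∈ range (i+s+1), (A - i - (j:ℚ)) := by
      rw [Finset.prod_Ico_eq_prod_range]
      have e : i + (i+s) + 1 - i = i + s + 1 := by omega
      rw [e]
      refine Finset.prod_congr rfl fun t _ => by push_cast; ring
    have m3 : ∏ j ∈ Ico (i+(i+s)+1) (2*(i+s)+1), (A - (j:ℚ))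
        = ∏ t ∈ range s, (A - 2*((i+s:ℕ):ℚ) + t) := by
      rw [Finset.prod_Ico_eq_prod_range]
      have e : 2*(i+s) + 1 - (i+(i+s)+1) = s := by omega
      rw [e, ← Finset.prod_range_reflect (fun t => A - 2*((i+s:ℕ):ℚ) + (t:ℚ)) s]
      refine Finset.prod_congr rfl fun t ht => ?_
      rw [Finset.mem_range] at ht
      rw [Nat.cast_sub (by omega), Nat.cast_sub (by omega)]
      push_cast
      ring
    rw [l1, l2, m2, m3]
    ring
  have hCdesc : (i.factorial : ℚ) * ((2*n+r).choose i : ℚ) = ∏ t ∈ range i, (A - t) := by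
    have h1 : (((2*n+r).descFactorial i : ℕ) : ℚ) = ∏ t ∈ range i, (A - t) := by
      rw [castDesc' (2*n+r) i (by omega)]
      refine Finset.prod_congr rfl fun t _ => by rw [hA]; push_cast; ring
    rw [← h1, Nat.descFactorial_eq_factorial_mul_choose]
    push_cast
    ring
  have hWne : (∏ j ∈ (range (i+s+1)).erase i, (A - i - j)) ≠ 0 := by
    refine Finset.prod_ne_zero_iff.2 fun j hj => ?_
    have hj2 := Finset.mem_range.1 (Finset.mem_erase.1 hj).2
    have h1 := hne (i + j) (by omega)
    intro h
    apply h1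
    rw [← h]
    push_cast
    ring
  have hA2i : (A - 2*(i:ℚ)) ≠ 0 := by
    have h1 := hne (2*i) (by omega)
    intro h
    apply h1
    rw [← h]
    push_cast
    ring
  have hfi : (i.factorial : ℚ) ≠ 0 := by exact_mod_cast (Nat.factorial_pos i).ne'
  have hfs : (s.factorial : ℚ) ≠ 0 := by exact_mod_cast (Nat.factorial_pos s).ne'
  have hQne : (∏ t ∈ range s, (A - 2*((i+s:ℕ):ℚ) + t)) ≠ 0 := by
    refine Finset.prod_ne_zero_iff.2 fun t ht => ?_
    have ht2 := Finset.mem_range.1 ht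
    have h1 := hne (2*(i+s) - t) (by omega)
    intro h
    apply h1
    rw [← h, Nat.cast_sub (by omega)]
    push_cast
    ring
  have hCne : ((2*n+r).choose i : ℚ) ≠ 0 := by
    have : 0 < (2*n+r).choose i := Nat.choose_pos (by omega)
    positivity
  have hsign : (-1:ℚ)^(i+s) = (-1:ℚ)^i * (-1:ℚ)^s := by rw [pow_add]
  have hm1 : ((-1:ℚ)^i) ≠ 0 := pow_ne_zero i (by norm_num)
  rw [hWsplit, hsign, hRC, hPI, ← hCdesc, hWfull]
  have he1 : (-1:ℚ)^i * (-1:ℚ)^i = 1 := by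
    rw [← pow_add, ← two_mul, pow_mul]
    norm_num
  have he2 : (-1:ℚ)^s * (-1:ℚ)^s = 1 := by
    rw [← pow_add, ← two_mul, pow_mul]
    norm_num
  exact algebra_step ((-1:ℚ)^i) ((-1:ℚ)^s) _ _ _ _ _ _ _ he1 he2 hfi hfs hCne hQne hA2i hWne

lemma coefCI (n r k : ℕ) (hn : 1 ≤ n) (hr : r < n) (hk : k + 1 ≤ n) :
    (((2*n).descFactorial k : ℕ):ℚ)^2 * ((2*n-k:ℕ):ℚ)
        * (((2*n-k-1).choose (n-k-1) : ℕ):ℚ) * (((2*n-k-1).choose (n-r-1) : ℕ):ℚ)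
      = (n:ℚ) * (((2*n).choose n : ℕ):ℚ) * (((2*n).choose (n-r-1) : ℕ):ℚ)
          * (((n-1).choose k : ℕ):ℚ) * (((n+r+1).choose (k+1) : ℕ):ℚ)
          * ((k.factorial:ℚ) * ((k+1).factorial:ℚ) / (2*(n:ℚ) - k)) := by
  obtain ⟨c, hc⟩ : ∃ c, n = k + 1 + c := ⟨n - k - 1, by omega⟩
  obtain ⟨d, hd⟩ : ∃ d, n = r + 1 + d := ⟨n - r - 1, by omega⟩
  have e1 : 2*n - k = n + c + 1 := by omega
  have e2 : 2*n - k - 1 = n + c := by omega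
  have e3 : n - k - 1 = c := by omega
  have e4 : n - r - 1 = d := by omega
  have e5 : n - 1 = k + c := by omega
  rw [e2, e1, e3, e4, e5]
  -- cast all chooses / descFactorial to factorial quotients
  have hD : (((2*n).descFactorial k : ℕ):ℚ) = ((2*n).factorial : ℚ) / (((n+c+1).factorial : ℚ)) := by
    rw [castDescFac (2*n) k (by omega), e1]
  have hC1 : (((n+c).choose c : ℕ):ℚ) = ((n+c).factorial : ℚ) / ((c.factorial : ℚ) * (n.factorial : ℚ)) := by
    have e : n + c - c = n := by omega
    rw [Nat.cast_choose ℚ (by omega), e]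
  have hC2 : (((n+c).choose d : ℕ):ℚ)
      = ((n+c).factorial : ℚ) / ((d.factorial : ℚ) * ((c+r+1).factorial : ℚ)) := by
    have e : n + c - d = c + r + 1 := by omega
    rw [Nat.cast_choose ℚ (by omega), e]
  have hC3 : (((2*n).choose n : ℕ):ℚ) = ((2*n).factorial : ℚ) / ((n.factorial : ℚ) * (n.factorial : ℚ)) := by
    have e : 2*n - n = n := by omega
    rw [Nat.cast_choose ℚ (by omega), e]
  have hC4 : (((2*n).choose d : ℕ):ℚ)
      = ((2*n).factorial : ℚ) / ((d.factorial : ℚ) * ((n+r+1).factorial : ℚ)) := by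
    have e : 2*n - d = n + r + 1 := by omega
    rw [Nat.cast_choose ℚ (by omega), e]
  have hC5 : (((k+c).choose k : ℕ):ℚ)
      = ((k+c).factorial : ℚ) / ((k.factorial : ℚ) * (c.factorial : ℚ)) := by
    have e : k + c - k = c := by omega
    rw [Nat.cast_choose ℚ (by omega), e]
  have hC6 : (((n+r+1).choose (k+1) : ℕ):ℚ)
      = ((n+r+1).factorial : ℚ) / (((k+1).factorial : ℚ) * ((c+r+1).factorial : ℚ)) := by
    have e : n + r + 1 - (k+1) = c + r + 1 := by omega
    rw [Nat.cast_choose ℚ (by omega), e]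
  rw [hD, hC1, hC2, hC3, hC4, hC5, hC6]
  -- factorial recurrences
  have hf1 : ((n+c+1).factorial : ℚ) = ((n:ℚ)+c+1) * ((n+c).factorial : ℚ) := by
    rw [Nat.factorial_succ]
    push_cast
    ring
  have hf2 : (n.factorial : ℚ) = (n:ℚ) * ((k+c).factorial : ℚ) := by
    have h : n.factorial = n * (k+c).factorial := by
      nth_rewrite 1 [hc]
      nth_rewrite 1 [hc]
      have e : k + 1 + c = (k+c) + 1 := by omega
      rw [e, Nat.factorial_succ]
    exact_mod_cast congrArg (Nat.cast (R := ℚ)) h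
  have hq : (2*(n:ℚ) - k) = (n:ℚ) + c + 1 := by
    have : (n:ℚ) = (k:ℚ) + 1 + c := by exact_mod_cast congrArg (Nat.cast (R := ℚ)) hc
    linarith
  rw [hf1, hf2, hq]
  have z1 : ((2*n).factorial : ℚ) ≠ 0 := by exact_mod_cast (Nat.factorial_pos _).ne'
  have z2 : ((n+c).factorial : ℚ) ≠ 0 := by exact_mod_cast (Nat.factorial_pos _).ne'
  have z3 : ((k+c).factorial : ℚ) ≠ 0 := by exact_mod_cast (Nat.factorial_pos _).ne'
  have z4 : (c.factorial : ℚ) ≠ 0 := by exact_mod_cast (Nat.factorial_pos _).ne'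
  have z5 : (d.factorial : ℚ) ≠ 0 := by exact_mod_cast (Nat.factorial_pos _).ne'
  have z6 : ((c+r+1).factorial : ℚ) ≠ 0 := by exact_mod_cast (Nat.factorial_pos _).ne'
  have z7 : ((n+r+1).factorial : ℚ) ≠ 0 := by exact_mod_cast (Nat.factorial_pos _).ne'
  have z8 : (k.factorial : ℚ) ≠ 0 := by exact_mod_cast (Nat.factorial_pos _).ne'
  have z9 : ((k+1).factorial : ℚ) ≠ 0 := by exact_mod_cast (Nat.factorial_pos _).ne'
  have z10 : ((n:ℚ)+c+1) ≠ 0 := by positivity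
  have z11 : (n:ℚ) ≠ 0 := by positivity
  have e6 : ((n+c+1:ℕ):ℚ) = (n:ℚ)+c+1 := by push_cast; ring
  rw [e6]
  field_simp

end Helpers

set_option maxHeartbeats 1000000 in
theorem theta_formula (n m r : ℕ) (hn : 1 ≤ n) (hr : r < n) (hm : 2 * m < 2 * n + r) :
    (∑ ℓ ∈ Finset.Icc 1 (n - r),
        (ℓ : ℚ) ^ m * ((ℓ : ℚ) + r) ^ m * (2 * (ℓ : ℚ) + r) *
          ((2 * n).choose (n - ℓ) : ℚ) * ((2 * n).choose (n + ℓ + r) : ℚ))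
      = (n : ℚ) * ((2 * n).choose n : ℚ) * ((2 * n).choose (n - r - 1) : ℚ) *
        ∑ k ∈ Finset.range (m + 1),
          ((n - 1).choose k : ℚ) * ((n + r + 1).choose (k + 1) : ℚ) *
            ((k.factorial : ℚ) * ((k + 1).factorial : ℚ) / (2 * (n : ℚ) - k)) *
            alphaCoeff m n r k := by
  set u : ℕ → ℚ := fun i => ((n:ℚ)-i)^2 + (r:ℚ)*((n:ℚ)-i) with hu_def
  have hAne : ∀ c : ℕ, c < 2*n + r → (2*(n:ℚ) + r - c) ≠ 0 := by
    intro c hc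
    have h1 : (c:ℚ) < ((2*n+r : ℕ) : ℚ) := by exact_mod_cast hc
    push_cast at h1
    intro h
    rw [sub_eq_zero] at h
    rw [← h] at h1
    linarith
  have hu : ∀ i j, i ≤ m → j ≤ m → i ≠ j → u i ≠ u j := by
    intro i j hi hj hij h
    have hfac : u i - u j = ((j:ℚ) - i) * (2*(n:ℚ) + r - i - j) := by
      simp only [hu_def]
      ring
    rw [h, sub_self] at hfac
    rcases (mul_eq_zero.1 hfac.symm) with h1 | h1
    · have : (i:ℚ) = j := by linarith [sub_eq_zero.1 (by linarith : (j:ℚ) - i = 0)]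
      exact hij (by exact_mod_cast this)
    · apply hAne (i+j) (by omega)
      push_cast
      linarith
  have expand : ∀ ℓ ∈ Finset.Icc 1 (n - r),
      (ℓ : ℚ) ^ m * ((ℓ : ℚ) + r) ^ m * (2 * (ℓ : ℚ) + r) *
          ((2 * n).choose (n - ℓ) : ℚ) * ((2 * n).choose (n + ℓ + r) : ℚ)
      = ∑ k ∈ range (m+1),
          (∑ i ∈ range (k+1), u i ^ m * (∏ j ∈ (range (k+1)).erase i, (u i - u j))⁻¹)
          * ((2*(ℓ:ℚ)+r) * (∏ i ∈ range k, (((ℓ:ℚ) - n + i) * ((ℓ:ℚ) + n - i + r)))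
              * ((2 * n).choose (n - ℓ) : ℚ) * ((2 * n).choose (n + ℓ + r) : ℚ)) := by
    intro ℓ _
    have hnewton := newton m u hu ((ℓ:ℚ) * ((ℓ:ℚ)+r))
    calc (ℓ : ℚ) ^ m * ((ℓ : ℚ) + r) ^ m * (2 * (ℓ : ℚ) + r) *
          ((2 * n).choose (n - ℓ) : ℚ) * ((2 * n).choose (n + ℓ + r) : ℚ)
        = ((ℓ:ℚ) * ((ℓ:ℚ)+r))^m * ((2 * (ℓ:ℚ) + r) *
            ((2 * n).choose (n - ℓ) : ℚ) * ((2 * n).choose (n + ℓ + r) : ℚ)) := by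
          rw [mul_pow]; ring
      _ = (∑ k ∈ range (m+1),
            (∑ i ∈ range (k+1), u i ^ m * (∏ j ∈ (range (k+1)).erase i, (u i - u j))⁻¹)
            * ∏ j ∈ range k, ((ℓ:ℚ) * ((ℓ:ℚ)+r) - u j)) * ((2 * (ℓ:ℚ) + r) *
            ((2 * n).choose (n - ℓ) : ℚ) * ((2 * n).choose (n + ℓ + r) : ℚ)) := by
          rw [← hnewton]
      _ = _ := by
          rw [Finset.sum_mul]
          refine Finset.sum_congr rfl fun k _ => ?_
          have hp : ∏ j ∈ range k, ((ℓ:ℚ) * ((ℓ:ℚ)+r) - u j)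
              = ∏ i ∈ range k, (((ℓ:ℚ) - n + i) * ((ℓ:ℚ) + n - i + r)) := by
            refine Finset.prod_congr rfl fun j _ => ?_
            simp only [hu_def]
            ring
          rw [hp]
          ring
  rw [Finset.sum_congr rfl expand, Finset.sum_comm, Finset.mul_sum]
  refine Finset.sum_congr rfl fun k hk => ?_
  rw [Finset.mem_range] at hk
  rw [← Finset.mul_sum]
  by_cases hkn : k + 1 ≤ n
  · have hbeta : (∑ i ∈ range (k+1), u i ^ m * (∏ j ∈ (range (k+1)).erase i, (u i - u j))⁻¹)
        = (-1:ℚ)^k * alphaCoeff m n r k := by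
      simp only [hu_def]
      exact beta_alpha n m r k (by omega) hm
    rw [hbeta, Tk_closed n r k hn hr hkn]
    have CI := coefCI n r k hn hr hkn
    have he : (-1:ℚ)^k * (-1:ℚ)^k = 1 := by
      rw [← pow_add, ← two_mul, pow_mul]
      norm_num
    linear_combination (alphaCoeff m n r k) * CI
      + (alphaCoeff m n r k * ((((2*n).descFactorial k : ℕ):ℚ)^2 * ((2*n-k:ℕ):ℚ)
          * (((2*n-k-1).choose (n-k-1) : ℕ):ℚ) * (((2*n-k-1).choose (n-r-1) : ℕ):ℚ))) * he
  · have hT : (∑ ℓ ∈ Finset.Icc 1 (n - r),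
        ((2*(ℓ:ℚ)+r) * (∏ i ∈ range k, (((ℓ:ℚ) - n + i) * ((ℓ:ℚ) + n - i + r)))
          * ((2 * n).choose (n - ℓ) : ℚ) * ((2 * n).choose (n + ℓ + r) : ℚ))) = 0 := by
      refine Finset.sum_eq_zero fun ℓ hℓ => ?_
      rw [Finset.mem_Icc] at hℓ
      have hz : ∏ i ∈ range k, (((ℓ:ℚ) - n + i) * ((ℓ:ℚ) + n - i + r)) = 0 := by
        apply Finset.prod_eq_zero (i := n - ℓ) (Finset.mem_range.2 (by omega))
        have hc : ((n - ℓ : ℕ) : ℚ) = (n : ℚ) - ℓ := by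
          rw [Nat.cast_sub (by omega)]
        rw [hc]
        ring
      rw [hz]
      ring
    have hc0 : (((n-1).choose k : ℕ) : ℚ) = 0 := by
      rw [Nat.choose_eq_zero_of_lt (by omega)]
      norm_num
    rw [hT, hc0]
    ring
end

section
/- For all integers n ≥ 1 and r ≥ 1, there exists an odd positive integer t such that 2 · Σ_{k=1}^{n} C(2n, n-k) · k^{2r+1} = t · n² · C(2n, n). In other words, n^{-2} C(2n,n)^{-1} Σ_{k=1}^{n} C(2n, n-k) k^{2r+1} is always half of an odd integer. -/
open Finset

noncomputable def ff (r n : ℕ) : ℤ :=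
  ∑ k ∈ Finset.Icc 1 n, ((2 * n).choose (n - k) : ℤ) * (k : ℤ) ^ (2 * r + 1)

def TT : ℕ → ℕ → ℤ
  | 0, _ => 1
  | s + 1, n => (n : ℤ) ^ 2 * TT s n - ((n - 1 : ℕ) : ℤ) ^ 2 * TT s (n - 1)

lemma key (n k : ℕ) (hk : k < n) :
    n ^ 2 * (2 * n).choose (n - k) =
      k ^ 2 * (2 * n).choose (n - k) + 2 * n * (2 * n - 1) * (2 * n - 2).choose (n - 1 - k) := by
  obtain ⟨d, rfl⟩ : ∃ d, n = k + 1 + d := ⟨n - k - 1, by omega⟩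
  have e1 : k + 1 + d - k = d + 1 := by omega
  have e2 : k + 1 + d - 1 - k = d := by omega
  have e3 : 2 * (k + 1 + d) - 1 = 2 * k + 2 * d + 1 := by omega
  have e4 : 2 * (k + 1 + d) - 2 = 2 * k + 2 * d := by omega
  rw [e1, e2, e3, e4]
  have h1 := Nat.add_one_mul_choose_eq (2 * k + 2 * d + 1) d
  have h2 : (2 * k + 2 * d + 1).choose d = (2 * k + 2 * d + 1).choose (2 * k + d + 1) := by
    have := Nat.choose_symm (n := 2 * k + 2 * d + 1) (k := 2 * k + d + 1) (by omega)
    rw [show 2 * k + 2 * d + 1 - (2 * k + d + 1) = d from by omega] at this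
    exact this
  have h3 := Nat.add_one_mul_choose_eq (2 * k + 2 * d) (2 * k + d)
  have h4 : (2 * k + 2 * d).choose (2 * k + d) = (2 * k + 2 * d).choose d := by
    have := Nat.choose_symm (n := 2 * k + 2 * d) (k := d) (by omega)
    rw [show 2 * k + 2 * d - d = 2 * k + d from by omega] at this
    exact this
  rw [show 2*k+2*d+1+1 = 2*(k+1+d) from by ring] at h1
  zify at h1 h2 h3 h4 ⊢
  linear_combination (-(2*(k:ℤ)+d+1)) * h1 + 2*((k:ℤ)+1+d)*(2*k+d+1) * h2 + (-(2*((k:ℤ)+1+d))) * h3 + 2*((k:ℤ)+1+d)*(2*k+2*d+1) * h4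

lemma frec (r n : ℕ) :
    ff (r + 1) n + 2 * n * (2 * n - 1) * ff r (n - 1) = (n : ℤ) ^ 2 * ff r n := by
  rcases Nat.eq_zero_or_pos n with rfl | hn
  · simp [ff]
  obtain ⟨m, rfl⟩ : ∃ m, n = m + 1 := ⟨n - 1, by omega⟩
  simp only [ff, Nat.add_sub_cancel]
  rw [Finset.sum_Icc_succ_top (by omega : 1 ≤ m + 1),
      Finset.sum_Icc_succ_top (by omega : 1 ≤ m + 1)]
  have htop : ((2 * (m+1)).choose (m + 1 - (m+1)) : ℤ) * (((m+1 : ℕ)) : ℤ) ^ (2 * (r+1) + 1)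
      = (((m+1:ℕ)):ℤ)^2 * (((2 * (m+1)).choose (m + 1 - (m+1)) : ℤ) * (((m+1:ℕ)):ℤ) ^ (2 * r + 1)) := by
    push_cast; ring
  have hterm : ∀ k ∈ Finset.Icc 1 m,
      ((2 * (m+1)).choose (m + 1 - k) : ℤ) * (k : ℤ) ^ (2 * (r+1) + 1)
        + 2 * (((m+1:ℕ)):ℤ) * (2 * (((m+1:ℕ)):ℤ) - 1) * (((2 * m).choose (m - k) : ℤ) * (k:ℤ) ^ (2*r+1))
      = (((m+1:ℕ)):ℤ)^2 * (((2 * (m+1)).choose (m + 1 - k) : ℤ) * (k : ℤ) ^ (2 * r + 1)) := by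
    intro k hk
    simp only [Finset.mem_Icc] at hk
    have hkey := key (m+1) k (by omega)
    rw [show 2 * (m+1) - 2 = 2 * m from by omega, show m + 1 - 1 - k = m - k from by omega,
        show 2 * (m+1) - 1 = 2 * m + 1 from by omega] at hkey
    have hc := congrArg (fun x : ℕ => (x : ℤ) * (k:ℤ)^(2*r+1)) hkey
    push_cast at hc ⊢
    have hp : (k:ℤ) ^ (2*(r+1)+1) = (k:ℤ)^2 * (k:ℤ)^(2*r+1) := by ring
    rw [hp]
    linear_combination -hc
  have hsum := Finset.sum_congr rfl hterm
  rw [Finset.sum_add_distrib, ← Finset.mul_sum, ← Finset.mul_sum] at hsum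
  linear_combination hsum + htop

lemma base (n : ℕ) : 2 * ff 0 n = (n : ℤ) * ((2 * n).choose n : ℤ) := by
  rcases Nat.eq_zero_or_pos n with rfl | hn
  · simp [ff]
  set g : ℕ → ℤ := fun i => if i ≤ n then ((2 * n - 1).choose (n - i) : ℤ) else 0 with hg
  have hstep : ∀ k ∈ Finset.Icc 1 n,
      ((2 * n).choose (n - k) : ℤ) * (k : ℤ) ^ (2 * 0 + 1) = (n : ℤ) * (g k - g (k + 1)) := by
    intro k hk
    simp only [Finset.mem_Icc] at hk
    rcases eq_or_lt_of_le hk.2 with rfl | hlt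
    · simp only [hg]
      rw [if_pos le_rfl, if_neg (by omega)]
      simp [Nat.sub_self]
    · simp only [hg]
      rw [if_pos hk.2, if_pos (by omega)]
      -- k < n here
      obtain ⟨d, rfl⟩ : ∃ d, n = k + 1 + d := ⟨n - k - 1, by omega⟩
      rw [show k + 1 + d - k = d + 1 from by omega, show k + 1 + d - (k + 1) = d from by omega,
          show 2 * (k + 1 + d) - 1 = 2 * k + 2 * d + 1 from by omega]
      have hp : (2 * (k + 1 + d)).choose (d + 1)
          = (2 * k + 2 * d + 1).choose d + (2 * k + 2 * d + 1).choose (d + 1) := by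
        rw [show 2 * (k + 1 + d) = (2 * k + 2 * d + 1) + 1 from by ring]
        exact Nat.choose_succ_succ _ _
      have hr := Nat.choose_succ_right_eq (2 * k + 2 * d + 1) d
      rw [show 2 * k + 2 * d + 1 - d = 2 * k + d + 1 from by omega] at hr
      zify at hp hr
      push_cast
      linear_combination ((k : ℤ)) * hp - hr
  rw [show ff 0 n = ∑ k ∈ Finset.Icc 1 n, (n : ℤ) * (g k - g (k + 1)) from Finset.sum_congr rfl hstep,
      ← Finset.mul_sum]
  have hIcc : Finset.Icc 1 n = Finset.Ico 1 (n + 1) := by rw [Finset.Ico_add_one_right_eq_Icc]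
  rw [hIcc, Finset.sum_Ico_eq_sum_range]
  simp only [show n + 1 - 1 = n from rfl]
  have htel : ∑ x ∈ Finset.range n, (g (1 + x) - g (1 + x + 1)) = g 1 - g (1 + n) := by
    have := Finset.sum_range_sub' (fun i => g (1 + i)) n
    simpa [add_assoc] using this
  rw [htel]
  have hg1 : g 1 = ((2 * n - 1).choose (n - 1) : ℤ) := by
    simp only [hg]; rw [if_pos (show 1 ≤ n from hn)]
  have hgn : g (1 + n) = 0 := by
    simp only [hg]; rw [if_neg (by omega)]
  rw [hg1, hgn]
  have hs := Nat.add_one_mul_choose_eq (2 * n - 1) (n - 1)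
  rw [show 2 * n - 1 + 1 = 2 * n from by omega, show n - 1 + 1 = n from by omega] at hs
  zify at hs
  linear_combination hs

lemma keyc (n : ℕ) :
    2 * (n : ℤ) * (2 * (n : ℤ) - 1) * ((2 * n - 2).choose (n - 1) : ℤ)
      = (n : ℤ) ^ 2 * ((2 * n).choose n : ℤ) := by
  rcases Nat.eq_zero_or_pos n with rfl | hn
  · simp
  have h := key n 0 hn
  simp only [Nat.sub_zero] at h
  zify at h
  have h1 : ((2 * n - 1 : ℕ) : ℤ) = 2 * (n : ℤ) - 1 := by omega
  rw [h1] at h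
  linear_combination -h

lemma main (s n : ℕ) : 2 * ff (s + 1) n = TT s n * (n : ℤ) ^ 2 * ((2 * n).choose n : ℤ) := by
  induction s generalizing n with
  | zero =>
    rcases Nat.eq_zero_or_pos n with rfl | hn
    · simp [ff, TT]
    have h := frec 0 n
    have hb := base n
    have hb' := base (n - 1)
    rw [show 2 * (n - 1) = 2 * n - 2 from by omega] at hb'
    have h1 : ((n - 1 : ℕ) : ℤ) = (n : ℤ) - 1 := by omega
    rw [h1] at hb'
    have hk := keyc n
    show 2 * ff (0 + 1) n = 1 * (n : ℤ) ^ 2 * ((2 * n).choose n : ℤ)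
    linear_combination 2 * h + (n:ℤ)^2 * hb - 2*(n:ℤ)*(2*(n:ℤ)-1) * hb' - ((n:ℤ)-1) * hk
  | succ s ih =>
    rcases Nat.eq_zero_or_pos n with rfl | hn
    · simp [ff, TT]
    have h := frec (s + 1) n
    have ihn := ih n
    have ihm := ih (n - 1)
    rw [show 2 * (n - 1) = 2 * n - 2 from by omega] at ihm
    have hk := keyc n
    show 2 * ff (s + 1 + 1) n
        = ((n : ℤ) ^ 2 * TT s n - ((n - 1 : ℕ) : ℤ) ^ 2 * TT s (n - 1)) * (n : ℤ) ^ 2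
          * ((2 * n).choose n : ℤ)
    have h1 : ((n - 1 : ℕ) : ℤ) = (n : ℤ) - 1 := by omega
    rw [h1] at ihm ⊢
    linear_combination 2 * h + (n:ℤ)^2 * ihn - 2*(n:ℤ)*(2*(n:ℤ)-1) * ihm - ((n:ℤ)-1)^2 * TT s (n-1) * hk

lemma Todd (s : ℕ) : ∀ n : ℕ, 1 ≤ n → Odd (TT s n) := by
  induction s with
  | zero => intro n hn; exact odd_one
  | succ s ih =>
    intro n hn
    show Odd ((n : ℤ) ^ 2 * TT s n - ((n - 1 : ℕ) : ℤ) ^ 2 * TT s (n - 1))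
    rcases eq_or_lt_of_le hn with rfl | h2
    · simpa using ih 1 le_rfl
    obtain ⟨a, ha⟩ := ih n hn
    obtain ⟨b, hb⟩ := ih (n - 1) (by omega)
    rw [ha, hb]
    rcases Nat.even_or_odd n with ⟨c, hc⟩ | ⟨c, hc⟩
    · have h1 : ((n - 1 : ℕ) : ℤ) = 2 * (c : ℤ) - 1 := by omega
      have h2 : (n : ℤ) = 2 * c := by omega
      rw [h1, h2]
      exact ⟨2 * c ^ 2 * (2 * a + 1) - (2 * c ^ 2 - 2 * c) * (2 * b + 1) - b - 1, by ring⟩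
    · have h1 : ((n - 1 : ℕ) : ℤ) = 2 * (c : ℤ) := by omega
      have h2 : (n : ℤ) = 2 * c + 1 := by omega
      rw [h1, h2]
      exact ⟨(2 * c ^ 2 + 2 * c) * (2 * a + 1) + a - 2 * c ^ 2 * (2 * b + 1), by ring⟩

theorem half_odd_integer (n r : ℕ) (hn : 1 ≤ n) (hr : 1 ≤ r) :
    ∃ t : ℕ, Odd t ∧ 0 < t ∧
      2 * ∑ k ∈ Finset.Icc 1 n, (2 * n).choose (n - k) * k ^ (2 * r + 1)
        = t * n ^ 2 * (2 * n).choose n := by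
  obtain ⟨s, rfl⟩ : ∃ s, r = s + 1 := ⟨r - 1, by omega⟩
  have hmain := main s n
  have hodd := Todd s n hn
  set S : ℕ := ∑ k ∈ Finset.Icc 1 n, (2 * n).choose (n - k) * k ^ (2 * (s + 1) + 1) with hS
  have hcast : (S : ℤ) = ff (s + 1) n := by
    rw [hS, ff]
    push_cast
    rfl
  have hpos : 0 < S := by
    apply Finset.sum_pos
    · intro k hk
      simp only [Finset.mem_Icc] at hk
      have h1 : 0 < (2 * n).choose (n - k) := Nat.choose_pos (by omega)
      have h2 : 0 < k ^ (2 * (s + 1) + 1) := Nat.pow_pos (by omega)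
      positivity
    · exact ⟨1, Finset.mem_Icc.mpr ⟨le_rfl, hn⟩⟩
  have hC : 0 < (2 * n).choose n := Nat.choose_pos (by omega)
  have hT : 0 < TT s n := by
    by_contra hle
    push_neg at hle
    have h1 : (0 : ℤ) < 2 * (S : ℤ) := by positivity
    rw [hcast, hmain] at h1
    have h2 : (0 : ℤ) < (n : ℤ) ^ 2 * ((2 * n).choose n : ℤ) := by positivity
    nlinarith
  refine ⟨(TT s n).toNat, ?_, ?_, ?_⟩
  · rw [← Int.odd_coe_nat, Int.toNat_of_nonneg hT.le]
    exact hodd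
  · omega
  · have : (((TT s n).toNat : ℤ)) = TT s n := Int.toNat_of_nonneg hT.le
    have hgoal : ((2 * S : ℕ) : ℤ) = (((TT s n).toNat * n ^ 2 * (2 * n).choose n : ℕ) : ℤ) := by
      push_cast
      rw [hcast, this]
      linear_combination hmain
    exact_mod_cast hgoal
end

section
/- Let n ≥ 1, m ≥ 0, r ≥ 0 be integers with 2m < 2n + r. Then for every rational number x: x^m · (x+r)^m = Σ_{k=0}^{m} α_k(m,n,r) · Π_{i=0}^{k-1} (n - x - i)(n + x + r - i). -/
open Finset

open Polynomial in
theorem descPoch_prod (j : ℕ) (a : ℚ) : (descPochhammer ℚ j).eval a = ∏ t ∈ range j, (a - t) := by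
  induction j with
  | zero => simp
  | succ j ih => rw [descPochhammer_succ_eval, prod_range_succ, ih]

theorem ringChoose_mul (a : ℤ) (j : ℕ) :
    ((Ring.choose a j : ℤ) : ℚ) * (j.factorial : ℚ) = ∏ t ∈ range j, ((a : ℚ) - t) := by
  have h := Ring.descPochhammer_eq_factorial_smul_choose a j
  rw [← Polynomial.eval_eq_smeval] at h
  have h2 : (((descPochhammer ℤ j).eval a : ℤ) : ℚ) = (descPochhammer ℚ j).eval ((a : ℚ)) :=
    descPochhammer_eval_cast (R := ℚ) j a
  rw [← descPoch_prod, ← h2, h, nsmul_eq_mul]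
  push_cast
  ring

theorem choose_mul_fact (N i : ℕ) (h : i ≤ N) :
    (N.choose i : ℚ) * (i.factorial : ℚ) = ∏ v ∈ range i, ((N : ℚ) - v) := by
  have h2 : ((i.factorial * N.choose i : ℕ) : ℚ) = ((∏ v ∈ range i, (N - v) : ℕ) : ℚ) := by
    rw [← Nat.descFactorial_eq_factorial_mul_choose, Nat.descFactorial_eq_prod_range]
  rw [Nat.cast_prod, Nat.cast_mul] at h2
  rw [mul_comm, h2]
  exact prod_congr rfl fun v hv =>
    Nat.cast_sub (le_of_lt (lt_of_lt_of_le (mem_range.mp hv) h))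

theorem prod_erase_sub (i k : ℕ) (h : i ≤ k) :
    ∏ j ∈ (range (k+1)).erase i, ((j : ℚ) - i)
      = (-1)^i * (i.factorial : ℚ) * ((k-i).factorial : ℚ) := by
  have hset : (range (k+1)).erase i = range i ∪ Ico (i+1) (k+1) := by
    ext j; simp only [mem_erase, mem_range, mem_union, mem_Ico]; omega
  have hdisj : Disjoint (range i) (Ico (i+1) (k+1)) := by
    simp only [Finset.disjoint_left, mem_range, mem_Ico]
    omega
  rw [hset, Finset.prod_union hdisj]
  have h1 : ∏ j ∈ range i, ((j : ℚ) - i) = (-1)^i * (i.factorial : ℚ) := by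
    have : ∀ j ∈ range i, ((j : ℚ) - i) = (-1) * (((i - j : ℕ) : ℚ)) := by
      intro j hj
      rw [Nat.cast_sub (le_of_lt (mem_range.mp hj))]
      ring
    rw [prod_congr rfl this, Finset.prod_mul_distrib, Finset.prod_const, ← Nat.cast_prod]
    rw [← Nat.descFactorial_eq_prod_range, Nat.descFactorial_self]
    simp
  have h2 : ∏ j ∈ Ico (i+1) (k+1), ((j : ℚ) - i) = ((k-i).factorial : ℚ) := by
    rw [Finset.prod_Ico_eq_prod_range]
    have : ∀ t ∈ range (k+1-(i+1)), ((i+1+t : ℕ) : ℚ) - i = ((t+1 : ℕ) : ℚ) := by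
      intro t _
      push_cast
      ring
    rw [prod_congr rfl this, ← Nat.cast_prod, Finset.prod_range_add_one_eq_factorial]
    congr 2
    omega
  rw [h1, h2]

theorem prod_reflect (s : ℕ) (x : ℚ) :
    ∏ j ∈ range s, (x - j) = ∏ t ∈ range s, (x - (s-1 : ℕ) + t) := by
  rw [← Finset.prod_range_reflect (fun t => x - (s-1 : ℕ) + t) s]
  apply prod_congr rfl
  intro j hj
  have hj' := mem_range.mp hj
  have h1 : ((s - 1 - j : ℕ) : ℚ) = ((s-1 : ℕ) : ℚ) - j := by
    have : j ≤ s - 1 := by omega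
    push_cast [Nat.cast_sub this]
    ring
  rw [h1]
  ring

theorem alpha_term (n r k i : ℕ) (m : ℕ) (hik : i ≤ k) (hkm : k ≤ m) (hm : 2*m < 2*n+r) :
    ((2*n+r).choose i : ℚ) * ((Ring.choose ((2*k : ℤ) - 2*n - r) (k-i) : ℤ) : ℚ)
      * (2*(n:ℚ) + r - 2*i)
      / (∏ j ∈ range (2*k+1), (2*(n:ℚ) + (r:ℚ) - 2*k + j))
    = (-1)^k * (∏ j ∈ (range (k+1)).erase i,
        ((((n:ℚ) - i)^2 + r*((n:ℚ) - i)) - (((n:ℚ) - j)^2 + r*((n:ℚ) - j))))⁻¹ := by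
  obtain ⟨d, rfl⟩ : ∃ d, k = i + d := ⟨k - i, by omega⟩
  set Nq : ℚ := 2*(n:ℚ) + r with hNqdef
  have hNk : 2*((i+d : ℕ) : ℚ) < Nq := by
    have : (2*(i+d) : ℕ) < 2*n+r := by omega
    have := (Nat.cast_lt (α := ℚ)).mpr this
    push_cast at this ⊢
    linarith
  have hkd : ((i+d : ℕ) : ℚ) = (i : ℚ) + d := by push_cast; ring
  -- building blocks
  set P1 : ℚ := ∏ t ∈ range d, (Nq - 2*(i+d : ℕ) + t) with hP1def
  set P2 : ℚ := ∏ t ∈ range (i+d+1), (Nq - (i:ℚ) - (i+d : ℕ) + t) with hP2def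
  set P3 : ℚ := ∏ v ∈ range i, (Nq - v) with hP3def
  set Q : ℚ := ∏ j ∈ (range (i+d+1)).erase i, (Nq - i - j) with hQdef
  -- positivity
  have hterm : ∀ y : ℚ, 0 ≤ y → y ≤ 2*((i+d:ℕ):ℚ) → 0 < Nq - y + 0 := by
    intro y h1 h2; linarith
  have hP1ne : P1 ≠ 0 := by
    apply ne_of_gt
    apply prod_pos
    intro t ht
    have : (0:ℚ) ≤ t := Nat.cast_nonneg t
    linarith
  have hP2ne : P2 ≠ 0 := by
    apply ne_of_gt
    apply prod_pos
    intro t ht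
    have h1 : (0:ℚ) ≤ t := Nat.cast_nonneg t
    have h2 : (i:ℚ) + ((i+d:ℕ):ℚ) ≤ 2*((i+d:ℕ):ℚ) := by
      rw [hkd]; push_cast; linarith [Nat.cast_nonneg (α := ℚ) d]
    linarith
  have hP3ne : P3 ≠ 0 := by
    apply ne_of_gt
    apply prod_pos
    intro v hv
    have h1 : (v:ℚ) ≤ ((i+d:ℕ):ℚ) := by
      have : v ≤ i+d := by have := mem_range.mp hv; omega
      exact_mod_cast this
    have h2 : (0:ℚ) ≤ ((i+d:ℕ):ℚ) := Nat.cast_nonneg _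
    linarith
  have h2ine : Nq - 2*(i:ℚ) ≠ 0 := by
    have h1 : (i:ℚ) ≤ ((i+d:ℕ):ℚ) := by
      have : i ≤ i+d := by omega
      exact_mod_cast this
    have h2 : (0:ℚ) ≤ ((i+d:ℕ):ℚ) := Nat.cast_nonneg _
    intro h
    have : Nq = 2*(i:ℚ) := by linarith
    rw [this] at hNk
    linarith
  -- decomposition of the Pochhammer denominator
  have hD : ∏ j ∈ range (2*(i+d)+1), (Nq - 2*((i+d:ℕ):ℚ) + j) = P1 * (P2 * P3) := by
    have hsplit : range (2*(i+d)+1) = range (d + ((i+d+1) + i)) := by congr 1; omega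
    rw [hsplit, Finset.prod_range_add, Finset.prod_range_add]
    have e2 : ∏ x ∈ range (i+d+1), (Nq - 2*((i+d:ℕ):ℚ) + ((d + x : ℕ):ℚ)) = P2 := by
      rw [hP2def]
      apply prod_congr rfl; intro t _; push_cast; ring
    have e3 : ∏ x ∈ range i, (Nq - 2*((i+d:ℕ):ℚ) + ((d + (i + d + 1 + x) : ℕ):ℚ)) = P3 := by
      rw [hP3def, prod_reflect i Nq]
      apply prod_congr rfl
      intro u hu
      have hu' := mem_range.mp hu
      have h1 : ((i - 1 : ℕ) : ℚ) = (i:ℚ) - 1 := by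
        have : 1 ≤ i := by omega
        push_cast [Nat.cast_sub this]; ring
      rw [h1]
      push_cast
      ring
    rw [e2, e3]
  -- Ring.choose part
  have hRC : ((Ring.choose (2 * ((i+d : ℕ) : ℤ) - 2*n - r) (i+d-i) : ℤ) : ℚ) * (d.factorial : ℚ)
      = (-1)^d * P1 := by
    have hd' : i+d-i = d := by omega
    rw [hd', ringChoose_mul]
    have : ∀ t ∈ range d, ((2 * ((i+d : ℕ) : ℤ) - 2*n - r : ℤ) : ℚ) - t
        = (-1) * (Nq - 2*(i+d:ℕ) + t) := by
      intro t _
      push_cast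
      ring
    rw [prod_congr rfl this, Finset.prod_mul_distrib, Finset.prod_const, card_range]
  -- Nat.choose part
  have hCh : ((2*n+r).choose i : ℚ) * (i.factorial : ℚ) = P3 := by
    rw [choose_mul_fact _ _ (by omega)]
    apply prod_congr rfl
    intro v _
    push_cast
    ring
  -- the Lagrange denominator
  have hcsub : ∀ j ∈ (range (i+d+1)).erase i,
      ((((n:ℚ) - i)^2 + r*((n:ℚ) - i)) - (((n:ℚ) - j)^2 + r*((n:ℚ) - j)))
        = ((j:ℚ) - i) * (Nq - i - j) := by
    intro j _
    rw [hNqdef]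
    ring
  have hE : ∏ j ∈ (range (i+d+1)).erase i,
      ((((n:ℚ) - i)^2 + r*((n:ℚ) - i)) - (((n:ℚ) - j)^2 + r*((n:ℚ) - j)))
        = ((-1)^i * (i.factorial : ℚ) * (d.factorial : ℚ)) * Q := by
    rw [prod_congr rfl hcsub, Finset.prod_mul_distrib, prod_erase_sub i (i+d) (by omega),
      Nat.add_sub_cancel_left]
  have hQP2 : (Nq - 2*(i:ℚ)) * Q = P2 := by
    have h := Finset.mul_prod_erase (range (i+d+1)) (fun j => Nq - (i:ℚ) - (j:ℕ))
      (show i ∈ range (i+d+1) by simp)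
    rw [hQdef]
    have : Nq - 2*(i:ℚ) = Nq - (i:ℚ) - (i:ℚ) := by ring
    rw [this, h, hP2def]
    -- ∏ j ∈ range (i+d+1), (Nq - i - j) = ∏ t ∈ range (i+d+1), (Nq - i - (i+d) + t)
    have := prod_reflect (i+d+1) (Nq - (i:ℚ))
    simp only [Nat.add_sub_cancel] at this
    rw [this]
  have hQne : Q ≠ 0 := by
    intro h
    rw [h, mul_zero] at hQP2
    exact hP2ne hQP2.symm
  -- assemble
  have hfi : (i.factorial : ℚ) ≠ 0 := Nat.cast_ne_zero.mpr (Nat.factorial_ne_zero i)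
  have hfd : (d.factorial : ℚ) ≠ 0 := Nat.cast_ne_zero.mpr (Nat.factorial_ne_zero d)
  rw [hE]
  have hDen : (∏ j ∈ range (2*(i+d)+1), (2*(n:ℚ) + (r:ℚ) - 2*(i+d:ℕ) + j)) = P1 * (P2 * P3) := by
    rw [← hD]
  rw [show (∏ j ∈ range (2*(i+d)+1), (2*(n:ℚ) + (r:ℚ) - 2*((i+d:ℕ):ℚ) + (j:ℚ))) = P1 * (P2 * P3) from hDen]
  rw [show ((2*(n:ℚ) + r - 2*i)) = Nq - 2*(i:ℚ) from by rw [hNqdef]]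
  rw [← hQP2] at hD ⊢
  -- now pure field algebra
  have hCh' : ((2*n+r).choose i : ℚ) = P3 / (i.factorial : ℚ) := by
    field_simp at hCh ⊢
    linarith [hCh]
  have hRC' : ((Ring.choose (2 * ((i+d : ℕ) : ℤ) - 2*n - r) (i+d-i) : ℤ) : ℚ)
      = (-1)^d * P1 / (d.factorial : ℚ) := by
    field_simp at hRC ⊢
    linarith [hRC]
  rw [hCh', hRC', pow_add]
  field_simp

theorem telescope (c : ℕ → ℚ) (u : ℚ) (i : ℕ) :
    ∀ M, i ≤ M → (∀ j, j ≤ M → j ≠ i → c i - c j ≠ 0) →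
    ∑ k ∈ Icc i M, (∏ j ∈ range k, (u - c j)) * (∏ j ∈ (range (k+1)).erase i, (c i - c j))⁻¹
      = ∏ j ∈ (range (M+1)).erase i, ((u - c j) / (c i - c j)) := by
  intro M
  induction M with
  | zero =>
    intro hi _
    interval_cases i
    simp
  | succ M ih =>
    intro hi hne
    rcases Nat.lt_or_ge i (M+1) with hiM | hiM
    · have hiM' : i ≤ M := Nat.lt_succ_iff.mp hiM
      rw [show Icc i (M+1) = insert (M+1) (Icc i M) by ext j; simp [mem_Icc]; omega,
        Finset.sum_insert (by simp)]
      rw [ih hiM' (fun j hj hne' => hne j (by omega) hne')]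
      have hins : (range (M+2)).erase i = insert (M+1) ((range (M+1)).erase i) := by
        ext j
        simp only [mem_erase, mem_range, mem_insert]
        omega
      rw [hins, Finset.prod_insert (by simp), Finset.prod_insert (by simp)]
      have hEne : ∀ j ∈ (range (M+1)).erase i, c i - c j ≠ 0 := by
        intro j hj
        simp only [mem_erase, mem_range] at hj
        exact hne j (by omega) hj.1
      have hB : (∏ j ∈ (range (M+1)).erase i, (c i - c j)) ≠ 0 := prod_ne_zero_iff.mpr hEne
      have hd : c i - c (M+1) ≠ 0 := hne (M+1) le_rfl (by omega)
      have hsplit : ∏ j ∈ range (M+1), (u - c j)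
          = (u - c i) * ∏ j ∈ (range (M+1)).erase i, (u - c j) :=
        (Finset.mul_prod_erase _ _ (by simp [mem_range]; omega)).symm
      rw [hsplit, Finset.prod_div_distrib]
      field_simp
      ring
    · have : i = M+1 := by omega
      subst this
      rw [show Icc (M+1) (M+1) = {M+1} by simp, Finset.sum_singleton,
        show (range (M+2)).erase (M+1) = range (M+1) by
          rw [Finset.range_add_one, Finset.erase_insert (by simp)]]
      rw [Finset.prod_div_distrib, div_eq_mul_inv]

open Polynomial in
theorem lagrange_pow (m : ℕ) (c : ℕ → ℚ) (hinj : Set.InjOn c (range (m+1)))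
    (u : ℚ) :
    u ^ m = ∑ i ∈ range (m+1), (c i) ^ m *
      ∏ j ∈ (range (m+1)).erase i, ((u - c j) / (c i - c j)) := by
  have hdeg : ((X : ℚ[X]) ^ m).degree < (range (m+1)).card := by
    simp [Polynomial.degree_X_pow]
    exact_mod_cast Nat.lt_succ_self m
  have h := Lagrange.eq_interpolate (s := range (m+1)) (v := c) hinj hdeg
  have := congrArg (Polynomial.eval u) h
  simp only [Polynomial.eval_pow, Polynomial.eval_X] at this
  rw [this, Lagrange.interpolate_apply, Polynomial.eval_finset_sum]
  apply sum_congr rfl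
  intro i hi
  rw [Polynomial.eval_mul, Polynomial.eval_C, Lagrange.basis, Polynomial.eval_prod]
  congr 1
  apply prod_congr rfl
  intro j hj
  rw [Lagrange.basisDivisor, Polynomial.eval_mul, Polynomial.eval_C, eval_sub, eval_X, eval_C]
  rw [div_eq_inv_mul]

theorem sum_swap_tri (m : ℕ) (F : ℕ → ℕ → ℚ) :
    ∑ k ∈ range (m+1), ∑ i ∈ range (k+1), F i k
      = ∑ i ∈ range (m+1), ∑ k ∈ Icc i m, F i k := by
  rw [Finset.sum_sigma', Finset.sum_sigma']
  apply Finset.sum_nbij' (fun p => ⟨p.2, p.1⟩) (fun p => ⟨p.2, p.1⟩) <;>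
    simp <;> omega

theorem newton_interpolation_xm (n m r : ℕ) (hn : 1 ≤ n) (hm : 2 * m < 2 * n + r) (x : ℚ) :
    x ^ m * (x + r) ^ m
      = ∑ k ∈ Finset.range (m + 1),
          alphaCoeff m n r k *
            ∏ i ∈ Finset.range k, (((n : ℚ) - x - i) * ((n : ℚ) + x + r - i)) := by
  classical
  let c : ℕ → ℚ := fun i => ((n:ℚ) - i)^2 + (r:ℚ) * ((n:ℚ) - i)
  let u : ℚ := x * (x + r)
  have hcsub : ∀ i j : ℕ, c i - c j = ((j:ℚ) - i) * (2*(n:ℚ) + r - i - j) := by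
    intro i j; show (((n:ℚ) - i)^2 + (r:ℚ) * ((n:ℚ) - i)) - (((n:ℚ) - j)^2 + (r:ℚ) * ((n:ℚ) - j)) = _; ring
  have hne : ∀ i j : ℕ, i ≤ m → j ≤ m → j ≠ i → c i - c j ≠ 0 := by
    intro i j hi hj hij
    rw [hcsub]
    apply mul_ne_zero
    · intro h
      apply hij
      have : (j:ℚ) = i := by linarith [sub_eq_zero.mp h]
      exact_mod_cast this
    · have h1 : ((i + j : ℕ) : ℚ) < ((2*n+r : ℕ) : ℚ) := by
        exact_mod_cast (show i + j < 2*n+r by omega)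
      push_cast at h1
      intro h
      linarith
  have hinj : Set.InjOn c (range (m+1)) := by
    intro a ha b hb hab
    simp only [coe_range, Set.mem_Iio] at ha hb
    by_contra hab'
    exact hne a b (by omega) (by omega) (Ne.symm hab') (by rw [hab]; ring)
  have key := lagrange_pow m c hinj u
  have hLHS : x ^ m * (x + r) ^ m = u ^ m := by rw [← mul_pow]
  rw [hLHS, key]
  have htel : ∀ i ∈ range (m+1),
      (c i)^m * ∏ j ∈ (range (m+1)).erase i, ((u - c j)/(c i - c j))
        = ∑ k ∈ Icc i m, (c i)^m *
            ((∏ j ∈ range k, (u - c j)) * (∏ j ∈ (range (k+1)).erase i, (c i - c j))⁻¹) := by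
    intro i hi
    have hi' : i ≤ m := by simp only [mem_range] at hi; omega
    rw [← telescope c u i m hi' (fun j hj hji => hne i j hi' hj hji), mul_sum]
  rw [sum_congr rfl htel, ← sum_swap_tri m
    (fun i k => (c i)^m * ((∏ j ∈ range k, (u - c j)) *
      (∏ j ∈ (range (k+1)).erase i, (c i - c j))⁻¹))]
  apply sum_congr rfl
  intro k hk
  have hkm : k ≤ m := by simp only [mem_range] at hk; omega
  have hsq : ((-1:ℚ))^k * (-1)^k = 1 := by
    rw [← pow_add]
    exact Even.neg_one_pow ⟨k, rfl⟩
  have hB : ∏ i ∈ range k, (((n : ℚ) - x - i) * ((n : ℚ) + x + r - i))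
      = (-1)^k * ∏ i ∈ range k, (u - c i) := by
    have h1 : ∀ i ∈ range k, (((n : ℚ) - x - i) * ((n : ℚ) + x + r - i))
        = (-1) * (u - c i) := by
      intro i _
      show _ = (-1) * (x * (x + r) - (((n:ℚ) - i)^2 + (r:ℚ) * ((n:ℚ) - i)))
      ring
    rw [prod_congr rfl h1, Finset.prod_mul_distrib, Finset.prod_const, card_range]
  have hA : alphaCoeff m n r k
      = ∑ i ∈ range (k+1), (c i)^m *
          ((-1)^k * (∏ j ∈ (range (k+1)).erase i, (c i - c j))⁻¹) := by
    rw [alphaCoeff]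
    apply sum_congr rfl
    intro i hi
    have hik : i ≤ k := by simp only [mem_range] at hi; omega
    have ht := alpha_term n r k i m hik hkm hm
    calc ((2*n+r).choose i : ℚ) *
          ((Ring.choose ((2*k : ℤ) - 2*n - r) (k-i) : ℤ) : ℚ) *
          (((n : ℚ) - i) ^ 2 + (r : ℚ) * ((n : ℚ) - i)) ^ m *
          (2 * (n : ℚ) + r - 2 * i) /
          (∏ j ∈ Finset.range (2 * k + 1), (2 * (n : ℚ) + (r : ℚ) - 2 * k + j))
        = (((2*n+r).choose i : ℚ) *
            ((Ring.choose ((2*k : ℤ) - 2*n - r) (k-i) : ℤ) : ℚ) *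
            (2*(n:ℚ) + r - 2*i) /
            (∏ j ∈ range (2*k+1), (2*(n:ℚ) + (r:ℚ) - 2*k + j))) *
            (((n : ℚ) - i) ^ 2 + (r : ℚ) * ((n : ℚ) - i)) ^ m := by
          ring
      _ = ((-1)^k * (∏ j ∈ (range (k+1)).erase i,
            ((((n:ℚ) - i)^2 + (r:ℚ)*((n:ℚ) - i)) - (((n:ℚ) - j)^2 + (r:ℚ)*((n:ℚ) - j))))⁻¹) *
            (((n : ℚ) - i) ^ 2 + (r : ℚ) * ((n : ℚ) - i)) ^ m := by
          rw [ht]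
      _ = (c i)^m * ((-1)^k * (∏ j ∈ (range (k+1)).erase i, (c i - c j))⁻¹) := by
          ring
  rw [hA, hB, Finset.sum_mul]
  apply sum_congr rfl
  intro i _
  rw [show c i ^ m * ((-1:ℚ)^k * (∏ j ∈ (range (k+1)).erase i, (c i - c j))⁻¹) *
      ((-1:ℚ)^k * ∏ j ∈ range k, (u - c j))
    = (c i ^ m * ((∏ j ∈ range k, (u - c j)) *
        (∏ j ∈ (range (k+1)).erase i, (c i - c j))⁻¹)) * ((-1:ℚ)^k * (-1)^k) from by ring,
    hsq, mul_one]
end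

section
/- For all integers n ≥ 1 and 0 ≤ r < n: Σ_{k=1}^{n-r} k(k+r)(2k+r)^3 · C(2n, n-k) · C(2n, n+k+r) = n² · C(2n, n) · C(2n-2, n-r-1) · (4n + r²). -/
open Finset

private def Qp (k n r : ℤ) : ℤ :=
  n*r^4 + 4*n^2*r^2 - n^2*r^4 - 5*n^3*r^2 - 4*n^4 + n^4*r^2 + 4*n^5
  + k*r^4 + 7*k*n*r^3 - 3*k*n*r^4 + 8*k*n^2*r - 13*k*n^2*r^3 + 2*k*n^2*r^4
  - 12*k*n^3*r + 2*k*n^3*r^3 + 8*k*n^4*r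
  - 4*k^2*r^2 + 7*k^2*r^3 - 2*k^2*r^4 + 23*k^2*n*r^2 - 21*k^2*n*r^3 + 2*k^2*n*r^4
  + 8*k^2*n^2 - 41*k^2*n^2*r^2 + 14*k^2*n^2*r^3 - 12*k^2*n^3 + 10*k^2*n^3*r^2 + 8*k^2*n^4
  - 8*k^3*r + 18*k^3*r^2 - 8*k^3*r^3 + 32*k^3*n*r - 54*k^3*n*r^2 + 12*k^3*n*r^3
  - 56*k^3*n^2*r + 36*k^3*n^2*r^2 + 16*k^3*n^3*r
  - 4*k^4 + 20*k^4*r - 14*k^4*r^2 + 16*k^4*n - 60*k^4*n*r + 26*k^4*n*r^2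
  - 28*k^4*n^2 + 40*k^4*n^2*r + 8*k^4*n^3
  + 8*k^5 - 12*k^5*r - 24*k^5*n + 24*k^5*n*r + 16*k^5*n^2
  - 4*k^6 + 8*k^6*n

private lemma Qp_star (k n r : ℤ) :
    Qp k n r * ((n+k+1)*(n+k+r+1)) - Qp (k+1) n r * ((n-k)*(n-k-r))
      = 2*(n-1)*(2*n-1) * (k*(k+r)*(2*k+r)^3) * ((n+k+1)*(n+k+r+1)) := by
  simp only [Qp]; ring

private lemma Qp_one (n r : ℤ) :
    Qp 1 n r = (n-1)*(n+1)*(n+r)*(n+r+1)*(4*n+r^2) := by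
  simp only [Qp]; ring

private lemma topdec (m j : ℕ) :
    (m+1) * m.choose j = ((m+1) - j) * (m+1).choose j := by
  have h1 := Nat.add_one_mul_choose_eq m j
  have h2 := Nat.choose_succ_right_eq (m+1) j
  rw [h1, h2, Nat.mul_comm]

private def gfun (n r k : ℕ) : ℤ :=
  Qp k n r * ((2*n).choose (n-k) : ℤ) * ((2*n).choose (n+k+r) : ℤ)

private lemma gfun_step (n r k : ℕ) (hk1 : 1 ≤ k) (hk : k + r ≤ n) :
    gfun n r k - gfun n r (k+1)
      = 2*((n:ℤ)-1)*(2*(n:ℤ)-1) * ((k:ℤ)*((k:ℤ)+r)*(2*(k:ℤ)+r)^3)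
        * ((2*n).choose (n-k) : ℤ) * ((2*n).choose (n+k+r) : ℤ) := by
  have hkn : k ≤ n := by omega
  have hB : ((2*n).choose (n+k+r+1) : ℤ) * ((n:ℤ)+k+r+1)
      = ((2*n).choose (n+k+r) : ℤ) * ((n:ℤ)-k-r) := by
    have h := Nat.choose_succ_right_eq (2*n) (n+k+r)
    rw [show 2*n - (n+k+r) = n - (k+r) from by omega] at h
    have h' : (((2*n).choose (n+k+r+1) : ℤ)) * ((n:ℤ)+k+r+1)
        = ((2*n).choose (n+k+r) : ℤ) * (((n - (k+r) : ℕ)) : ℤ) := by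
      exact_mod_cast congrArg (Nat.cast (R := ℤ)) h
    rw [h']
    congr 1
    push_cast [hk]
    ring
  have hA : ((2*n).choose (n-(k+1)) : ℤ) * ((n:ℤ)+k+1) * ((n:ℤ)-k-r)
      = ((2*n).choose (n-k) : ℤ) * ((n:ℤ)-k) * ((n:ℤ)-k-r) := by
    rcases Nat.lt_or_ge k n with hlt | hge
    · have e1 : n - (k+1) + 1 = n - k := by omega
      have e2 : 2*n - (n-(k+1)) = n+k+1 := by omega
      have h := Nat.choose_succ_right_eq (2*n) (n-(k+1))
      rw [e1, e2] at h
      have h' : ((2*n).choose (n-k) : ℤ) * (((n-k : ℕ)) : ℤ)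
          = ((2*n).choose (n-(k+1)) : ℤ) * ((n:ℤ)+k+1) := by
        exact_mod_cast congrArg (Nat.cast (R := ℤ)) h
      have hc : (((n-k : ℕ)) : ℤ) = (n:ℤ) - k := by push_cast [hkn]; ring
      rw [hc] at h'
      linear_combination ((n:ℤ)-k-r) * h'.symm
    · have h5 : k = n := by omega
      have h6 : r = 0 := by omega
      have hz : (n:ℤ) - k - r = 0 := by simp [h5, h6]
      rw [hz, mul_zero, mul_zero]
  have hc : ((n:ℤ)+k+1)*((n:ℤ)+k+r+1) ≠ 0 := by positivity
  apply mul_right_cancel₀ hc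
  simp only [gfun]
  rw [show n+(k+1)+r = n+k+r+1 from by omega]
  push_cast
  linear_combination
    (((2*n).choose (n-k) : ℤ) * ((2*n).choose (n+k+r) : ℤ)) * Qp_star (k:ℤ) (n:ℤ) (r:ℤ)
    - (Qp ((k:ℤ)+1) n r * ((2*n).choose (n-(k+1)) : ℤ) * ((n:ℤ)+k+1)) * hB
    - (Qp ((k:ℤ)+1) n r * ((2*n).choose (n+k+r) : ℤ)) * hA

private lemma gfun_top (n r : ℕ) (hr : r ≤ n) : gfun n r (n-r+1) = 0 := by
  have h : (2*n).choose (n+(n-r+1)+r) = 0 := by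
    apply Nat.choose_eq_zero_of_lt; omega
  simp only [gfun, h]
  ring

private lemma gfun_one (n r : ℕ) (h2 : 2 ≤ n) (hr : r < n) :
    gfun n r 1 = 2*((n:ℤ)-1)*(2*(n:ℤ)-1)
      * ((n:ℤ)^2 * ((2*n).choose n : ℤ) * ((2*n-2).choose (n-r-1) : ℤ) * (4*(n:ℤ)+(r:ℤ)^2)) := by
  have e1 : (2*n).choose n * n = (2*n).choose (n-1) * (n+1) := by
    have h := Nat.choose_succ_right_eq (2*n) (n-1)
    rw [show n-1+1 = n from by omega, show 2*n - (n-1) = n+1 from by omega] at h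
    exact h
  have e2 : (2*n).choose (n+1+r) = (2*n).choose (n-r-1) := by
    have hle : n+1+r ≤ 2*n := by omega
    have h := Nat.choose_symm hle
    rw [show 2*n - (n+1+r) = n-r-1 from by omega] at h
    exact h.symm
  have e3 : 2*n * ((2*n-1).choose (n-r-1)) = (n+r+1) * ((2*n).choose (n-r-1)) := by
    have h := topdec (2*n-1) (n-r-1)
    rw [show 2*n-1+1 = 2*n from by omega, show 2*n - (n-r-1) = n+r+1 from by omega] at h
    exact h
  have e4 : (2*n-1) * ((2*n-2).choose (n-r-1)) = (n+r) * ((2*n-1).choose (n-r-1)) := by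
    have h := topdec (2*n-2) (n-r-1)
    rw [show 2*n-2+1 = 2*n-1 from by omega, show 2*n-1 - (n-r-1) = n+r from by omega] at h
    exact h
  have f1 : ((2*n).choose (n-1) : ℤ) * ((n:ℤ)+1) = ((2*n).choose n : ℤ) * (n:ℤ) := by
    exact_mod_cast congrArg (Nat.cast (R := ℤ)) e1.symm
  have f2z : ((2*n).choose (n+1+r) : ℤ) = ((2*n).choose (n-r-1) : ℤ) := by
    exact_mod_cast congrArg (Nat.cast (R := ℤ)) e2
  have f3 : 2*(n:ℤ) * ((2*n-1).choose (n-r-1) : ℤ) = ((n:ℤ)+r+1) * ((2*n).choose (n-r-1) : ℤ) := by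
    exact_mod_cast congrArg (Nat.cast (R := ℤ)) e3
  have f4 : (2*(n:ℤ)-1) * ((2*n-2).choose (n-r-1) : ℤ) = ((n:ℤ)+r) * ((2*n-1).choose (n-r-1) : ℤ) := by
    have h := congrArg (Nat.cast (R := ℤ)) e4
    push_cast at h
    rw [show ((2*n-1 : ℕ) : ℤ) = 2*(n:ℤ)-1 from by push_cast [show 1 ≤ 2*n from by omega]; ring] at h
    exact h
  have f2 : ((2*n).choose (n+1+r) : ℤ) * (((n:ℤ)+r+1)*((n:ℤ)+r))
      = 2*(n:ℤ)*(2*(n:ℤ)-1) * ((2*n-2).choose (n-r-1) : ℤ) := by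
    linear_combination (((n:ℤ)+r+1)*((n:ℤ)+r)) * f2z - ((n:ℤ)+r) * f3 - 2*(n:ℤ) * f4
  have hc : ((n:ℤ)+1)*(((n:ℤ)+r+1)*((n:ℤ)+r)) ≠ 0 := by positivity
  apply mul_right_cancel₀ hc
  simp only [gfun, Nat.cast_one]
  rw [Qp_one]
  linear_combination
    (((n:ℤ)-1)*((n:ℤ)+1)*((n:ℤ)+r)*((n:ℤ)+r+1)*(4*(n:ℤ)+(r:ℤ)^2)*((n:ℤ)+r+1)*((n:ℤ)+r)
      * ((2*n).choose (n+1+r) : ℤ)) * f1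
    + (((n:ℤ)-1)*((n:ℤ)+1)*((n:ℤ)+r)*((n:ℤ)+r+1)*(4*(n:ℤ)+(r:ℤ)^2)*(n:ℤ)*((2*n).choose n : ℤ)) * f2

theorem cubic_catalan_identity (n r : ℕ) (hn : 1 ≤ n) (hr : r < n) :
    ∑ k ∈ Finset.Icc 1 (n - r),
        k * (k + r) * (2 * k + r) ^ 3 * (2 * n).choose (n - k) * (2 * n).choose (n + k + r)
      = n ^ 2 * (2 * n).choose n * (2 * n - 2).choose (n - r - 1) * (4 * n + r ^ 2) := by
  rcases Nat.lt_or_ge n 2 with h1 | h2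
  · have hn1 : n = 1 := by omega
    have hr0 : r = 0 := by omega
    subst hn1 hr0
    decide
  · have hz : ((∑ k ∈ Finset.Icc 1 (n - r),
        k * (k + r) * (2 * k + r) ^ 3 * (2 * n).choose (n - k) * (2 * n).choose (n + k + r) : ℕ) : ℤ)
      = ((n ^ 2 * (2 * n).choose n * (2 * n - 2).choose (n - r - 1) * (4 * n + r ^ 2) : ℕ) : ℤ) := by
      have hn2 : (2:ℤ) ≤ (n:ℤ) := by exact_mod_cast h2
      have hN0 : (2*((n:ℤ)-1)*(2*(n:ℤ)-1)) ≠ 0 := by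
        have : (0:ℤ) < 2*((n:ℤ)-1)*(2*(n:ℤ)-1) := by nlinarith
        exact this.ne'
      apply mul_left_cancel₀ hN0
      have tel : ∑ k ∈ Finset.Icc 1 (n-r), (gfun n r k - gfun n r (k+1))
          = gfun n r 1 - gfun n r ((n-r)+1) := by
        rw [← Finset.Ico_add_one_right_eq_Icc, Finset.sum_Ico_eq_sum_range]
        simp only [Nat.add_sub_cancel, add_comm 1]
        exact Finset.sum_range_sub' (fun i => gfun n r (i+1)) (n-r)
      calc 2*((n:ℤ)-1)*(2*(n:ℤ)-1) * ((∑ k ∈ Finset.Icc 1 (n - r),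
            k * (k + r) * (2 * k + r) ^ 3 * (2 * n).choose (n - k) * (2 * n).choose (n + k + r) : ℕ) : ℤ)
          = ∑ k ∈ Finset.Icc 1 (n-r), (gfun n r k - gfun n r (k+1)) := by
            push_cast
            rw [Finset.mul_sum]
            apply Finset.sum_congr rfl
            intro k hk
            simp only [Finset.mem_Icc] at hk
            rw [gfun_step n r k hk.1 (by omega)]
            ring
        _ = gfun n r 1 - gfun n r ((n-r)+1) := tel
        _ = gfun n r 1 := by rw [gfun_top n r (le_of_lt hr)]; ring
        _ = 2*((n:ℤ)-1)*(2*(n:ℤ)-1)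
            * ((n ^ 2 * (2 * n).choose n * (2 * n - 2).choose (n - r - 1) * (4 * n + r ^ 2) : ℕ) : ℤ) := by
            rw [gfun_one n r h2 hr]
            push_cast
            ring
    exact_mod_cast hz
end

section
/- For all integers n ≥ 1, 0 ≤ k ≤ n and r ≥ 0, the integer f_{n,k}(r) is divisible by n^{min(2, r+1)} · C(2n, n). -/
open Finset

/-- `f_{n,k}(r) = C(2n-2k, n-k) · Σ_{i=0}^{k} C(2n, i) · C(2k-2n, k-i) · (n-i)^{2r+1}`,
where `C(2k-2n, k-i)` is the generalized binomial coefficient of the (possibly negative)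
integer `2k-2n`, formalized by `Ring.choose`. -/
noncomputable def fCoeff (n k r : ℕ) : ℤ :=
  ((2 * n - 2 * k).choose (n - k) : ℤ) *
    ∑ i ∈ Finset.range (k + 1),
      ((2 * n).choose i : ℤ) * Ring.choose ((2 * k : ℤ) - 2 * n) (k - i) *
        ((n : ℤ) - i) ^ (2 * r + 1)

open Polynomial in
lemma descEval (a : ℤ) (j : ℕ) :
    (descPochhammer ℤ j).eval a = (j.factorial : ℤ) * Ring.choose a j := by
  rw [eval_eq_smeval, Ring.descPochhammer_eq_factorial_smul_choose, nsmul_eq_mul]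

open Polynomial in
lemma descEval_succ_left (a : ℤ) (j : ℕ) :
    (descPochhammer ℤ (j + 1)).eval a = a * (descPochhammer ℤ j).eval (a - 1) := by
  rw [descPochhammer_succ_left]
  simp [eval_comp]

/-- absorption: `(j+1) * C(a, j+1) = a * C(a-1, j)` -/
lemma ringChoose_absorb (a : ℤ) (j : ℕ) :
    ((j : ℤ) + 1) * Ring.choose a (j + 1) = a * Ring.choose (a - 1) j := by
  have hfac : (j.factorial : ℤ) ≠ 0 := Int.natCast_ne_zero.mpr j.factorial_ne_zero
  apply mul_left_cancel₀ hfac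
  have h1 := descEval a (j + 1)
  have h2 := descEval (a - 1) j
  have h3 := descEval_succ_left a j
  have hf : ((j + 1).factorial : ℤ) = ((j : ℤ) + 1) * (j.factorial : ℤ) := by
    rw [Nat.factorial_succ]; push_cast; ring
  rw [hf] at h1
  linear_combination -h1 + a * h2 + h3

open Polynomial in
/-- `(a - s) * C(a, s) = a * C(a-1, s)` -/
lemma ringChoose_shift (a : ℤ) (s : ℕ) :
    (a - s) * Ring.choose a s = a * Ring.choose (a - 1) s := by
  have hfac : (s.factorial : ℤ) ≠ 0 := Int.natCast_ne_zero.mpr s.factorial_ne_zero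
  apply mul_left_cancel₀ hfac
  have h1 := descEval a s
  have h2 := descEval (a - 1) s
  have h3 := descEval_succ_left a s
  have h4 : (descPochhammer ℤ (s + 1)).eval a = (descPochhammer ℤ s).eval a * (a - s) := by
    rw [descPochhammer_succ_right]; simp
  linear_combination -(a - s) * h1 + a * h2 + h3 - h4

/-- the key termwise identity behind the recurrence -/
lemma key_identity (m j : ℕ) :
    ((j : ℤ) + 1) * (2 * m + j + 1) * Ring.choose (-(2 * m) : ℤ) (j + 1) =
      -(2 * m) * (2 * m + 1) * Ring.choose (-(2 * m) - 2 : ℤ) j := by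
  have h1 := ringChoose_absorb (-(2 * m) : ℤ) j
  have h2 := ringChoose_shift (-(2 * m) - 1 : ℤ) j
  have e : (-(2 * m) - 1 - 1 : ℤ) = -(2 * m) - 2 := by ring
  rw [e] at h2
  linear_combination (2 * (m : ℤ) + j + 1) * h1 + 2 * (m : ℤ) * h2

/-- Vandermonde with one generalized argument. -/
lemma ringChoose_vandermonde (a : ℤ) :
    ∀ (N k : ℕ), ∑ i ∈ range (k + 1), ((N.choose i : ℤ)) * Ring.choose a (k - i)
      = Ring.choose (a + N) k := by
  intro N
  induction N with
  | zero =>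
    intro k
    rw [Finset.sum_eq_single_of_mem 0 (Finset.mem_range.mpr (Nat.succ_pos k))]
    · simp
    · intro i _ hi
      rcases Nat.exists_eq_succ_of_ne_zero hi with ⟨i', rfl⟩
      simp
  | succ N ih =>
    intro k
    cases k with
    | zero => simp [Ring.choose_zero_right]
    | succ K =>
      rw [Finset.sum_range_succ']
      have step : ∀ i ∈ range (K + 1),
          (((N + 1).choose (i + 1) : ℤ)) * Ring.choose a (K + 1 - (i + 1))
            = ((N.choose i : ℤ)) * Ring.choose a (K - i)
              + ((N.choose (i + 1) : ℤ)) * Ring.choose a (K - i) := by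
        intro i _
        have e : K + 1 - (i + 1) = K - i := by omega
        rw [e, Nat.choose_succ_succ]
        push_cast; ring
      rw [Finset.sum_congr rfl step, Finset.sum_add_distrib]
      have h1 : ∑ i ∈ range (K + 1), ((N.choose i : ℤ)) * Ring.choose a (K - i)
          = Ring.choose (a + N) K := ih K
      have h2 : (∑ i ∈ range (K + 1), ((N.choose (i + 1) : ℤ)) * Ring.choose a (K - i))
            + ((N + 1).choose 0 : ℤ) * Ring.choose a (K + 1 - 0)
          = Ring.choose (a + N) (K + 1) := by
        have t := ih (K + 1)
        rw [Finset.sum_range_succ'] at t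
        have e : ∀ i ∈ range (K + 1),
            ((N.choose (i + 1) : ℤ)) * Ring.choose a (K + 1 - (i + 1))
              = ((N.choose (i + 1) : ℤ)) * Ring.choose a (K - i) := by
          intro i _
          have e' : K + 1 - (i + 1) = K - i := by omega
          rw [e']
        rw [Finset.sum_congr rfl e] at t
        simpa using t
      rw [h1, add_assoc, h2]
      have e2 : a + ((N + 1 : ℕ) : ℤ) = a + (N : ℤ) + 1 := by push_cast; ring
      rw [e2, Ring.choose_succ_succ]

lemma central_nat (K : ℕ) : (2 * K + 2).choose (K + 1) = 2 * (2 * K + 1).choose K := by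
  have p : (2 * K + 2).choose (K + 1) = (2 * K + 1).choose K + (2 * K + 1).choose (K + 1) := by
    rw [show 2 * K + 2 = (2 * K + 1) + 1 by omega]
    exact Nat.choose_succ_succ _ _
  have h2 := Nat.choose_symm (show K + 1 ≤ 2 * K + 1 by omega)
  rw [show 2 * K + 1 - (K + 1) = K by omega] at h2
  omega

/-- `f(n,0,r) = n^(2r+1) * C(2n,n)` -/
lemma fCoeff_zero (n r : ℕ) :
    fCoeff n 0 r = ((n : ℤ)) ^ (2 * r + 1) * ((2 * n).choose n : ℤ) := by
  simp [fCoeff, Ring.choose_zero_right]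
  ring

/-- `f(n,k,0) = 0` for `1 ≤ k ≤ n` -/
lemma fCoeff_r_zero (K m : ℕ) : fCoeff (K + 1 + m) (K + 1) 0 = 0 := by
  set n := K + 1 + m with hn
  set k := K + 1 with hk
  have ha : ((2 * (k : ℤ)) - 2 * (n : ℤ)) = -(2 * (m : ℤ)) := by omega
  have hsum : ∑ i ∈ range (k + 1),
      ((2 * n).choose i : ℤ) * Ring.choose ((2 * k : ℤ) - 2 * n) (k - i) *
        ((n : ℤ) - i) ^ (2 * 0 + 1) = 0 := by
    have split : ∀ i ∈ range (k + 1),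
        ((2 * n).choose i : ℤ) * Ring.choose ((2 * k : ℤ) - 2 * n) (k - i) *
          ((n : ℤ) - i) ^ (2 * 0 + 1)
        = ((2 * n).choose i : ℤ) * (((k - i : ℕ) : ℤ) * Ring.choose (-(2 * (m : ℤ))) (k - i))
          + (m : ℤ) * (((2 * n).choose i : ℤ) * Ring.choose (-(2 * (m : ℤ))) (k - i)) := by
      intro i hi
      rw [Finset.mem_range] at hi
      have hik : i ≤ k := by omega
      have hx : ((n : ℤ) - i) = ((k - i : ℕ) : ℤ) + m := by omega
      rw [ha, hx]
      ring
    rw [Finset.sum_congr rfl split, Finset.sum_add_distrib, ← Finset.mul_sum]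
    have hV2 : ∑ i ∈ range (k + 1),
        ((2 * n).choose i : ℤ) * Ring.choose (-(2 * (m : ℤ))) (k - i)
        = ((2 * k).choose k : ℤ) := by
      rw [ringChoose_vandermonde (-(2 * (m : ℤ))) (2 * n) k]
      have e : (-(2 * (m : ℤ))) + ((2 * n : ℕ) : ℤ) = ((2 * k : ℕ) : ℤ) := by omega
      rw [e, Ring.choose_natCast]
    have hV1 : ∑ i ∈ range (k + 1),
        ((2 * n).choose i : ℤ) * (((k - i : ℕ) : ℤ) * Ring.choose (-(2 * (m : ℤ))) (k - i))
        = -(2 * m) * ((2 * K + 1).choose K : ℤ) := by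
      rw [Finset.sum_range_succ]
      simp only [Nat.sub_self, Nat.cast_zero, zero_mul, mul_zero, add_zero]
      have step : ∀ i ∈ range k,
          ((2 * n).choose i : ℤ) * (((k - i : ℕ) : ℤ) * Ring.choose (-(2 * (m : ℤ))) (k - i))
          = -(2 * (m : ℤ)) *
              (((2 * n).choose i : ℤ) * Ring.choose (-(2 * (m : ℤ)) - 1) (K - i)) := by
        intro i hi
        rw [Finset.mem_range] at hi
        have e1 : k - i = (K - i) + 1 := by omega
        have e2 : (((K - i) + 1 : ℕ) : ℤ) = ((K - i : ℕ) : ℤ) + 1 := by push_cast; ring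
        rw [e1, e2]
        linear_combination ((2 * n).choose i : ℤ) * ringChoose_absorb (-(2 * (m : ℤ))) (K - i)
      rw [Finset.sum_congr rfl step, ← Finset.mul_sum]
      congr 1
      have hV := ringChoose_vandermonde (-(2 * (m : ℤ)) - 1) (2 * n) K
      rw [show range k = range (K + 1) from by rw [hk]]
      rw [hV]
      have e : (-(2 * (m : ℤ)) - 1) + ((2 * n : ℕ) : ℤ) = ((2 * K + 1 : ℕ) : ℤ) := by omega
      rw [e, Ring.choose_natCast]
    rw [hV1, hV2]
    have hc : ((2 * k).choose k : ℤ) = 2 * ((2 * K + 1).choose K : ℤ) := by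
      rw [hk, show 2 * (K + 1) = 2 * K + 2 from by ring, central_nat]
      push_cast; ring
    rw [hc]
    ring
  unfold fCoeff
  rw [hsum, mul_zero]

/-- prefactor identity -/
lemma prefactor (m : ℕ) :
    (m : ℤ) * ((m : ℤ) + 1) * ((2 * m + 2).choose (m + 1) : ℤ)
      = 2 * m * (2 * m + 1) * ((2 * m).choose m : ℤ) := by
  have c1 := central_nat m
  have c2n := Nat.add_one_mul_choose_eq (2 * m) m
  have c2 : (2 * (m : ℤ) + 1) * ((2 * m).choose m : ℤ)
      = ((2 * m + 1).choose (m + 1) : ℤ) * ((m : ℤ) + 1) := by exact_mod_cast c2n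
  have c3 : ((2 * m + 1).choose (m + 1) : ℤ) = ((2 * m + 1).choose m : ℤ) := by
    have h := Nat.choose_symm (show m + 1 ≤ 2 * m + 1 by omega)
    rw [show 2 * m + 1 - (m + 1) = m by omega] at h
    exact_mod_cast h.symm
  rw [c1]
  push_cast
  linear_combination (-(2 * (m : ℤ)) * ((m : ℤ) + 1)) * c3 - 2 * (m : ℤ) * c2

/-- the recurrence -/
lemma fCoeff_rec (K m r : ℕ) :
    fCoeff (K + 1 + m) (K + 1) (r + 1)
      = (m : ℤ) ^ 2 * fCoeff (K + 1 + m) (K + 1) r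
        - (m : ℤ) * ((m : ℤ) + 1) * fCoeff (K + 1 + m) K r := by
  set n := K + 1 + m with hn
  have ha : (2 * ((K + 1 : ℕ) : ℤ) - 2 * (n : ℤ)) = -(2 * (m : ℤ)) := by omega
  have ha' : (2 * ((K : ℕ) : ℤ) - 2 * (n : ℤ)) = -(2 * (m : ℤ)) - 2 := by omega
  have hpre1 : (2 * n - 2 * (K + 1)) = 2 * m := by omega
  have hpre1' : (n - (K + 1)) = m := by omega
  have hpre2 : (2 * n - 2 * K) = 2 * m + 2 := by omega
  have hpre2' : (n - K) = m + 1 := by omega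
  have claim : ∑ i ∈ range (K + 1 + 1),
        (((2 * n).choose i : ℤ) * Ring.choose (-(2 * (m : ℤ))) ((K + 1) - i) *
            ((n : ℤ) - i) ^ (2 * (r + 1) + 1)
          - (m : ℤ) ^ 2 * (((2 * n).choose i : ℤ) *
              Ring.choose (-(2 * (m : ℤ))) ((K + 1) - i) * ((n : ℤ) - i) ^ (2 * r + 1)))
      = ∑ i ∈ range (K + 1),
          (-(2 * (m : ℤ)) * (2 * (m : ℤ) + 1)) *
            (((2 * n).choose i : ℤ) * Ring.choose (-(2 * (m : ℤ)) - 2) (K - i) *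
              ((n : ℤ) - i) ^ (2 * r + 1)) := by
    rw [Finset.sum_range_succ]
    have hterm : ∀ i ∈ range (K + 1),
        (((2 * n).choose i : ℤ) * Ring.choose (-(2 * (m : ℤ))) ((K + 1) - i) *
            ((n : ℤ) - i) ^ (2 * (r + 1) + 1)
          - (m : ℤ) ^ 2 * (((2 * n).choose i : ℤ) *
              Ring.choose (-(2 * (m : ℤ))) ((K + 1) - i) * ((n : ℤ) - i) ^ (2 * r + 1)))
        = (-(2 * (m : ℤ)) * (2 * (m : ℤ) + 1)) *
            (((2 * n).choose i : ℤ) * Ring.choose (-(2 * (m : ℤ)) - 2) (K - i) *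
              ((n : ℤ) - i) ^ (2 * r + 1)) := by
      intro i hi
      rw [Finset.mem_range] at hi
      have e1 : (K + 1) - i = (K - i) + 1 := by omega
      have hx : ((n : ℤ) - i) = ((K - i : ℕ) : ℤ) + 1 + m := by omega
      rw [e1, hx]
      linear_combination (((2 * n).choose i : ℤ) * (((K - i : ℕ) : ℤ) + 1 + m) ^ (2 * r + 1)) *
        key_identity m (K - i)
    rw [Finset.sum_congr rfl hterm, add_eq_left, Nat.sub_self, Ring.choose_zero_right]
    have e : (n : ℤ) - ((K + 1 : ℕ) : ℤ) = (m : ℤ) := by omega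
    rw [e]
    ring
  have hsum : (∑ i ∈ range (K + 1 + 1),
        ((2 * n).choose i : ℤ) * Ring.choose (-(2 * (m : ℤ))) ((K + 1) - i) *
          ((n : ℤ) - i) ^ (2 * (r + 1) + 1))
      = (m : ℤ) ^ 2 * (∑ i ∈ range (K + 1 + 1),
          ((2 * n).choose i : ℤ) * Ring.choose (-(2 * (m : ℤ))) ((K + 1) - i) *
            ((n : ℤ) - i) ^ (2 * r + 1))
        - 2 * (m : ℤ) * (2 * (m : ℤ) + 1) * (∑ i ∈ range (K + 1),
            ((2 * n).choose i : ℤ) * Ring.choose (-(2 * (m : ℤ)) - 2) (K - i) *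
              ((n : ℤ) - i) ^ (2 * r + 1)) := by
    rw [Finset.sum_sub_distrib, ← Finset.mul_sum] at claim
    rw [← Finset.mul_sum] at claim
    linarith [claim]
  unfold fCoeff
  rw [hpre1, hpre1', hpre2, hpre2', ha, ha']
  linear_combination ((2 * m).choose m : ℤ) * hsum
    + (∑ i ∈ range (K + 1),
        ((2 * n).choose i : ℤ) * Ring.choose (-(2 * (m : ℤ)) - 2) (K - i) *
          ((n : ℤ) - i) ^ (2 * r + 1)) * prefactor m

theorem f_divisibility (n k r : ℕ) (hn : 1 ≤ n) (hk : k ≤ n) :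
    ((n : ℤ) ^ (min 2 (r + 1)) * ((2 * n).choose n : ℤ)) ∣ fCoeff n k r := by
  induction r generalizing k with
  | zero =>
    have hmin : min 2 (0 + 1) = 1 := by norm_num
    rw [hmin]
    cases k with
    | zero =>
      rw [fCoeff_zero]
    | succ K =>
      obtain ⟨m, rfl⟩ : ∃ m, n = K + 1 + m := ⟨n - (K + 1), by omega⟩
      rw [fCoeff_r_zero]
      exact dvd_zero _
  | succ r ih =>
    have hmin : min 2 (r + 1 + 1) = 2 := by omega
    rw [hmin]
    cases k with
    | zero =>
      rw [fCoeff_zero]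
      exact ⟨(n : ℤ) ^ (2 * r + 1), by ring⟩
    | succ K =>
      obtain ⟨m, rfl⟩ : ∃ m, n = K + 1 + m := ⟨n - (K + 1), by omega⟩
      rw [fCoeff_rec]
      cases r with
      | zero =>
        rw [fCoeff_r_zero K m]
        cases K with
        | zero =>
          rw [fCoeff_zero]
          exact ⟨-(m : ℤ), by push_cast; ring⟩
        | succ K' =>
          have h0 : fCoeff (K' + 1 + 1 + m) (K' + 1) 0 = 0 := by
            have t := fCoeff_r_zero K' (m + 1)
            have e : K' + 1 + (m + 1) = K' + 1 + 1 + m := by omega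
            rwa [e] at t
          rw [h0]
          simp
      | succ r' =>
        have h1 := ih (K + 1) hk
        have h2 := ih K (by omega)
        rw [show min 2 (r' + 1 + 1) = 2 from by omega] at h1 h2
        exact dvd_sub (h1.mul_left _) (h2.mul_left _)
end

section
/- Let m ≥ 3, let n_1, …, n_m be positive integers, and let r ≥ 0 be an integer. Then S_{2r+1}(n_1, …, n_m) = Σ_{l=1}^{n_1} C(n_1 - 1, l - 1) · C(n_2 + n_3, n_2 - l) · S_{2r+1}(l, n_3, n_4, …, n_m), where C(n_2+n_3, n_2-l) is interpreted as 0 when l > n_2, and the right-hand S is taken on the (m-1)-tuple (l, n_3, …, n_m). -/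
open Finset

/-- `S_{2r+1}(a_1,…,a_j) = a_1⁻¹ C(a_1+a_j, a_1)⁻¹ Σ_{k=1}^{a_1} k^{2r+1} Π_{i=1}^{j} C(a_i+a_{i+1}, a_i+k)`,
with the convention `a_{j+1} = a_1`.  The tuple `(a_1, …, a_j)` is encoded by the values of
`a : ℕ → ℕ` on `{1, …, j}`. -/
def S (j : ℕ) (a : ℕ → ℕ) (r : ℕ) : ℚ :=
  (∑ k ∈ Finset.Icc 1 (a 1), (k : ℚ) ^ (2 * r + 1) *
      ∏ i ∈ Finset.Icc 1 j, ((a i + a (if i = j then 1 else i + 1)).choose (a i + k) : ℚ))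
    / ((a 1 : ℚ) * ((a 1 + a j).choose (a 1) : ℚ))

-- Vandermonde-style step
lemma vander (a b k : ℕ) (hka : k ≤ a) (hkb : k ≤ b) :
    ∑ l ∈ Icc k a, (a - k).choose (l - k) * (b + k).choose (l + k)
      = (a + b).choose (a + k) := by
  have h1 : (a + b).choose (a + k) = (a + b).choose (b - k) := by
    apply Nat.choose_symm_of_eq_add; omega
  rw [h1, show a + b = (a - k) + (b + k) by omega, Nat.add_choose_eq,
    Finset.Nat.sum_antidiagonal_eq_sum_range_succ
      (fun i j => (a-k).choose i * (b+k).choose j)]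
  have hL : ∑ l ∈ Icc k a, (a - k).choose (l - k) * (b + k).choose (l + k)
      = ∑ i ∈ range (a - k + 1), (a-k).choose i * (b+k).choose (i + 2*k) := by
    apply Finset.sum_nbij' (fun l => l - k) (fun i => i + k)
    · intro l hl; simp only [mem_Icc] at hl; simp; omega
    · intro i hi; simp only [mem_range] at hi; simp only [mem_Icc]; omega
    · intro l hl; simp only [mem_Icc] at hl; omega
    · intro i hi; simp
    · intro l hl; simp only [mem_Icc] at hl
      congr 2
      omega
  rw [hL]
  have hR : ∀ i ∈ range (b - k + 1),
      (a-k).choose i * (b+k).choose (b - k - i)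
        = (a-k).choose i * (b+k).choose (i + 2*k) := by
    intro i hi; simp only [mem_range] at hi
    congr 1
    rw [show b - k - i = (b + k) - (i + 2*k) by omega]
    exact Nat.choose_symm (by omega)
  rw [Finset.sum_congr rfl hR]
  -- extend both ranges
  rw [Finset.sum_subset (Finset.range_subset_range.2 (show a - k + 1 ≤ a + b + 1 by omega)),
    Finset.sum_subset (Finset.range_subset_range.2 (show b - k + 1 ≤ a + b + 1 by omega))]
  · intro i hi hni; simp only [mem_range] at hi hni
    rw [Nat.choose_eq_zero_of_lt (show b + k < i + 2*k by omega), Nat.mul_zero]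
  · intro i hi hni; simp only [mem_range] at hi hni
    rw [Nat.choose_eq_zero_of_lt (show a - k < i by omega), Nat.zero_mul]

lemma natCore (n1 n2 n3 k : ℕ) (hk : 1 ≤ k) (hn1 : 1 ≤ n1) :
    ∑ l ∈ Icc 1 n1, (n1-1).choose (l-1) * ((l-1).choose (k-1) *
      ((if l ≤ n2 then (n2+n3).choose (n2-l) else 0) * (l+n3).choose (l+k)))
    = (n1-1).choose (k-1) * ((n1+n2).choose (n1+k) * (n2+n3).choose (n2+k)) := by
  -- trivial cases first
  by_cases hk3 : k ≤ n3
  swap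
  · rw [Nat.choose_eq_zero_of_lt (show n2 + n3 < n2 + k by omega)]
    rw [Finset.sum_eq_zero]; · ring
    intro l hl
    rw [Nat.choose_eq_zero_of_lt (show l + n3 < l + k by omega)]; ring
  by_cases hk1 : k ≤ n1
  swap
  · rw [Nat.choose_eq_zero_of_lt (show n1 - 1 < k - 1 by omega)]
    rw [Finset.sum_eq_zero]; · ring
    intro l hl; simp only [mem_Icc] at hl
    rw [Nat.choose_eq_zero_of_lt (show l - 1 < k - 1 by omega)]; ring
  by_cases hk2 : k ≤ n2
  swap
  · rw [Nat.choose_eq_zero_of_lt (show n1 + n2 < n1 + k by omega)]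
    rw [Finset.sum_eq_zero]; · ring
    intro l hl; simp only [mem_Icc] at hl
    rcases le_or_gt k l with h | h
    · rw [if_neg (by omega)]; ring
    · rw [Nat.choose_eq_zero_of_lt (show l - 1 < k - 1 by omega)]; ring
  -- main case
  -- restrict sum to Icc k n1
  rw [← Finset.sum_subset (show Icc k n1 ⊆ Icc 1 n1 by
        apply Finset.Icc_subset_Icc_left; omega)]
  swap
  · intro l hl hnl; simp only [mem_Icc] at hl hnl
    rw [Nat.choose_eq_zero_of_lt (show l - 1 < k - 1 by omega)]; ring
  -- termwise rewrite
  have key : ∀ l ∈ Icc k n1,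
      (n1-1).choose (l-1) * ((l-1).choose (k-1) *
        ((if l ≤ n2 then (n2+n3).choose (n2-l) else 0) * (l+n3).choose (l+k)))
      = (n1-1).choose (k-1) * ((n2+n3).choose (n2+k) *
          ((n1-k).choose (l-k) * (n2+k).choose (l+k))) := by
    intro l hl; simp only [mem_Icc] at hl
    have h1 : (n1-1).choose (l-1) * (l-1).choose (k-1)
        = (n1-1).choose (k-1) * (n1-k).choose (l-k) := by
      rw [Nat.choose_mul (by omega)]
      congr 2 <;> omega
    by_cases hln2 : l ≤ n2
    · rw [if_pos hln2]
      have h2 : (n2+n3).choose (n2-l) * (l+n3).choose (l+k)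
          = (n2+n3).choose (n2+k) * (n2+k).choose (l+k) := by
        have e1 : (n2+n3).choose (n2-l) = (n2+n3).choose (n3+l) := by
          apply Nat.choose_symm_of_eq_add; omega
        have e2 : (l+n3).choose (l+k) = (n3+l).choose (n3-k) := by
          rw [show l + n3 = n3 + l by omega]
          exact (Nat.choose_symm_of_eq_add (by omega)).symm
        have e3 : (n2+n3).choose (n2+k) = (n2+n3).choose (n3-k) := by
          apply Nat.choose_symm_of_eq_add; omega
        rw [e1, e2, e3, Nat.choose_mul (by omega)]
        congr 2 <;> omega
      calc (n1-1).choose (l-1) * ((l-1).choose (k-1) *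
              ((n2+n3).choose (n2-l) * (l+n3).choose (l+k)))
          = ((n1-1).choose (l-1) * (l-1).choose (k-1)) *
              ((n2+n3).choose (n2-l) * (l+n3).choose (l+k)) := by ring
        _ = _ := by rw [h1, h2]; ring
    · rw [if_neg hln2]
      rw [Nat.choose_eq_zero_of_lt (show n2 + k < l + k by omega)]
      ring
  rw [Finset.sum_congr rfl key, ← Finset.mul_sum, ← Finset.mul_sum,
    vander n1 n2 k hk1 hk2]
  ring

lemma ratioNat (N l k : ℕ) (hl : 1 ≤ l) (hk : 1 ≤ k) :
    (N+l).choose (N+k) * (k * (N+k).choose k)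
      = (l-1).choose (k-1) * (l * ((l+N).choose l)) := by
  rcases le_or_gt k l with h | h
  · have h1 : (N+l).choose (N+k) * (N+k).choose N
        = (N+l).choose N * ((N+l)-N).choose ((N+k)-N) :=
      Nat.choose_mul (by omega)
    have h1' : (N+l).choose (N+k) * (N+k).choose k = (N+l).choose N * l.choose k := by
      rw [← Nat.choose_symm_add (a := N) (b := k), h1,
        Nat.add_sub_cancel_left, Nat.add_sub_cancel_left]
    have h2 : l * (l-1).choose (k-1) = l.choose k * k := by
      have := Nat.add_one_mul_choose_eq (l-1) (k-1)
      rwa [show l-1+1 = l by omega, show k-1+1 = k by omega] at this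
    have h3 : (l+N).choose l = (N+l).choose N := by
      rw [show l + N = N + l by omega]; exact Nat.choose_symm_add.symm
    calc (N+l).choose (N+k) * (k * (N+k).choose k)
        = ((N+l).choose (N+k) * (N+k).choose k) * k := by ring
      _ = (N+l).choose N * (l.choose k * k) := by rw [h1']; ring
      _ = (N+l).choose N * (l * (l-1).choose (k-1)) := by rw [h2]
      _ = _ := by rw [h3]; ring
  · rw [Nat.choose_eq_zero_of_lt (show N + l < N + k by omega),
      Nat.choose_eq_zero_of_lt (show l - 1 < k - 1 by omega)]
    ring

lemma ratioQ (N l k : ℕ) (hl : 1 ≤ l) (hk : 1 ≤ k) :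
    (((N+l).choose (N+k) : ℚ)) / ((l : ℚ) * ((l+N).choose l : ℚ))
      = ((l-1).choose (k-1) : ℚ) / ((k:ℚ) * ((N+k).choose k : ℚ)) := by
  rw [div_eq_div_iff]
  · exact_mod_cast ratioNat N l k hl hk
  · have : 0 < (l+N).choose l := Nat.choose_pos (by omega)
    positivity
  · have : 0 < (N+k).choose k := Nat.choose_pos (by omega)
    positivity

lemma coreQ (n1 n2 n3 N k : ℕ) (hk : 1 ≤ k) (hn1 : 1 ≤ n1) :
    ((n1+n2).choose (n1+k) : ℚ) * ((n2+n3).choose (n2+k) : ℚ) *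
        ((N+n1).choose (N+k) : ℚ) / ((n1 : ℚ) * ((n1+N).choose n1 : ℚ))
      = ∑ l ∈ Icc 1 n1, ((n1-1).choose (l-1) : ℚ) *
          (if l ≤ n2 then ((n2+n3).choose (n2-l) : ℚ) else 0) *
          (((l+n3).choose (l+k) : ℚ) * ((N+l).choose (N+k) : ℚ)) /
          ((l : ℚ) * ((l+N).choose l : ℚ)) := by
  have hterm : ∀ l ∈ Icc 1 n1,
      ((n1-1).choose (l-1) : ℚ) *
          (if l ≤ n2 then ((n2+n3).choose (n2-l) : ℚ) else 0) *
          (((l+n3).choose (l+k) : ℚ) * ((N+l).choose (N+k) : ℚ)) /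
          ((l : ℚ) * ((l+N).choose l : ℚ))
        = (((n1-1).choose (l-1) * ((l-1).choose (k-1) *
            ((if l ≤ n2 then (n2+n3).choose (n2-l) else 0) * (l+n3).choose (l+k))) : ℕ) : ℚ)
          / ((k:ℚ) * ((N+k).choose k : ℚ)) := by
    intro l hl
    simp only [mem_Icc] at hl
    have e : ((n1-1).choose (l-1) : ℚ) *
          (if l ≤ n2 then ((n2+n3).choose (n2-l) : ℚ) else 0) *
          (((l+n3).choose (l+k) : ℚ) * ((N+l).choose (N+k) : ℚ)) /
          ((l : ℚ) * ((l+N).choose l : ℚ))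
        = (((n1-1).choose (l-1) : ℚ) *
            (if l ≤ n2 then ((n2+n3).choose (n2-l) : ℚ) else 0) *
            ((l+n3).choose (l+k) : ℚ)) *
          (((N+l).choose (N+k) : ℚ) / ((l : ℚ) * ((l+N).choose l : ℚ))) := by
      ring
    rw [e, ratioQ N l k hl.1 hk]
    push_cast
    ring
  rw [Finset.sum_congr rfl hterm, ← Finset.sum_div, ← Nat.cast_sum,
    natCore n1 n2 n3 k hk hn1]
  have e2 : ((n1+n2).choose (n1+k) : ℚ) * ((n2+n3).choose (n2+k) : ℚ) *
        ((N+n1).choose (N+k) : ℚ) / ((n1 : ℚ) * ((n1+N).choose n1 : ℚ))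
      = (((n1+n2).choose (n1+k) : ℚ) * ((n2+n3).choose (n2+k) : ℚ)) *
        (((N+n1).choose (N+k) : ℚ) / ((n1 : ℚ) * ((n1+N).choose n1 : ℚ))) := by ring
  rw [e2, ratioQ N n1 k hn1 hk]
  push_cast
  ring

lemma prodShift (g : ℕ → ℚ) (a b : ℕ) :
    ∏ i ∈ Icc a b, g (i+1) = ∏ i ∈ Icc (a+1) (b+1), g i := by
  rw [← Finset.map_add_right_Icc a b 1, Finset.prod_map]
  rfl

theorem S_recurrence (m : ℕ) (hm : 3 ≤ m) (n : ℕ → ℕ)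
    (hpos : ∀ i ∈ Finset.Icc 1 m, 0 < n i) (r : ℕ) :
    S m n r
      = ∑ l ∈ Finset.Icc 1 (n 1),
          ((n 1 - 1).choose (l - 1) : ℚ) *
            (if l ≤ n 2 then ((n 2 + n 3).choose (n 2 - l) : ℚ) else 0) *
            S (m - 1) (fun i => if i = 1 then l else n (i + 1)) r := by
  have hn1 : 0 < n 1 := hpos 1 (by simp only [mem_Icc]; omega)
  -- Step 1: rewrite the inner S
  have hSr : ∀ l ∈ Icc 1 (n 1),
      S (m-1) (fun i => if i = 1 then l else n (i + 1)) r
        = ∑ k ∈ Icc 1 (n 1), ((k:ℚ)^(2*r+1) *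
            ((((l + n 3).choose (l+k) : ℚ) *
             ∏ i ∈ Icc 3 (m-1), ((n i + n (i+1)).choose (n i + k) : ℚ)) *
             ((n m + l).choose (n m + k) : ℚ)))
           / ((l:ℚ) * ((l + n m).choose l : ℚ)) := by
    intro l hl
    simp only [mem_Icc] at hl
    rw [S]
    simp only [reduceIte, if_neg (show m - 1 ≠ 1 by omega)]
    rw [show m - 1 + 1 = m by omega]
    have hprod : ∀ k : ℕ,
        (∏ i ∈ Icc 1 (m-1),
          (((if i = 1 then l else n (i+1)) +
            (if (if i = m-1 then 1 else i+1) = 1 then l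
              else n ((if i = m-1 then 1 else i+1)+1))).choose
            ((if i = 1 then l else n (i+1)) + k) : ℚ))
        = (((l + n 3).choose (l+k) : ℚ) *
            ∏ i ∈ Icc 3 (m-1), ((n i + n (i+1)).choose (n i + k) : ℚ)) *
            ((n m + l).choose (n m + k) : ℚ) := by
      intro k
      have hstep : ∀ i ∈ Icc 1 (m-1),
          (((if i = 1 then l else n (i+1)) +
            (if (if i = m-1 then 1 else i+1) = 1 then l
              else n ((if i = m-1 then 1 else i+1)+1))).choose
            ((if i = 1 then l else n (i+1)) + k) : ℚ)
          = (if i = 1 then ((l + n 3).choose (l+k) : ℚ)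
             else if i = m-1 then ((n m + l).choose (n m + k) : ℚ)
             else ((n (i+1) + n (i+1+1)).choose (n (i+1) + k) : ℚ)) := by
        intro i hi
        simp only [mem_Icc] at hi
        by_cases h1 : i = 1
        · subst h1
          simp only [if_pos rfl, ite_true, if_neg (show (1:ℕ) ≠ m - 1 by omega),
            if_neg (show (1:ℕ)+1 ≠ 1 by omega)]
        by_cases h2 : i = m-1
        · subst h2
          simp only [if_pos rfl, ite_true, if_neg (show m - 1 ≠ 1 by omega)]
          rw [show m - 1 + 1 = m by omega]
        · simp only [if_neg h1, if_neg h2, if_neg (show i+1 ≠ 1 by omega)]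
      rw [Finset.prod_congr rfl hstep]
      have hdec : Icc 1 (m-1) = insert 1 (insert (m-1) (Icc 2 (m-2))) := by
        ext x; simp only [mem_Icc, mem_insert]; omega
      rw [hdec, Finset.prod_insert (by simp only [mem_insert, mem_Icc]; omega),
        Finset.prod_insert (by simp only [mem_Icc]; omega)]
      rw [if_pos rfl, if_neg (show m - 1 ≠ 1 by omega), if_pos rfl]
      have hmid : ∏ i ∈ Icc 2 (m-2),
          (if i = 1 then ((l + n 3).choose (l+k) : ℚ)
             else if i = m-1 then ((n m + l).choose (n m + k) : ℚ)
             else ((n (i+1) + n (i+1+1)).choose (n (i+1) + k) : ℚ))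
          = ∏ i ∈ Icc 3 (m-1), ((n i + n (i+1)).choose (n i + k) : ℚ) := by
        have hps := prodShift (fun j => ((n j + n (j+1)).choose (n j + k) : ℚ)) 2 (m-2)
        rw [show (2:ℕ)+1 = 3 from rfl, show m-2+1 = m-1 by omega] at hps
        rw [← hps]
        apply Finset.prod_congr rfl
        intro i hi
        simp only [mem_Icc] at hi
        rw [if_neg (show i ≠ 1 by omega), if_neg (show i ≠ m-1 by omega)]
      rw [hmid]
      ring
    rw [Finset.sum_congr rfl (fun k _ => by rw [hprod k])]
    -- extend sum from Icc 1 l to Icc 1 (n 1)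
    rw [Finset.sum_subset (Finset.Icc_subset_Icc_right hl.2)]
    · rw [Finset.sum_div]
    · intro k hk hkn
      simp only [mem_Icc] at hk hkn
      rw [Nat.choose_eq_zero_of_lt (show n m + l < n m + k by omega)]
      push_cast
      ring
  rw [Finset.sum_congr rfl (fun l hl => by rw [hSr l hl])]
  -- Step 2: swap and match termwise
  rw [S]
  simp only [Finset.mul_sum]
  rw [Finset.sum_comm, Finset.sum_div]
  apply Finset.sum_congr rfl
  intro k hk
  simp only [mem_Icc] at hk
  -- decompose the big product
  have hstep : ∀ i ∈ Icc 1 m,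
      ((n i + n (if i = m then 1 else i + 1)).choose (n i + k) : ℚ)
      = (if i = m then ((n m + n 1).choose (n m + k) : ℚ)
         else ((n i + n (i+1)).choose (n i + k) : ℚ)) := by
    intro i hi
    by_cases h : i = m
    · subst h; rw [if_pos rfl, if_pos rfl]
    · rw [if_neg h, if_neg h]
  rw [Finset.prod_congr rfl hstep]
  have hdec : Icc 1 m = insert 1 (insert 2 (insert m (Icc 3 (m-1)))) := by
    ext x; simp only [mem_Icc, mem_insert]; omega
  rw [hdec, Finset.prod_insert (by simp only [mem_insert, mem_Icc]; omega),
    Finset.prod_insert (by simp only [mem_insert, mem_Icc]; omega),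
    Finset.prod_insert (by simp only [mem_Icc]; omega)]
  rw [if_neg (show (1:ℕ) ≠ m by omega), if_neg (show (2:ℕ) ≠ m by omega),
    if_pos rfl]
  have hmid : ∏ i ∈ Icc 3 (m-1),
      (if i = m then ((n m + n 1).choose (n m + k) : ℚ)
         else ((n i + n (i+1)).choose (n i + k) : ℚ))
      = ∏ i ∈ Icc 3 (m-1), ((n i + n (i+1)).choose (n i + k) : ℚ) := by
    apply Finset.prod_congr rfl
    intro i hi
    simp only [mem_Icc] at hi
    rw [if_neg (show i ≠ m by omega)]
  rw [hmid, show (1:ℕ)+1 = 2 from rfl, show (2:ℕ)+1 = 3 from rfl]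
  -- both sides share the factor A = k^(2r+1) * Pmid
  have hA : ∀ l ∈ Icc 1 (n 1),
      ((n 1 - 1).choose (l - 1) : ℚ) *
        (if l ≤ n 2 then ((n 2 + n 3).choose (n 2 - l) : ℚ) else 0) *
        ((k:ℚ)^(2*r+1) *
          ((((l + n 3).choose (l+k) : ℚ) *
           ∏ i ∈ Icc 3 (m-1), ((n i + n (i+1)).choose (n i + k) : ℚ)) *
           ((n m + l).choose (n m + k) : ℚ))
         / ((l:ℚ) * ((l + n m).choose l : ℚ)))
      = ((k:ℚ)^(2*r+1) *
          ∏ i ∈ Icc 3 (m-1), ((n i + n (i+1)).choose (n i + k) : ℚ)) *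
        (((n 1 - 1).choose (l - 1) : ℚ) *
          (if l ≤ n 2 then ((n 2 + n 3).choose (n 2 - l) : ℚ) else 0) *
          (((l + n 3).choose (l+k) : ℚ) * ((n m + l).choose (n m + k) : ℚ)) /
          ((l:ℚ) * ((l + n m).choose l : ℚ))) := by
    intro l _
    ring
  rw [Finset.sum_congr rfl hA, ← Finset.mul_sum,
    ← coreQ (n 1) (n 2) (n 3) (n m) k hk.1 hn1]
  ring
end

section
/- Let m ≥ 3 and let n_1, …, n_m be positive integers with the conventions n_{m+1} = n_1 and λ_0 = n_1. Then 2 · Σ_{k=1}^{n_1} k · Π_{i=1}^{m} C(n_i + n_{i+1}, n_i + k) = n_1 · C(n_1 + n_m, n_1) · Σ_{λ} C(λ_{m-2} + n_m - 1, λ_{m-2}) · Π_{i=1}^{m-2} C(λ_{i-1} - 1, λ_i - 1) · C(n_{i+1} + n_{i+2}, n_{i+1} - λ_i), where the outer sum on the right is over all sequences λ = (λ_1, …, λ_{m-2}) of positive integers with n_1 ≥ λ_1 ≥ λ_2 ≥ ⋯ ≥ λ_{m-2} ≥ 1, and C(a, b) is interpreted as 0 when b < 0. -/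
open Finset

/-- Extension of a tuple `(λ_1, …, λ_{m-2})` (encoded as `lam : Fin (m-2) → ℕ`) to a function
on `ℕ` with the convention `λ_0 = n_1`; `lamExt m n1 lam i` is `λ_i` for `0 ≤ i ≤ m-2`. -/
def lamExt (m n1 : ℕ) (lam : Fin (m - 2) → ℕ) : ℕ → ℕ :=
  fun i => if i = 0 then n1 else if h : i - 1 < m - 2 then lam ⟨i - 1, h⟩ else 0

namespace CTFM


lemma telescope (f g : ℕ → ℕ) : ∀ M : ℕ, (∀ k ∈ Icc 1 M, f k = f (k+1) + g k) →
    f 1 = f (M+1) + ∑ k ∈ Icc 1 M, g k := by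
  intro M
  induction M with
  | zero => simp
  | succ M ih =>
    intro h
    rw [Finset.sum_Icc_succ_top (by omega)]
    have h1 := ih (fun k hk => h k (by simp only [mem_Icc] at hk ⊢; omega))
    have h2 := h (M+1) (by simp)
    omega

lemma step_tel (a b k : ℕ) :
    (a+k)*(b+k)*((a+b).choose (a+k) * (a+b).choose (b+k))
      = (a+k+1)*(b+k+1)*((a+b).choose (a+k+1) * (a+b).choose (b+k+1))
        + 2*k*(a+b)*((a+b).choose (a+k) * (a+b).choose (b+k)) := by
  rcases le_or_gt k b with hb | hb
  · rcases le_or_gt k a with ha | ha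
    · have h1 : (a+b).choose (a+k+1) * (a+k+1) = (a+b).choose (a+k) * (b - k) := by
        have := Nat.choose_succ_right_eq (a+b) (a+k)
        rwa [show a+b-(a+k) = b-k by omega] at this
      have h2 : (a+b).choose (b+k+1) * (b+k+1) = (a+b).choose (b+k) * (a - k) := by
        have := Nat.choose_succ_right_eq (a+b) (b+k)
        rwa [show a+b-(b+k) = a-k by omega] at this
      have key : (a+k)*(b+k) = (b-k)*(a-k) + 2*k*(a+b) := by zify [ha, hb]; ring
      calc (a+k)*(b+k)*((a+b).choose (a+k) * (a+b).choose (b+k))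
          = ((b-k)*(a-k) + 2*k*(a+b)) * ((a+b).choose (a+k) * (a+b).choose (b+k)) := by rw [key]
        _ = ((a+b).choose (a+k) * (b-k)) * ((a+b).choose (b+k) * (a-k))
              + 2*k*(a+b)*((a+b).choose (a+k) * (a+b).choose (b+k)) := by ring
        _ = _ := by rw [← h1, ← h2]; ring
    · rw [Nat.choose_eq_zero_of_lt (show a+b < b+k by omega),
        Nat.choose_eq_zero_of_lt (show a+b < b+k+1 by omega)]
      ring
  · rw [Nat.choose_eq_zero_of_lt (show a+b < a+k by omega),
      Nat.choose_eq_zero_of_lt (show a+b < a+k+1 by omega)]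
    ring

lemma base (a b : ℕ) (ha : 0 < a) (hb : 0 < b) :
    2 * ∑ k ∈ Icc 1 a, k * ((a+b).choose (a+k) * (a+b).choose (b+k))
      = a * ((a+b).choose a * (a+b-1).choose a) := by
  set F : ℕ → ℕ := fun k => (a+k)*(b+k)*((a+b).choose (a+k) * (a+b).choose (b+k)) with hF
  set g : ℕ → ℕ := fun k => 2*k*(a+b)*((a+b).choose (a+k) * (a+b).choose (b+k)) with hg
  have htel : F 1 = F (a+1) + ∑ k ∈ Icc 1 a, g k :=
    telescope F g a (fun k _ => step_tel a b k)
  have hFa : F (a+1) = 0 := by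
    simp only [hF, Nat.choose_eq_zero_of_lt (show a+b < b+(a+1) by omega)]
    ring
  have hsum : ∑ k ∈ Icc 1 a, g k
      = (a+b) * (2 * ∑ k ∈ Icc 1 a, k * ((a+b).choose (a+k) * (a+b).choose (b+k))) := by
    rw [Finset.mul_sum, Finset.mul_sum]
    exact Finset.sum_congr rfl (fun k _ => by simp only [hg]; ring)
  have hF1 : F 1 = (a+b) * (a * ((a+b).choose a * (a+b-1).choose a)) := by
    have c1 : (a+b) * (a+b-1).choose a = (a+b).choose (a+1) * (a+1) := by
      have := Nat.add_one_mul_choose_eq (a+b-1) a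
      rwa [show a+b-1+1 = a+b by omega] at this
    have c2 : (a+b).choose (b+1) * (b+1) = (a+b).choose a * a := by
      have := Nat.choose_succ_right_eq (a+b) b
      rwa [show a+b-b = a by omega, ← Nat.choose_symm_add] at this
    have : F 1 = ((a+b).choose (a+1) * (a+1)) * ((a+b).choose (b+1) * (b+1)) := by
      simp only [hF]; ring
    rw [this, ← c1, c2]; ring
  have hXY : (a+b) * (2 * ∑ k ∈ Icc 1 a, k * ((a+b).choose (a+k) * (a+b).choose (b+k)))
      = (a+b) * (a * ((a+b).choose a * (a+b-1).choose a)) := by omega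
  exact Nat.eq_of_mul_eq_mul_left (by omega) hXY



lemma symm_choose {n k j : ℕ} (h : k ≤ n) (hj : k + j = n) : n.choose k = n.choose j := by
  rw [← Nat.choose_symm h, show n - k = j by omega]

lemma L7 (n1 c k l : ℕ) (hk : k ≤ l) (hl : l ≤ n1) :
    (n1+c).choose (n1-l) * (c+l).choose (c+k)
      = (c+n1).choose (c+k) * (n1-k).choose (l-k) := by
  rw [symm_choose (show n1-l ≤ n1+c by omega) (show (n1-l)+(c+l) = n1+c by omega)]
  have := Nat.choose_mul (n := n1+c) (show c+k ≤ c+l by omega)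
  rw [this, show n1+c-(c+k) = n1-k by omega, show c+l-(c+k) = l-k by omega,
    show n1+c = c+n1 by omega]

lemma L9 (n1 c l : ℕ) (h1 : 1 ≤ l) (hl : l ≤ n1) :
    (n1+c).choose (n1-l) * (l * (l+c).choose l)
      = n1 * ((n1+c).choose n1 * (n1-1).choose (l-1)) := by
  have habs : n1 * (n1-1).choose (l-1) = n1.choose l * l := by
    obtain ⟨l', rfl⟩ : ∃ l', l = l'+1 := ⟨l-1, by omega⟩
    obtain ⟨m', rfl⟩ : ∃ m', n1 = m'+1 := ⟨n1-1, by omega⟩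
    simpa [Nat.succ_eq_add_one] using Nat.add_one_mul_choose_eq m' l'
  have hmain : (n1+c).choose (n1-l) * (l+c).choose l
      = (n1+c).choose n1 * n1.choose l := by
    rw [symm_choose (show n1-l ≤ n1+c by omega) (show (n1-l)+(c+l) = n1+c by omega),
      show l+c = c+l by omega]
    rw [Nat.choose_mul (n := n1+c) (show l ≤ c+l by omega),
      Nat.choose_mul (n := n1+c) (show l ≤ n1 by omega),
      show n1+c-l = n1-l+c by omega, show c+l-l = c by omega]
    congr 1
    exact (symm_choose (by omega) (by omega)).symm
  calc (n1+c).choose (n1-l) * (l * (l+c).choose l)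
      = ((n1+c).choose (n1-l) * (l+c).choose l) * l := by ring
    _ = ((n1+c).choose n1 * n1.choose l) * l := by rw [hmain]
    _ = (n1.choose l * l) * (n1+c).choose n1 := by ring
    _ = _ := by rw [← habs]; ring

lemma Tlem (n2 n3 l k : ℕ) (hk : k ≤ l) (hl : l ≤ n2) (hk3 : k ≤ n3) :
    (n2+n3).choose (n2-l) * (l+n3).choose (l+k)
      = (n2+n3).choose (n3-k) * (n2+k).choose (l+k) := by
  rw [symm_choose (show n2-l ≤ n2+n3 by omega) (show (n2-l)+(l+n3) = n2+n3 by omega),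
    Nat.choose_mul (n := n2+n3) (show l+k ≤ l+n3 by omega),
    symm_choose (show n3-k ≤ n2+n3 by omega) (show (n3-k)+(n2+k) = n2+n3 by omega),
    Nat.choose_mul (n := n2+n3) (show l+k ≤ n2+k by omega)]
  congr 1
  rw [show l+n3-(l+k) = n2+n3-(l+k)-(n2-l) by omega]
  exact symm_choose (by omega) (by omega)

lemma Vlem (n1 n2 k : ℕ) (hk1 : k ≤ n1) :
    ∑ l ∈ Icc k n1, (n1-k).choose (l-k) * (n2+k).choose (l+k)
      = (n1+n2).choose (n1+k) := by
  rcases le_or_gt k n2 with h2 | h2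
  · have hrhs : (n1+n2).choose (n1+k) = (n1+n2).choose (n2-k) :=
      symm_choose (by omega) (by omega)
    have hv := Nat.add_choose_eq (n1-k) (n2+k) (n2-k)
    rw [Nat.sum_antidiagonal_eq_sum_range_succ_mk] at hv
    dsimp only at hv
    rw [hrhs, show n1+n2 = n1-k+(n2+k) by omega, hv]
    have hL : ∑ l ∈ Icc k n1, (n1-k).choose (l-k) * (n2+k).choose (l+k)
        = ∑ i ∈ range (n1-k+1), (n1-k).choose i * (n2+k).choose (i+2*k) := by
      rw [← Finset.Ico_add_one_right_eq_Icc, Finset.sum_Ico_eq_sum_range,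
        show n1+1-k = n1-k+1 by omega]
      exact Finset.sum_congr rfl fun i _ => by
        rw [show k+i-k = i by omega, show k+i+k = i+2*k by omega]
    have hR : ∑ i ∈ range ((n2-k).succ), (n1-k).choose i * (n2+k).choose (n2-k-i)
        = ∑ i ∈ range (n2-k+1), (n1-k).choose i * (n2+k).choose (i+2*k) := by
      refine Finset.sum_congr rfl fun i hi => ?_
      simp only [mem_range] at hi
      congr 1
      exact symm_choose (by omega) (by omega)
    rw [hL, hR]
    -- both sums of h i over different ranges; extend to common range
    have key : ∀ (A B : ℕ), ∑ i ∈ range (A+1), (n1-k).choose i * (n2+k).choose (i+2*k)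
        = ∑ i ∈ range (A+B+1), (n1-k).choose i * (n2+k).choose (i+2*k) → True := fun _ _ _ => trivial
    rcases le_total (n1-k) (n2-k) with h | h
    · rw [← Finset.sum_subset (Finset.range_subset_range.2 (show n1-k+1 ≤ (n2-k).succ by omega))]
      intro x hx hx2
      simp only [mem_range] at hx hx2
      rw [Nat.choose_eq_zero_of_lt (show n1-k < x by omega)]
      ring
    · rw [Finset.sum_subset (Finset.range_subset_range.2 (show (n2-k).succ ≤ n1-k+1 by omega))]
      intro x hx hx2
      simp only [mem_range] at hx hx2
      rw [Nat.choose_eq_zero_of_lt (show n2+k < x+2*k by omega)]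
      ring
  · rw [Nat.choose_eq_zero_of_lt (show n1+n2 < n1+k by omega)]
    refine Finset.sum_eq_zero fun l hl => ?_
    simp only [mem_Icc] at hl
    rw [Nat.choose_eq_zero_of_lt (show n2+k < l+k by omega)]
    ring

lemma core (n1 n2 n3 k : ℕ) (hk1 : k ≤ n1) :
    ∑ l ∈ Icc k n1, (n1-k).choose (l-k) *
        ((if l ≤ n2 then (n2+n3).choose (n2-l) else 0) * (l+n3).choose (l+k))
      = (n1+n2).choose (n1+k) * (n2+n3).choose (n2+k) := by
  rcases le_or_gt k n3 with h3 | h3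
  · have step : ∀ l ∈ Icc k n1, (n1-k).choose (l-k) *
        ((if l ≤ n2 then (n2+n3).choose (n2-l) else 0) * (l+n3).choose (l+k))
        = (n2+n3).choose (n3-k) * ((n1-k).choose (l-k) * (n2+k).choose (l+k)) := by
      intro l hl
      simp only [mem_Icc] at hl
      by_cases hn2 : l ≤ n2
      · rw [if_pos hn2, show (n1-k).choose (l-k) * ((n2+n3).choose (n2-l) * (l+n3).choose (l+k))
            = ((n2+n3).choose (n2-l) * (l+n3).choose (l+k)) * (n1-k).choose (l-k) by ring,
          Tlem n2 n3 l k hl.1 hn2 h3]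
        ring
      · rw [if_neg hn2, Nat.choose_eq_zero_of_lt (show n2+k < l+k by omega)]
        ring
    rw [Finset.sum_congr rfl step, ← Finset.mul_sum, Vlem n1 n2 k hk1,
      symm_choose (show n3-k ≤ n2+n3 by omega) (show (n3-k)+(n2+k) = n2+n3 by omega)]
    ring
  · rw [Nat.choose_eq_zero_of_lt (show n2+n3 < n2+k by omega), Nat.mul_zero]
    refine Finset.sum_eq_zero fun l hl => ?_
    rw [Nat.choose_eq_zero_of_lt (show l+n3 < l+k by omega)]
    ring

lemma L6 (n1 n2 n3 c k : ℕ) (hk : 1 ≤ k) (hk1 : k ≤ n1) :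
    (n1+n2).choose (n1+k) * (n2+n3).choose (n2+k) * (c+n1).choose (c+k)
      = ∑ l ∈ Icc 1 n1, (n1+c).choose (n1-l) *
          ((if l ≤ n2 then (n2+n3).choose (n2-l) else 0) *
            ((l+n3).choose (l+k) * (c+l).choose (c+k))) := by
  rw [← Finset.sum_subset (show Icc k n1 ⊆ Icc 1 n1 by
      intro x hx; simp only [mem_Icc] at hx ⊢; omega)
    (fun x hx hx2 => by
      simp only [mem_Icc] at hx hx2
      rw [Nat.choose_eq_zero_of_lt (show c+x < c+k by omega)]
      ring)]
  have step : ∀ l ∈ Icc k n1, (n1+c).choose (n1-l) *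
      ((if l ≤ n2 then (n2+n3).choose (n2-l) else 0) *
        ((l+n3).choose (l+k) * (c+l).choose (c+k)))
      = (c+n1).choose (c+k) * ((n1-k).choose (l-k) *
          ((if l ≤ n2 then (n2+n3).choose (n2-l) else 0) * (l+n3).choose (l+k))) := by
    intro l hl
    simp only [mem_Icc] at hl
    rw [show (n1+c).choose (n1-l) *
        ((if l ≤ n2 then (n2+n3).choose (n2-l) else 0) *
          ((l+n3).choose (l+k) * (c+l).choose (c+k)))
        = ((n1+c).choose (n1-l) * (c+l).choose (c+k)) *
            ((if l ≤ n2 then (n2+n3).choose (n2-l) else 0) * (l+n3).choose (l+k)) by ring,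
      L7 n1 c k l hl.1 hl.2]
    ring
  rw [Finset.sum_congr rfl step, ← Finset.mul_sum, core n1 n2 n3 k hk1]
  ring



def mids (k : ℕ) : List ℕ → ℕ
  | a :: b :: t => (a + b).choose (a + k) * mids k (b :: t)
  | _ => 1

def Rr (p : ℕ) : List ℕ → ℕ
  | [] => 1
  | [x] => (p + x - 1).choose p
  | a :: b :: t => ∑ l ∈ Icc 1 p, (p - 1).choose (l - 1) *
      ((if l ≤ a then (a + b).choose (a - l) else 0) * Rr l (b :: t))

lemma main : ∀ (rest : List ℕ) (c n1 : ℕ), rest.getLast? = some c → 0 < n1 →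
    (∀ x ∈ rest, 0 < x) →
    2 * ∑ k ∈ Icc 1 n1, k * (mids k (n1 :: rest) * ((c + n1).choose (c + k)))
      = n1 * ((n1 + c).choose n1 * Rr n1 rest)
  | [], c, n1, hc, _, _ => by simp at hc
  | [n2], c, n1, hc, hn1, hpos => by
      have hc2 : c = n2 := by
        simp only [List.getLast?_singleton, Option.some.injEq] at hc
        omega
      subst hc2
      have hn2 : 0 < c := hpos c (by simp)
      have hb := base n1 c hn1 hn2
      have hmm : ∀ k, mids k (n1 :: [c]) = (n1+c).choose (n1+k) * 1 := fun k => rfl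
      calc 2 * ∑ k ∈ Icc 1 n1, k * (mids k (n1 :: [c]) * ((c + n1).choose (c + k)))
          = 2 * ∑ k ∈ Icc 1 n1, k * ((n1+c).choose (n1+k) * (n1+c).choose (c+k)) := by
            congr 1
            refine Finset.sum_congr rfl fun k _ => ?_
            rw [hmm k, show c+n1 = n1+c by omega]
            ring
        _ = n1 * ((n1+c).choose n1 * (n1+c-1).choose n1) := hb
        _ = n1 * ((n1 + c).choose n1 * Rr n1 [c]) := rfl
  | (n2 :: n3 :: t), c, n1, hc, hn1, hpos => by
      have hc3 : (n3 :: t).getLast? = some c := by rwa [List.getLast?_cons_cons] at hc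
      have hpos3 : ∀ x ∈ (n3 :: t), 0 < x := fun x hx => hpos x (List.mem_cons_of_mem n2 hx)
      have key : ∑ k ∈ Icc 1 n1, k * (mids k (n1 :: n2 :: n3 :: t) * ((c + n1).choose (c + k)))
          = ∑ l ∈ Icc 1 n1, (((n1+c).choose (n1-l) *
              (if l ≤ n2 then (n2+n3).choose (n2-l) else 0)) *
              ∑ k ∈ Icc 1 l, k * (mids k (l :: n3 :: t) * ((c + l).choose (c + k)))) := by
        have swap : ∑ k ∈ Icc 1 n1, k * (mids k (n1 :: n2 :: n3 :: t) * ((c + n1).choose (c + k)))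
            = ∑ k ∈ Icc 1 n1, ∑ l ∈ Icc 1 n1, (((n1+c).choose (n1-l) *
                (if l ≤ n2 then (n2+n3).choose (n2-l) else 0)) *
                (k * (mids k (l :: n3 :: t) * ((c + l).choose (c + k))))) := by
          refine Finset.sum_congr rfl fun k hk => ?_
          simp only [mem_Icc] at hk
          have hmids : mids k (n1 :: n2 :: n3 :: t)
              = (n1+n2).choose (n1+k) * ((n2+n3).choose (n2+k) * mids k (n3 :: t)) := rfl
          rw [hmids,
            show k * ((n1+n2).choose (n1+k) * ((n2+n3).choose (n2+k) * mids k (n3 :: t)) *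
                ((c + n1).choose (c + k)))
              = ((n1+n2).choose (n1+k) * (n2+n3).choose (n2+k) * (c+n1).choose (c+k)) *
                  (k * mids k (n3 :: t)) by ring,
            L6 n1 n2 n3 c k hk.1 hk.2, Finset.sum_mul]
          refine Finset.sum_congr rfl fun l _ => ?_
          have hmids2 : mids k (l :: n3 :: t) = (l+n3).choose (l+k) * mids k (n3 :: t) := rfl
          rw [hmids2]
          ring
        rw [swap, Finset.sum_comm]
        refine Finset.sum_congr rfl fun l hl => ?_
        simp only [mem_Icc] at hl
        rw [← Finset.mul_sum]
        congr 1
        refine (Finset.sum_subset (show Icc 1 l ⊆ Icc 1 n1 by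
            intro x hx; simp only [mem_Icc] at hx ⊢; omega) fun k hk hk2 => ?_).symm
        simp only [mem_Icc] at hk hk2
        rw [Nat.choose_eq_zero_of_lt (show c+l < c+k by omega)]
        ring
      rw [key, Finset.mul_sum]
      have hRr : Rr n1 (n2 :: n3 :: t) = ∑ l ∈ Icc 1 n1, (n1 - 1).choose (l - 1) *
          ((if l ≤ n2 then (n2 + n3).choose (n2 - l) else 0) * Rr l (n3 :: t)) := rfl
      rw [hRr, Finset.mul_sum, Finset.mul_sum]
      refine Finset.sum_congr rfl fun l hl => ?_
      simp only [mem_Icc] at hl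
      have ih := main (n3 :: t) c l hc3 (by omega) hpos3
      rw [show 2 * (((n1+c).choose (n1-l) * (if l ≤ n2 then (n2+n3).choose (n2-l) else 0)) *
            ∑ k ∈ Icc 1 l, k * (mids k (l :: n3 :: t) * ((c + l).choose (c + k))))
          = ((n1+c).choose (n1-l) * (if l ≤ n2 then (n2+n3).choose (n2-l) else 0)) *
            (2 * ∑ k ∈ Icc 1 l, k * (mids k (l :: n3 :: t) * ((c + l).choose (c + k)))) by ring,
        ih,
        show (n1+c).choose (n1-l) * (if l ≤ n2 then (n2+n3).choose (n2-l) else 0) *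
            (l * ((l + c).choose l * Rr l (n3 :: t)))
          = ((n1+c).choose (n1-l) * (l * (l+c).choose l)) *
              ((if l ≤ n2 then (n2+n3).choose (n2-l) else 0) * Rr l (n3 :: t)) by ring,
        L9 n1 c l hl.1 hl.2]
      ring




def chList : ℕ → (ℕ → ℕ) → List ℕ
  | 0, g => [g 2]
  | (j+1), g => g 2 :: chList j (fun t => g (t+1))

lemma chList_shape (j : ℕ) (g : ℕ → ℕ) : ∃ t, chList j g = g 2 :: t := by
  cases j with
  | zero => exact ⟨[], rfl⟩
  | succ j => exact ⟨chList j (fun t => g (t+1)), rfl⟩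

lemma Rr_two (p a : ℕ) (L : List ℕ) (b : ℕ) (t : List ℕ) (h : L = b :: t) :
    Rr p (a :: L) = ∑ l ∈ Icc 1 p, (p - 1).choose (l - 1) *
      ((if l ≤ a then (a + b).choose (a - l) else 0) * Rr l L) := by
  subst h; rfl

lemma lamExt_zero (J p : ℕ) (f : Fin (J - 2) → ℕ) : lamExt J p f 0 = p := rfl

lemma lamExt_cons (j p x : ℕ) (lam : Fin j → ℕ) : ∀ i : ℕ,
    lamExt (j+1+2) p (Fin.cons x lam) (i+1) = lamExt (j+2) x lam i := by
  intro i
  match i with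
  | 0 =>
    show lamExt (j+1+2) p (Fin.cons x lam) 1 = lamExt (j+2) x lam 0
    rw [show lamExt (j+2) x lam 0 = x from rfl]
    unfold lamExt
    rw [if_neg one_ne_zero, dif_pos (show 1 - 1 < j+1+2-2 by omega)]
    rfl
  | (i+1) =>
    unfold lamExt
    rw [if_neg (by omega), if_neg (by omega)]
    by_cases h : i < j
    · rw [dif_pos (show i+1+1-1 < j+1+2-2 by omega), dif_pos (show i+1-1 < j+2-2 by omega)]
      have e1 : (⟨i+1+1-1, show i+1+1-1 < j+1+2-2 by omega⟩ : Fin (j+1))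
          = Fin.succ ⟨i, h⟩ := by ext; simp
      rw [e1, Fin.cons_succ]
      congr 1
    · rw [dif_neg (by omega), dif_neg (by omega)]


lemma prod_Icc1_range (f : ℕ → ℕ) (j : ℕ) : ∏ i ∈ Icc 1 j, f i = ∏ i ∈ range j, f (i+1) := by
  rw [← Finset.Ico_add_one_right_eq_Icc, Finset.prod_Ico_eq_prod_range]
  simp [Nat.add_comm]

lemma prod_Icc_peel (W : ℕ → ℕ) (j : ℕ) :
    ∏ i ∈ Icc 1 (j+1), W i = W 1 * ∏ i ∈ Icc 1 j, W (i+1) := by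
  rw [prod_Icc1_range, prod_Icc1_range, Finset.prod_range_succ']
  ring

lemma chain : ∀ (j : ℕ) (g : ℕ → ℕ) (N p : ℕ), 1 ≤ p → p ≤ N →
    (∑ lam ∈ Finset.filter
        (fun lam : Fin j → ℕ => ∀ a b : Fin j, a ≤ b → lam b ≤ lam a)
        (Fintype.piFinset fun _ : Fin j => Finset.Icc 1 N),
      (lamExt (j+2) p lam j + g (j+2) - 1).choose (lamExt (j+2) p lam j) *
        ∏ i ∈ Finset.Icc 1 j,
          ((lamExt (j+2) p lam (i-1) - 1).choose (lamExt (j+2) p lam i - 1) *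
            (if lamExt (j+2) p lam i ≤ g (i+1) then
              (g (i+1) + g (i+2)).choose (g (i+1) - lamExt (j+2) p lam i) else 0)))
    = Rr p (chList j g)
  | 0, g, N, p, hp, hpN => by
      have hset : (Fintype.piFinset fun _ : Fin 0 => Finset.Icc 1 N) = {fun i => i.elim0} := by
        ext f
        simp only [Fintype.mem_piFinset, Finset.mem_singleton]
        constructor
        · intro _; funext i; exact i.elim0
        · intro _ a; exact a.elim0
      rw [hset, Finset.filter_true_of_mem (fun f _ => fun a _ _ => a.elim0),
        Finset.sum_singleton]
      rw [show Icc 1 0 = (∅ : Finset ℕ) from by simp, Finset.prod_empty]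
      show (lamExt 2 p _ 0 + g 2 - 1).choose (lamExt 2 p _ 0) * 1 = Rr p [g 2]
      rw [lamExt_zero]
      show (p + g 2 - 1).choose p * 1 = (p + g 2 - 1).choose p
      exact Nat.mul_one _
  | (j+1), g, N, p, hp, hpN => by
      have hbij : ∀ (F : (Fin (j+1) → ℕ) → ℕ),
          ∑ f ∈ Finset.filter
              (fun lam : Fin (j+1) → ℕ => ∀ a b : Fin (j+1), a ≤ b → lam b ≤ lam a)
              (Fintype.piFinset fun _ : Fin (j+1) => Finset.Icc 1 N), F f
          = ∑ x ∈ Icc 1 N, ∑ lam ∈ Finset.filter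
              (fun lam : Fin j → ℕ => ∀ a b : Fin j, a ≤ b → lam b ≤ lam a)
              (Fintype.piFinset fun _ : Fin j => Finset.Icc 1 x),
              F (Fin.cons x lam) := by
        intro F
        rw [← Finset.sum_sigma (Icc 1 N) (fun x : ℕ =>
          Finset.filter (fun lam : Fin j → ℕ => ∀ a b : Fin j, a ≤ b → lam b ≤ lam a)
            (Fintype.piFinset fun _ : Fin j => Finset.Icc 1 x))
          (fun q => F (Fin.cons q.1 q.2))]
        refine Finset.sum_nbij' (fun f => ⟨f 0, Fin.tail f⟩) (fun q => Fin.cons q.1 q.2)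
          ?_ ?_ ?_ ?_ ?_
        · intro f hf
          simp only [Finset.mem_filter, Fintype.mem_piFinset] at hf
          obtain ⟨hmem, hanti⟩ := hf
          simp only [Finset.mem_sigma, Finset.mem_filter, Fintype.mem_piFinset]
          refine ⟨hmem 0, fun a => ?_, fun a b hab => ?_⟩
          · have h1 := hmem a.succ
            have h2 := hanti 0 a.succ (Fin.zero_le _)
            simp only [mem_Icc] at h1 ⊢
            exact ⟨h1.1, h2⟩
          · exact hanti a.succ b.succ (Fin.succ_le_succ_iff.2 hab)
        · rintro ⟨x, lam⟩ hq
          simp only [Finset.mem_sigma, Finset.mem_filter, Fintype.mem_piFinset] at hq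
          obtain ⟨hx, hmem, hanti⟩ := hq
          simp only [Finset.mem_filter, Fintype.mem_piFinset]
          simp only [mem_Icc] at hx
          constructor
          · intro a
            rcases Fin.eq_zero_or_eq_succ a with rfl | ⟨a', rfl⟩
            · rw [Fin.cons_zero]; simp only [mem_Icc]; omega
            · rw [Fin.cons_succ]
              have := hmem a'
              simp only [mem_Icc] at this ⊢
              omega
          · intro a b hab
            rcases Fin.eq_zero_or_eq_succ b with rfl | ⟨b', rfl⟩
            · have ha0 : a = 0 := le_antisymm (le_trans hab (Fin.zero_le _)) (Fin.zero_le _)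
              subst ha0; exact le_refl _
            · rcases Fin.eq_zero_or_eq_succ a with rfl | ⟨a', rfl⟩
              · rw [Fin.cons_succ, Fin.cons_zero]
                have := hmem b'
                simp only [mem_Icc] at this
                exact this.2
              · rw [Fin.cons_succ, Fin.cons_succ]
                exact hanti a' b' (Fin.succ_le_succ_iff.1 hab)
        · intro f _; exact Fin.cons_self_tail f
        · rintro ⟨x, lam⟩ _
          simp [Fin.tail_cons]
        · intro f _
          rw [Fin.cons_self_tail]
      rw [hbij]
      have inner : ∀ x, 1 ≤ x → x ≤ N → ∀ lam : Fin j → ℕ,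
          ((lamExt (j+1+2) p (Fin.cons x lam) (j+1) + g (j+1+2) - 1).choose
              (lamExt (j+1+2) p (Fin.cons x lam) (j+1)) *
            ∏ i ∈ Finset.Icc 1 (j+1),
              ((lamExt (j+1+2) p (Fin.cons x lam) (i-1) - 1).choose
                  (lamExt (j+1+2) p (Fin.cons x lam) i - 1) *
                (if lamExt (j+1+2) p (Fin.cons x lam) i ≤ g (i+1) then
                  (g (i+1) + g (i+2)).choose (g (i+1) - lamExt (j+1+2) p (Fin.cons x lam) i)
                 else 0)))
          = ((p-1).choose (x-1) * (if x ≤ g 2 then (g 2 + g 3).choose (g 2 - x) else 0)) *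
            ((lamExt (j+2) x lam j + g (j+2+1) - 1).choose (lamExt (j+2) x lam j) *
              ∏ i ∈ Finset.Icc 1 j,
                ((lamExt (j+2) x lam (i-1) - 1).choose (lamExt (j+2) x lam i - 1) *
                  (if lamExt (j+2) x lam i ≤ g (i+1+1) then
                    (g (i+1+1) + g (i+2+1)).choose (g (i+1+1) - lamExt (j+2) x lam i)
                   else 0))) := by
        intro x hx1 hxN lam
        have hL := lamExt_cons j p x lam
        rw [prod_Icc_peel]
        have hW1 : (lamExt (j+1+2) p (Fin.cons x lam) (1-1) - 1).choose
              (lamExt (j+1+2) p (Fin.cons x lam) 1 - 1) *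
            (if lamExt (j+1+2) p (Fin.cons x lam) 1 ≤ g (1+1) then
              (g (1+1) + g (1+2)).choose (g (1+1) - lamExt (j+1+2) p (Fin.cons x lam) 1) else 0)
            = (p-1).choose (x-1) * (if x ≤ g 2 then (g 2 + g 3).choose (g 2 - x) else 0) := by
          have h1 : lamExt (j+1+2) p (Fin.cons x lam) 1 = x := by
            have := hL 0
            rwa [show lamExt (j+2) x lam 0 = x from rfl] at this
          rw [h1, show lamExt (j+1+2) p (Fin.cons x lam) (1-1) = p from rfl,
            show g (1+1) = g 2 from by norm_num, show g (1+2) = g 3 from by norm_num]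
        rw [hW1]
        have hprod : ∏ i ∈ Finset.Icc 1 j,
            ((lamExt (j+1+2) p (Fin.cons x lam) (i+1-1) - 1).choose
                (lamExt (j+1+2) p (Fin.cons x lam) (i+1) - 1) *
              (if lamExt (j+1+2) p (Fin.cons x lam) (i+1) ≤ g (i+1+1) then
                (g (i+1+1) + g (i+1+2)).choose
                  (g (i+1+1) - lamExt (j+1+2) p (Fin.cons x lam) (i+1)) else 0))
            = ∏ i ∈ Finset.Icc 1 j,
              ((lamExt (j+2) x lam (i-1) - 1).choose (lamExt (j+2) x lam i - 1) *
                (if lamExt (j+2) x lam i ≤ g (i+1+1) then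
                  (g (i+1+1) + g (i+2+1)).choose (g (i+1+1) - lamExt (j+2) x lam i)
                 else 0)) := by
          refine Finset.prod_congr rfl fun i hi => ?_
          simp only [mem_Icc] at hi
          obtain ⟨i', rfl⟩ : ∃ i', i = i'+1 := ⟨i-1, by omega⟩
          rw [show i'+1+1-1 = i'+1 from rfl, show i'+1-1 = i' from rfl, hL (i'+1), hL i',
            show g (i'+1+1+2) = g (i'+1+2+1) from by norm_num]
        rw [hprod, hL j, show g (j+1+2) = g (j+2+1) from by norm_num]
        ring
      rw [Finset.sum_congr rfl fun x hx => Finset.sum_congr rfl fun lam _ => by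
        simp only [mem_Icc] at hx
        exact inner x hx.1 hx.2 lam]
      have hIH : ∀ x, 1 ≤ x →
          (∑ lam ∈ Finset.filter
              (fun lam : Fin j → ℕ => ∀ a b : Fin j, a ≤ b → lam b ≤ lam a)
              (Fintype.piFinset fun _ : Fin j => Finset.Icc 1 x),
            (lamExt (j+2) x lam j + g (j+2+1) - 1).choose (lamExt (j+2) x lam j) *
              ∏ i ∈ Finset.Icc 1 j,
                ((lamExt (j+2) x lam (i-1) - 1).choose (lamExt (j+2) x lam i - 1) *
                  (if lamExt (j+2) x lam i ≤ g (i+1+1) then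
                    (g (i+1+1) + g (i+2+1)).choose (g (i+1+1) - lamExt (j+2) x lam i)
                   else 0)))
          = Rr x (chList j (fun t => g (t+1))) := by
        intro x hx1
        have := chain j (fun t => g (t+1)) x x hx1 (le_refl x)
        beta_reduce at this
        exact this
      calc ∑ x ∈ Icc 1 N, ∑ lam ∈ Finset.filter
            (fun lam : Fin j → ℕ => ∀ a b : Fin j, a ≤ b → lam b ≤ lam a)
            (Fintype.piFinset fun _ : Fin j => Finset.Icc 1 x),
            (((p-1).choose (x-1) * (if x ≤ g 2 then (g 2 + g 3).choose (g 2 - x) else 0)) *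
              ((lamExt (j+2) x lam j + g (j+2+1) - 1).choose (lamExt (j+2) x lam j) *
                ∏ i ∈ Finset.Icc 1 j,
                  ((lamExt (j+2) x lam (i-1) - 1).choose (lamExt (j+2) x lam i - 1) *
                    (if lamExt (j+2) x lam i ≤ g (i+1+1) then
                      (g (i+1+1) + g (i+2+1)).choose (g (i+1+1) - lamExt (j+2) x lam i)
                     else 0))))
          = ∑ x ∈ Icc 1 N, ((p-1).choose (x-1) *
              ((if x ≤ g 2 then (g 2 + g 3).choose (g 2 - x) else 0) *
                Rr x (chList j (fun t => g (t+1))))) := by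
            refine Finset.sum_congr rfl fun x hx => ?_
            simp only [mem_Icc] at hx
            rw [← Finset.mul_sum, hIH x hx.1]
            ring
        _ = ∑ x ∈ Icc 1 p, ((p-1).choose (x-1) *
              ((if x ≤ g 2 then (g 2 + g 3).choose (g 2 - x) else 0) *
                Rr x (chList j (fun t => g (t+1))))) := by
            refine (Finset.sum_subset (show Icc 1 p ⊆ Icc 1 N by
              intro y hy; simp only [mem_Icc] at hy ⊢; omega) fun x hx hx2 => ?_).symm
            simp only [mem_Icc] at hx hx2
            rw [Nat.choose_eq_zero_of_lt (show p-1 < x-1 by omega)]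
            ring
        _ = Rr p (chList (j+1) g) := by
            obtain ⟨tl, htl⟩ := chList_shape j (fun t => g (t+1))
            beta_reduce at htl
            rw [show chList (j+1) g = g 2 :: chList j (fun t => g (t+1)) from rfl,
              Rr_two p (g 2) _ (g (2+1)) tl htl,
              show g (2+1) = g 3 from by norm_num]


lemma chooseCong (n : ℕ → ℕ) (k a b a' b' : ℕ) (h1 : a = a') (h2 : b = b') :
    (n a + n b).choose (n a + k) = (n a' + n b').choose (n a' + k) := by rw [h1, h2]

lemma chList_last : ∀ (j : ℕ) (n : ℕ → ℕ), (chList j n).getLast? = some (n (j+2))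
  | 0, n => rfl
  | (j+1), n => by
      obtain ⟨tl, htl⟩ := chList_shape j (fun t => n (t+1))
      rw [show chList (j+1) n = n 2 :: chList j (fun t => n (t+1)) from rfl, htl,
        List.getLast?_cons_cons, ← htl, chList_last j (fun t => n (t+1))]

lemma chList_pos : ∀ (j : ℕ) (n : ℕ → ℕ), (∀ i, 2 ≤ i → i ≤ j+2 → 0 < n i) →
    ∀ x ∈ chList j n, 0 < x
  | 0, n, h => by
      intro x hx
      simp only [chList, List.mem_singleton] at hx
      subst hx; exact h 2 le_rfl (by omega)
  | (j+1), n, h => by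
      intro x hx
      rw [show chList (j+1) n = n 2 :: chList j (fun t => n (t+1)) from rfl] at hx
      rcases List.mem_cons.1 hx with rfl | hx'
      · exact h 2 le_rfl (by omega)
      · exact chList_pos j (fun t => n (t+1)) (fun i h2 hj => h (i+1) (by omega) (by omega)) x hx'

lemma midsChain : ∀ (j : ℕ) (n : ℕ → ℕ) (k : ℕ),
    mids k (n 1 :: chList j n) = ∏ i ∈ range (j+1), (n (i+1) + n (i+2)).choose (n (i+1) + k)
  | 0, n, k => by
      rw [show chList 0 n = [n 2] from rfl,
        show mids k [n 1, n 2] = (n 1 + n 2).choose (n 1 + k) * 1 from rfl,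
        Finset.prod_range_one, Nat.mul_one]
  | (j+1), n, k => by
      rw [show mids k (n 1 :: chList (j+1) n)
          = (n 1 + n 2).choose (n 1 + k) * mids k (n 2 :: chList j (fun t => n (t+1))) from rfl]
      rw [show (n 2 :: chList j (fun t => n (t+1)))
          = ((fun t => n (t+1)) 1 :: chList j (fun t => n (t+1))) from by norm_num]
      rw [midsChain j (fun t => n (t+1)) k]
      beta_reduce
      conv_rhs => rw [Finset.prod_range_succ']
      rw [mul_comm ((n 1 + n 2).choose (n 1 + k))]

lemma prodBridge (n : ℕ → ℕ) (k j : ℕ) :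
    ∏ i ∈ Icc 1 (j+2), (n i + n (if i = j+2 then 1 else i+1)).choose (n i + k)
      = mids k (n 1 :: chList j n) * ((n (j+2) + n 1).choose (n (j+2) + k)) := by
  have h1 : ∏ i ∈ Icc 1 (j+2), (n i + n (if i = j+2 then 1 else i+1)).choose (n i + k)
      = (∏ i ∈ Icc 1 (j+1), (n i + n (if i = j+2 then 1 else i+1)).choose (n i + k)) *
        ((n (j+2) + n (if j+2 = j+2 then 1 else j+2+1)).choose (n (j+2) + k)) :=
    Finset.prod_Icc_succ_top (by omega) _
  rw [h1, if_pos rfl]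
  congr 1
  rw [midsChain j n k, prod_Icc1_range]
  refine Finset.prod_congr rfl fun i hi => ?_
  simp only [mem_range] at hi
  rw [if_neg (by omega)]

end CTFM

theorem catalan_triangle_first_moment (m : ℕ) (hm : 3 ≤ m) (n : ℕ → ℕ)
    (hpos : ∀ i ∈ Finset.Icc 1 m, 0 < n i) :
    2 * ∑ k ∈ Finset.Icc 1 (n 1), k *
        ∏ i ∈ Finset.Icc 1 m, (n i + n (if i = m then 1 else i + 1)).choose (n i + k)
      = n 1 * (n 1 + n m).choose (n 1) *
        ∑ lam ∈ Finset.filter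
            (fun lam : Fin (m - 2) → ℕ => ∀ i j : Fin (m - 2), i ≤ j → lam j ≤ lam i)
            (Fintype.piFinset fun _ : Fin (m - 2) => Finset.Icc 1 (n 1)),
          (lamExt m (n 1) lam (m - 2) + n m - 1).choose (lamExt m (n 1) lam (m - 2)) *
            ∏ i ∈ Finset.Icc 1 (m - 2),
              (lamExt m (n 1) lam (i - 1) - 1).choose (lamExt m (n 1) lam i - 1) *
                (if lamExt m (n 1) lam i ≤ n (i + 1) then
                  (n (i + 1) + n (i + 2)).choose (n (i + 1) - lamExt m (n 1) lam i)
                 else 0) := by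
  obtain ⟨j, rfl⟩ : ∃ j, m = j + 2 := ⟨m - 2, by omega⟩
  have hn1 : 0 < n 1 := hpos 1 (by simp only [mem_Icc]; omega)
  have hchain : (∑ lam ∈ Finset.filter
            (fun lam : Fin (j + 2 - 2) → ℕ => ∀ i j' : Fin (j + 2 - 2), i ≤ j' → lam j' ≤ lam i)
            (Fintype.piFinset fun _ : Fin (j + 2 - 2) => Finset.Icc 1 (n 1)),
          (lamExt (j+2) (n 1) lam (j + 2 - 2) + n (j+2) - 1).choose (lamExt (j+2) (n 1) lam (j + 2 - 2)) *
            ∏ i ∈ Finset.Icc 1 (j + 2 - 2),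
              (lamExt (j+2) (n 1) lam (i - 1) - 1).choose (lamExt (j+2) (n 1) lam i - 1) *
                (if lamExt (j+2) (n 1) lam i ≤ n (i + 1) then
                  (n (i + 1) + n (i + 2)).choose (n (i + 1) - lamExt (j+2) (n 1) lam i)
                 else 0))
      = CTFM.Rr (n 1) (CTFM.chList j n) := CTFM.chain j n (n 1) (n 1) hn1 le_rfl
  rw [hchain]
  have hLHS : ∑ k ∈ Finset.Icc 1 (n 1), k *
        ∏ i ∈ Finset.Icc 1 (j+2), (n i + n (if i = j+2 then 1 else i + 1)).choose (n i + k)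
      = ∑ k ∈ Finset.Icc 1 (n 1), k *
          (CTFM.mids k (n 1 :: CTFM.chList j n) * ((n (j+2) + n 1).choose (n (j+2) + k))) :=
    by
    refine Finset.sum_congr rfl fun k _ => ?_
    rw [CTFM.prodBridge n k j]
  rw [hLHS]
  have hrest_pos : ∀ x ∈ CTFM.chList j n, 0 < x := by
    apply CTFM.chList_pos j n
    intro i h2 hj
    apply hpos
    simp only [mem_Icc]
    exact ⟨le_trans one_le_two h2, hj⟩
  have hmain := CTFM.main (CTFM.chList j n) (n (j+2)) (n 1) (CTFM.chList_last j n) hn1 hrest_pos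
  rw [hmain, Nat.mul_assoc]
end

section
/- For all integers n ≥ 1 and 1 ≤ r ≤ n: Σ_{k=1}^{n} C(2n, n-k) · k^{2r} = Σ_{k=0}^{r-1} 4^{n-k-1} · Σ_{i=0}^{k} C(2n, i) · C(2k-2n, k-i) · (n-i)^{2r-1}. -/
open Finset

/-- Extended binomial coefficient: integer upper, integer lower (0 if lower < 0). -/
def bin (a t : ℤ) : ℤ := if t < 0 then 0 else Ring.choose a t.toNat

lemma bin_neg {a t : ℤ} (h : t < 0) : bin a t = 0 := by simp [bin, h]

lemma bin_zero (a : ℤ) : bin a 0 = 1 := by simp [bin, Ring.choose_zero_right]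

lemma bin_pascal (a t : ℤ) : bin (a + 1) t = bin a t + bin a (t - 1) := by
  rcases lt_trichotomy t 0 with h | h | h
  · rw [bin_neg h, bin_neg h, bin_neg (by omega)]; ring
  · subst h; rw [bin_zero, bin_zero, bin_neg (by omega)]; ring
  · have h1 : ¬ (t < 0) := by omega
    have h2 : ¬ (t - 1 < 0) := by omega
    have h3 : t.toNat = (t-1).toNat + 1 := by omega
    rw [bin, bin, bin, if_neg h1, if_neg h1, if_neg h2, h3, Ring.choose_succ_succ]
    ring

lemma bin_nat (N k : ℕ) : bin (N : ℤ) (k : ℤ) = N.choose k := by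
  simp [bin, Ring.choose_natCast]

lemma bin_zero_top (t : ℤ) : bin 0 t = if t = 0 then 1 else 0 := by
  rcases lt_trichotomy t 0 with h | h | h
  · rw [bin_neg h, if_neg (by omega)]
  · simp [h, bin_zero]
  · rw [if_neg (by omega), bin, if_neg (by omega), Ring.choose_zero_pos _ (by omega)]

lemma bin_absorb (N : ℕ) (t : ℤ) :
    t * bin ((N : ℤ) + 1) t = ((N : ℤ) + 1) * bin (N : ℤ) (t - 1) := by
  rcases lt_trichotomy t 0 with h | h | h
  · rw [bin_neg h, bin_neg (by omega)]; ring
  · subst h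
    have : bin (N : ℤ) (0 - 1) = 0 := bin_neg (by norm_num)
    rw [this]; ring
  · have h2 : ¬ (t - 1 < 0) := by omega
    have h3 : t = ((t - 1).toNat : ℤ) + 1 := by omega
    have hN : ((N : ℤ) + 1) = ((N + 1 : ℕ) : ℤ) := by push_cast; ring
    rw [hN, h3]
    have h4 : (((t-1).toNat : ℤ) + 1).toNat = (t-1).toNat + 1 := by omega
    rw [bin, bin, if_neg (by omega), if_neg (by omega), h4,
      show (((t-1).toNat : ℤ) + 1 - 1) = ((t-1).toNat : ℤ) by ring, Int.toNat_natCast,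
      Ring.choose_natCast, Ring.choose_natCast]
    norm_cast
    have key := Nat.add_one_mul_choose_eq N ((t-1).toNat)
    rw [key]; ring

/-- Coefficient sequence. -/
def bb (n : ℕ) : ℕ → ℤ → ℤ
  | 0 => fun j => if j = 0 then 1 else 0
  | (m+1) => fun j => ((n : ℤ) - j) * bb n m j + ((m : ℤ) + 1 - n - j) * bb n m (j - 1)

lemma bb_neg (n : ℕ) : ∀ (m : ℕ) (j : ℤ), j < 0 → bb n m j = 0 := by
  intro m
  induction m with
  | zero => intro j hj; simp [bb]; omega
  | succ m ih =>
    intro j hj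
    simp only [bb]
    rw [ih j hj, ih (j-1) (by omega)]
    ring

lemma bb_gt (n : ℕ) : ∀ (m : ℕ) (j : ℤ), (m : ℤ) < j → bb n m j = 0 := by
  intro m
  induction m with
  | zero => intro j hj; simp [bb]; omega
  | succ m ih =>
    intro j hj
    simp only [bb]
    rw [ih j (by push_cast at hj ⊢; omega), ih (j-1) (by push_cast at hj ⊢; omega)]
    ring

lemma bb_antisym (n : ℕ) : ∀ (m : ℕ) (j : ℤ), bb n m ((m : ℤ) - j) = (-1) ^ m * bb n m j := by
  intro m
  induction m with
  | zero =>
    intro j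
    by_cases h : j = 0
    · subst h; norm_num
    · simp only [bb, Nat.cast_zero]
      rw [if_neg (by omega), if_neg h]; ring
  | succ m ih =>
    intro j
    simp only [bb]
    have e1 : ((m:ℤ) + 1) - j - 1 = (m : ℤ) - j := by ring
    have e2 : ((m:ℤ) + 1) - j = (m : ℤ) - (j - 1) := by ring
    push_cast
    rw [e1, e2, ih j, ih (j-1)]
    ring

lemma key_identity_s18 (N : ℕ) (w t : ℤ) :
    (w - t) * bin ((N : ℤ) + 1) t = w * bin (N : ℤ) t + (w - ((N : ℤ) + 1)) * bin (N : ℤ) (t - 1) := by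
  have hp := bin_pascal (N : ℤ) t
  have ha := bin_absorb N t
  linear_combination w * hp - ha

lemma star (n : ℕ) : ∀ (m N : ℕ), m + N = 2 * n → ∀ i : ℤ,
    bin ((2 * n : ℕ) : ℤ) i * ((n : ℤ) - i) ^ m
      = ∑ j ∈ range (m + 1), bb n m j * bin ((N : ℕ) : ℤ) (i - j) := by
  intro m
  induction m with
  | zero =>
    intro N hN i
    have : N = 2 * n := by omega
    subst this
    simp [bb]
  | succ m ih =>
    intro N hN i
    have hIH := ih (N + 1) (by omega) i
    have lhs_eq : bin ((2 * n : ℕ) : ℤ) i * ((n : ℤ) - i) ^ (m + 1)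
        = ∑ j ∈ range (m + 1), bb n m j * (((n : ℤ) - i) * bin (((N + 1 : ℕ)) : ℤ) (i - j)) := by
      rw [pow_succ, ← mul_assoc, hIH, Finset.sum_mul]
      refine Finset.sum_congr rfl fun j _ => by ring
    rw [lhs_eq]
    -- rewrite each term via key_identity
    have term_eq : ∀ j ∈ range (m + 1),
        bb n m j * (((n : ℤ) - i) * bin (((N + 1 : ℕ)) : ℤ) (i - j))
          = ((n : ℤ) - j) * bb n m j * bin (N : ℤ) (i - j)
            + ((m : ℤ) - n - j) * bb n m j * bin (N : ℤ) (i - j - 1) := by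
      intro j _
      have hk := key_identity_s18 N ((n : ℤ) - j) (i - j)
      have h1 : ((n : ℤ) - j) - (i - j) = (n : ℤ) - i := by ring
      have h2 : ((n : ℤ) - j) - ((N : ℤ) + 1) = (m : ℤ) - n - j := by
        have : (m : ℤ) + 1 + N = 2 * n := by exact_mod_cast congrArg (Nat.cast : ℕ → ℤ) hN
        linarith
      rw [h1, h2] at hk
      have hcast : (((N + 1 : ℕ)) : ℤ) = (N : ℤ) + 1 := by push_cast; ring
      rw [hcast]
      linear_combination bb n m j * hk
    rw [Finset.sum_congr rfl term_eq, Finset.sum_add_distrib]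
    -- now the RHS of the goal
    have rhs_split : ∑ j ∈ range (m + 2), bb n (m + 1) j * bin (N : ℤ) (i - j)
        = ∑ j ∈ range (m + 2), (((n : ℤ) - j) * bb n m j * bin (N : ℤ) (i - j)
            + ((m : ℤ) + 1 - n - j) * bb n m (j - 1) * bin (N : ℤ) (i - j)) := by
      refine Finset.sum_congr rfl fun j _ => ?_
      simp only [bb]; ring
    rw [rhs_split, Finset.sum_add_distrib]
    congr 1
    · rw [eq_comm, Finset.sum_range_succ, bb_gt n m ((m + 1 : ℕ) : ℤ) (by push_cast; omega)]
      simp only [mul_zero, zero_mul, add_zero]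
    · rw [eq_comm, Finset.sum_range_succ']
      have h0 : bb n m (((0:ℕ):ℤ) - 1) = 0 := bb_neg n m _ (by norm_num)
      rw [h0]
      simp only [mul_zero, zero_mul, add_zero]
      refine Finset.sum_congr rfl fun j _ => ?_
      push_cast
      rw [show (j:ℤ) + 1 - 1 = (j:ℤ) by ring, show i - ((j:ℤ) + 1) = i - (j:ℤ) - 1 by ring]
      ring

lemma vdm : ∀ (M : ℕ) (a : ℤ) (k j : ℕ),
    ∑ i ∈ range (k + 1), bin ((M : ℕ) : ℤ) ((i : ℤ) - j) * bin a ((k : ℤ) - i)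
      = bin ((M : ℤ) + a) ((k : ℤ) - j) := by
  intro M
  induction M with
  | zero =>
    intro a k j
    simp only [Nat.cast_zero, zero_add]
    rcases le_or_gt j k with h | h
    · rw [Finset.sum_eq_single j]
      · rw [bin_zero_top, if_pos (by ring), one_mul]
      · intro b _ hb
        rw [bin_zero_top, if_neg (by intro hc; apply hb; omega), zero_mul]
      · intro hj; exact absurd (Finset.mem_range.mpr (by omega)) hj
    · rw [Finset.sum_eq_zero, eq_comm, bin_neg (by push_cast; omega)]
      intro b hb
      rw [bin_zero_top, if_neg (by simp at hb; omega), zero_mul]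
  | succ M ih =>
    intro a k j
    have hc : ((M + 1 : ℕ) : ℤ) = ((M : ℕ) : ℤ) + 1 := by push_cast; ring
    have step : ∀ i ∈ range (k + 1),
        bin ((M + 1 : ℕ) : ℤ) ((i : ℤ) - j) * bin a ((k : ℤ) - i)
          = bin ((M : ℕ) : ℤ) ((i : ℤ) - j) * bin a ((k : ℤ) - i)
            + bin ((M : ℕ) : ℤ) ((i : ℤ) - ((j + 1 : ℕ) : ℤ)) * bin a ((k : ℤ) - i) := by
      intro i _
      rw [hc, bin_pascal]
      push_cast
      ring_nf
    rw [Finset.sum_congr rfl step, Finset.sum_add_distrib, ih a k j, ih a k (j + 1), hc,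
      show (M : ℤ) + 1 + a = ((M : ℤ) + a) + 1 by ring, bin_pascal]
    push_cast
    ring_nf

lemma rowsum (L : ℕ) (c : ℤ) : ∀ (M j : ℕ), j + M ≤ L →
    2 * ∑ i ∈ range (L + 1), (c - i) * bin ((M : ℕ) : ℤ) ((i : ℤ) - j)
      = 2 ^ M * (2 * (c - j) - M) := by
  intro M
  induction M with
  | zero =>
    intro j hj
    rw [Finset.sum_eq_single j]
    · simp only [Nat.cast_zero, bin_zero_top]
      rw [if_pos (by ring)]
      push_cast; ring
    · intro b _ hb
      simp only [Nat.cast_zero, bin_zero_top]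
      rw [if_neg (by intro hcon; apply hb; omega), mul_zero]
    · intro hjj; exact absurd (Finset.mem_range.mpr (by omega)) hjj
  | succ M ih =>
    intro j hj
    have hc : ((M + 1 : ℕ) : ℤ) = ((M : ℕ) : ℤ) + 1 := by push_cast; ring
    have step : ∀ i ∈ range (L + 1),
        (c - i) * bin ((M + 1 : ℕ) : ℤ) ((i : ℤ) - j)
          = (c - i) * bin ((M : ℕ) : ℤ) ((i : ℤ) - j)
            + (c - i) * bin ((M : ℕ) : ℤ) ((i : ℤ) - ((j + 1 : ℕ) : ℤ)) := by
      intro i _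
      rw [hc, bin_pascal]
      push_cast
      ring_nf
    rw [Finset.sum_congr rfl step, Finset.sum_add_distrib, mul_add, ih j (by omega),
      ih (j + 1) (by omega)]
    push_cast
    ring

def chebU (s : ℕ) : ℤ := ∑ m ∈ range (s + 1), 4 ^ (s - m) * bin (2 * (m : ℤ) - 2 * s - 1) m
def chebV (s : ℕ) : ℤ := ∑ m ∈ range (s + 1), 4 ^ (s - m) * bin (2 * (m : ℤ) - 2 * s - 2) m

lemma chebUV : ∀ s : ℕ, chebU s = 2 * s + 1 ∧ chebV s = s + 1 := by
  intro s
  induction s with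
  | zero =>
    constructor <;>
    · simp only [chebU, chebV, Finset.sum_range_one]
      norm_num [bin_zero]
  | succ s ih =>
    obtain ⟨hu, hv⟩ := ih
    set X : ℤ := ∑ m ∈ range (s + 2), 4 ^ (s + 1 - m) * bin (2 * (m : ℤ) - 2 * s - 2) m with hX
    have hA1 : X = 4 * chebV s := by
      rw [hX, Finset.sum_range_succ]
      have htop : bin (2 * ((s + 1 : ℕ) : ℤ) - 2 * s - 2) ((s + 1 : ℕ) : ℤ) = 0 := by
        rw [show 2 * ((s + 1 : ℕ) : ℤ) - 2 * s - 2 = 0 by push_cast; ring, bin_zero_top,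
          if_neg (by push_cast; omega)]
      rw [htop, mul_zero, add_zero, chebV, Finset.mul_sum]
      refine Finset.sum_congr rfl fun m hm => ?_
      have hm' : m ≤ s := by simp at hm; omega
      rw [show s + 1 - m = (s - m) + 1 by omega, pow_succ]
      ring
    have hA2 : X = chebU (s + 1) + chebU s := by
      rw [hX, chebU]
      have pas : ∀ m ∈ range (s + 2),
          4 ^ (s + 1 - m) * bin (2 * (m : ℤ) - 2 * s - 2) m
            = 4 ^ (s + 1 - m) * bin (2 * (m : ℤ) - 2 * ((s+1:ℕ) : ℤ) - 1) m
              + 4 ^ (s + 1 - m) * bin (2 * (m : ℤ) - 2 * s - 3) ((m : ℤ) - 1) := by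
        intro m _
        have : 2 * (m : ℤ) - 2 * s - 2 = (2 * (m : ℤ) - 2 * s - 3) + 1 := by ring
        rw [this, bin_pascal]
        push_cast
        ring_nf
      rw [Finset.sum_congr rfl pas, Finset.sum_add_distrib]
      congr 1
      rw [Finset.sum_range_succ']
      have h0 : bin (2 * ((0:ℕ) : ℤ) - 2 * s - 3) (((0:ℕ) : ℤ) - 1) = 0 :=
        bin_neg (by norm_num)
      rw [h0, mul_zero, add_zero, chebU]
      refine Finset.sum_congr rfl fun m hm => ?_
      rw [Nat.succ_sub_succ,
        show 2 * ((m+1:ℕ) : ℤ) - 2 * (s:ℤ) - 3 = 2 * (m:ℤ) - 2 * (s:ℤ) - 1 by push_cast; ring,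
        show ((m+1:ℕ) : ℤ) - 1 = (m:ℤ) by push_cast; ring]
    have hB : chebU (s + 1) = chebV (s + 1) + chebV s := by
      rw [chebU, chebV]
      have pas : ∀ m ∈ range (s + 2),
          4 ^ (s + 1 - m) * bin (2 * (m : ℤ) - 2 * ((s+1:ℕ) : ℤ) - 1) m
            = 4 ^ (s + 1 - m) * bin (2 * (m : ℤ) - 2 * ((s+1:ℕ) : ℤ) - 2) m
              + 4 ^ (s + 1 - m) * bin (2 * (m : ℤ) - 2 * s - 4) ((m : ℤ) - 1) := by
        intro m _
        have : 2 * (m : ℤ) - 2 * ((s+1:ℕ) : ℤ) - 1 = (2 * (m : ℤ) - 2 * ((s+1:ℕ) : ℤ) - 2) + 1 := by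
          ring
        rw [this, bin_pascal]
        push_cast
        ring_nf
      rw [Finset.sum_congr rfl pas, Finset.sum_add_distrib]
      congr 1
      rw [Finset.sum_range_succ']
      have h0 : bin (2 * ((0:ℕ) : ℤ) - 2 * s - 4) (((0:ℕ) : ℤ) - 1) = 0 :=
        bin_neg (by norm_num)
      rw [h0, mul_zero, add_zero]
      refine Finset.sum_congr rfl fun m hm => ?_
      rw [Nat.succ_sub_succ,
        show 2 * ((m+1:ℕ) : ℤ) - 2 * (s:ℤ) - 4 = 2 * (m:ℤ) - 2 * (s:ℤ) - 2 by push_cast; ring,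
        show ((m+1:ℕ) : ℤ) - 1 = (m:ℤ) by push_cast; ring]
    constructor
    · have : chebU (s + 1) = 4 * chebV s - chebU s := by omega
      rw [this, hu, hv]; push_cast; ring
    · have h1 : chebU (s + 1) = 4 * chebV s - chebU s := by omega
      have : chebV (s + 1) = chebU (s + 1) - chebV s := by omega
      rw [this, h1, hu, hv]; push_cast; ring

lemma ringchoose_bin (a : ℤ) (k i : ℕ) (h : i ≤ k) :
    Ring.choose a (k - i) = bin a ((k : ℤ) - i) := by
  have h1 : (k : ℤ) - i = ((k - i : ℕ) : ℤ) := by omega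
  rw [bin, h1, if_neg (by omega), Int.toNat_natCast]

lemma W_ge (r j : ℕ) (hj : r ≤ j) :
    ∑ k ∈ range r, (4:ℤ) ^ (r - 1 - k) * bin (2 * (k : ℤ) - 2 * r + 1) ((k : ℤ) - j) = 0 := by
  refine Finset.sum_eq_zero fun k hk => ?_
  simp only [Finset.mem_range] at hk
  rw [bin_neg (by omega), mul_zero]

lemma W_lt (r j : ℕ) (hj : j < r) :
    ∑ k ∈ range r, (4:ℤ) ^ (r - 1 - k) * bin (2 * (k : ℤ) - 2 * r + 1) ((k : ℤ) - j)
      = 2 * (r : ℤ) - 1 - 2 * j := by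
  obtain ⟨s, hs⟩ : ∃ s, r = j + (s + 1) := ⟨r - j - 1, by omega⟩
  subst hs
  rw [Finset.range_eq_Ico, ← Finset.sum_Ico_consecutive _ (Nat.zero_le j) (by omega),
    ← Finset.range_eq_Ico]
  have h1 : ∑ k ∈ range j, (4:ℤ) ^ (j + (s+1) - 1 - k) *
      bin (2 * (k : ℤ) - 2 * (j + (s+1) : ℕ) + 1) ((k : ℤ) - j) = 0 := by
    refine Finset.sum_eq_zero fun k hk => ?_
    simp only [Finset.mem_range] at hk
    rw [bin_neg (by omega), mul_zero]
  rw [h1, zero_add, Finset.sum_Ico_eq_sum_range]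
  have h2 : j + (s+1) - j = s + 1 := by omega
  rw [h2]
  have h3 : ∀ m ∈ range (s+1),
      (4:ℤ) ^ (j + (s+1) - 1 - (j + m)) * bin (2 * ((j + m : ℕ) : ℤ) - 2 * ((j + (s+1) : ℕ)) + 1)
        (((j + m : ℕ) : ℤ) - j)
      = 4 ^ (s - m) * bin (2 * (m : ℤ) - 2 * s - 1) m := by
    intro m hm
    simp only [Finset.mem_range] at hm
    rw [show j + (s+1) - 1 - (j + m) = s - m by omega,
      show 2 * ((j + m : ℕ) : ℤ) - 2 * ((j + (s+1) : ℕ)) + 1 = 2 * (m : ℤ) - 2 * s - 1 by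
        push_cast; ring,
      show ((j + m : ℕ) : ℤ) - j = (m : ℤ) by push_cast; ring]
  rw [Finset.sum_congr rfl h3]
  have := (chebUV s).1
  rw [chebU] at this
  rw [this]
  push_cast; ring

theorem even_powers_sum (n r : ℕ) (hn : 1 ≤ n) (hr1 : 1 ≤ r) (hrn : r ≤ n) :
    (∑ k ∈ Finset.Icc 1 n, ((2 * n).choose (n - k) : ℤ) * (k : ℤ) ^ (2 * r))
      = ∑ k ∈ Finset.range r, (4 : ℤ) ^ (n - k - 1) *
          ∑ i ∈ Finset.range (k + 1),
            ((2 * n).choose i : ℤ) * Ring.choose ((2 * k : ℤ) - 2 * n) (k - i) *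
              ((n : ℤ) - i) ^ (2 * r - 1) := by
  set N : ℕ := 2 * n - 2 * r + 1 with hNdef
  have hmN : (2 * r - 1) + N = 2 * n := by omega
  have hNcast : ((N : ℕ) : ℤ) = 2 * (n : ℤ) - 2 * r + 1 := by
    rw [hNdef]; push_cast [Nat.sub_add_cancel]; omega
  set W : ℕ → ℤ :=
    fun j => ∑ k ∈ range r, (4:ℤ) ^ (r - 1 - k) * bin (2 * (k : ℤ) - 2 * r + 1) ((k : ℤ) - j)
    with hW
  -- inner sum of RHS
  have hAk : ∀ k ∈ range r,
      (∑ i ∈ Finset.range (k + 1),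
        ((2 * n).choose i : ℤ) * Ring.choose ((2 * k : ℤ) - 2 * n) (k - i) *
          ((n : ℤ) - i) ^ (2 * r - 1))
      = ∑ j ∈ range (2 * r - 1 + 1),
          bb n (2 * r - 1) j * bin (2 * (k : ℤ) - 2 * r + 1) ((k : ℤ) - j) := by
    intro k hk
    have step1 : ∀ i ∈ range (k + 1),
        ((2 * n).choose i : ℤ) * Ring.choose ((2 * k : ℤ) - 2 * n) (k - i) *
          ((n : ℤ) - i) ^ (2 * r - 1)
        = ∑ j ∈ range (2 * r - 1 + 1),
            bb n (2 * r - 1) j * (bin ((N : ℕ) : ℤ) ((i : ℤ) - j) *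
              bin (2 * (k : ℤ) - 2 * (n : ℤ)) ((k : ℤ) - i)) := by
      intro i hi
      simp only [Finset.mem_range] at hi
      rw [ringchoose_bin _ k i (by omega), ← bin_nat (2 * n) i]
      have := star n (2 * r - 1) N hmN (i : ℤ)
      calc bin ((2*n : ℕ) : ℤ) i * bin (2 * (k:ℤ) - 2 * n) ((k:ℤ) - i) * ((n:ℤ) - i) ^ (2*r-1)
          = (bin ((2*n : ℕ) : ℤ) i * ((n:ℤ) - i) ^ (2*r-1)) *
              bin (2 * (k:ℤ) - 2 * n) ((k:ℤ) - i) := by ring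
        _ = (∑ j ∈ range (2*r-1+1), bb n (2*r-1) j * bin ((N : ℕ) : ℤ) ((i:ℤ) - j)) *
              bin (2 * (k:ℤ) - 2 * n) ((k:ℤ) - i) := by rw [this]
        _ = _ := by rw [Finset.sum_mul]; exact Finset.sum_congr rfl fun j _ => by ring
    rw [Finset.sum_congr rfl step1, Finset.sum_comm]
    refine Finset.sum_congr rfl fun j hj => ?_
    rw [← Finset.mul_sum, vdm N _ k j, hNcast,
      show 2 * (n:ℤ) - 2 * r + 1 + (2 * (k:ℤ) - 2 * n) = 2 * (k:ℤ) - 2 * r + 1 by ring]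
  have hRHS : (∑ k ∈ Finset.range r, (4 : ℤ) ^ (n - k - 1) *
          ∑ i ∈ Finset.range (k + 1),
            ((2 * n).choose i : ℤ) * Ring.choose ((2 * k : ℤ) - 2 * n) (k - i) *
              ((n : ℤ) - i) ^ (2 * r - 1))
      = 4 ^ (n - r) * ∑ j ∈ range (2 * r - 1 + 1), bb n (2 * r - 1) j * W j := by
    rw [Finset.sum_congr rfl fun k hk => by rw [hAk k hk]]
    have swap : ∀ k ∈ range r, (4 : ℤ) ^ (n - k - 1) *
        ∑ j ∈ range (2 * r - 1 + 1), bb n (2 * r - 1) j * bin (2 * (k : ℤ) - 2 * r + 1) ((k : ℤ) - j)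
        = ∑ j ∈ range (2 * r - 1 + 1), bb n (2 * r - 1) j *
            ((4:ℤ) ^ (n - r) * ((4:ℤ) ^ (r - 1 - k) * bin (2 * (k : ℤ) - 2 * r + 1) ((k : ℤ) - j))) := by
      intro k hk
      simp only [Finset.mem_range] at hk
      rw [Finset.mul_sum]
      refine Finset.sum_congr rfl fun j _ => ?_
      rw [show n - k - 1 = (n - r) + (r - 1 - k) by omega, pow_add]
      ring
    rw [Finset.sum_congr rfl swap, Finset.sum_comm, Finset.mul_sum]
    refine Finset.sum_congr rfl fun j _ => ?_
    simp only [hW, Finset.mul_sum]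
    exact Finset.sum_congr rfl fun k _ => by ring
  have hL1 : (∑ k ∈ Finset.Icc 1 n, ((2 * n).choose (n - k) : ℤ) * (k : ℤ) ^ (2 * r))
      = ∑ i ∈ range n, bin ((2 * n : ℕ) : ℤ) (i : ℤ) * ((n : ℤ) - i) ^ (2 * r) := by
    refine Finset.sum_nbij' (fun k => n - k) (fun i => n - i) ?_ ?_ ?_ ?_ ?_
    · intro k hk; simp only [Finset.mem_Icc] at hk; simp only [Finset.mem_range]; omega
    · intro i hi; simp only [Finset.mem_range] at hi; simp only [Finset.mem_Icc]; omega
    · intro k hk; simp only [Finset.mem_Icc] at hk; show n - (n - k) = k; omega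
    · intro i hi; simp only [Finset.mem_range] at hi; show n - (n - i) = i; omega
    · intro k hk; simp only [Finset.mem_Icc] at hk
      rw [← bin_nat (2 * n) (n - k), show ((n:ℤ) - ((n - k : ℕ) : ℤ)) = (k : ℤ) by omega]
  have hF : ∑ i ∈ range (2 * n + 1), bin ((2 * n : ℕ) : ℤ) (i : ℤ) * ((n : ℤ) - i) ^ (2 * r)
      = 2 * ∑ i ∈ range n, bin ((2 * n : ℕ) : ℤ) (i : ℤ) * ((n : ℤ) - i) ^ (2 * r) := by
    rw [Finset.range_eq_Ico,
      ← Finset.sum_Ico_consecutive _ (Nat.zero_le n) (by omega : n ≤ 2 * n + 1),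
      ← Finset.range_eq_Ico, Finset.sum_Ico_eq_sum_range,
      show 2 * n + 1 - n = n + 1 by omega, Finset.sum_range_succ']
    have h00 : bin ((2 * n : ℕ) : ℤ) ((n + 0 : ℕ) : ℤ) * ((n : ℤ) - ((n + 0 : ℕ) : ℤ)) ^ (2 * r)
        = 0 := by
      rw [show (n:ℤ) - ((n + 0 : ℕ) : ℤ) = 0 by push_cast; ring, zero_pow (by omega), mul_zero]
    rw [h00, add_zero]
    have hrefl := Finset.sum_range_reflect
      (fun i => bin ((2 * n : ℕ) : ℤ) ((n + (i + 1) : ℕ) : ℤ)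
        * ((n : ℤ) - ((n + (i + 1) : ℕ) : ℤ)) ^ (2 * r)) n
    rw [← hrefl]
    have symm_term : ∀ i ∈ range n,
        bin ((2 * n : ℕ) : ℤ) ((n + (n - 1 - i + 1) : ℕ) : ℤ)
          * ((n : ℤ) - ((n + (n - 1 - i + 1) : ℕ) : ℤ)) ^ (2 * r)
        = bin ((2 * n : ℕ) : ℤ) (i : ℤ) * ((n : ℤ) - i) ^ (2 * r) := by
      intro i hi
      simp only [Finset.mem_range] at hi
      have hidx : n + (n - 1 - i + 1) = 2 * n - i := by omega
      rw [hidx, bin_nat, bin_nat, Nat.choose_symm (by omega : i ≤ 2 * n),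
        show (n:ℤ) - ((2 * n - i : ℕ) : ℤ) = -((n : ℤ) - i) by omega,
        Even.neg_pow (even_two_mul r)]
    rw [Finset.sum_congr rfl symm_term]
    ring
  have hswap : ∑ i ∈ range (2 * n + 1), bin ((2 * n : ℕ) : ℤ) (i : ℤ) * ((n : ℤ) - i) ^ (2 * r)
      = ∑ j ∈ range (2 * r - 1 + 1), bb n (2 * r - 1) j *
          ∑ i ∈ range (2 * n + 1), ((n : ℤ) - i) * bin ((N : ℕ) : ℤ) ((i : ℤ) - j) := by
    have step1 : ∀ i ∈ range (2 * n + 1),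
        bin ((2 * n : ℕ) : ℤ) (i : ℤ) * ((n : ℤ) - i) ^ (2 * r)
        = ∑ j ∈ range (2 * r - 1 + 1),
            bb n (2 * r - 1) j * (((n : ℤ) - i) * bin ((N : ℕ) : ℤ) ((i : ℤ) - j)) := by
      intro i _
      rw [show ((n:ℤ) - i) ^ (2 * r) = ((n:ℤ) - i) ^ (2 * r - 1) * ((n:ℤ) - i) by
          rw [← pow_succ]; congr 1; omega,
        ← mul_assoc, star n (2 * r - 1) N hmN (i : ℤ), Finset.sum_mul]
      exact Finset.sum_congr rfl fun j _ => by ring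
    rw [Finset.sum_congr rfl step1, Finset.sum_comm]
    exact Finset.sum_congr rfl fun j _ => by rw [Finset.mul_sum]
  have hrow : ∀ j ∈ range (2 * r - 1 + 1),
      2 * ∑ i ∈ range (2 * n + 1), ((n : ℤ) - i) * bin ((N : ℕ) : ℤ) ((i : ℤ) - j)
        = 2 ^ N * (2 * (r : ℤ) - 1 - 2 * j) := by
    intro j hj
    simp only [Finset.mem_range] at hj
    rw [show 2 * n + 1 = (2 * n) + 1 from rfl, rowsum (2 * n) (n : ℤ) N j (by omega)]
    rw [hNcast]; ring
  have hT : ∑ j ∈ range (2 * r - 1 + 1), bb n (2 * r - 1) j * (2 * (r : ℤ) - 1 - 2 * j)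
      = 2 * ∑ j ∈ range (2 * r - 1 + 1), bb n (2 * r - 1) j * W j := by
    have key : ∑ j ∈ range (2 * r),
        bb n (2 * r - 1) (j : ℤ) * ((2 * (r : ℤ) - 1 - 2 * j) - 2 * W j) = 0 := by
      set f : ℕ → ℤ :=
        fun j => bb n (2 * r - 1) (j : ℤ) * ((2 * (r : ℤ) - 1 - 2 * j) - 2 * W j) with hf
      have hneg : ∀ j ∈ range (2 * r), f (2 * r - 1 - j) = - f j := by
        intro j hj
        simp only [Finset.mem_range] at hj
        have hbb : bb n (2 * r - 1) ((2 * r - 1 - j : ℕ) : ℤ)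
            = - bb n (2 * r - 1) (j : ℤ) := by
          rw [show ((2 * r - 1 - j : ℕ) : ℤ) = (((2 * r - 1 : ℕ) : ℕ) : ℤ) - (j : ℤ) by omega,
            bb_antisym n (2 * r - 1) (j : ℤ), Odd.neg_one_pow (by exact ⟨r - 1, by omega⟩)]
          ring
        rcases lt_or_ge j r with hjr | hjr
        · have hW1 : W j = 2 * (r : ℤ) - 1 - 2 * j := W_lt r j hjr
          have hW2 : W (2 * r - 1 - j) = 0 := W_ge r _ (by omega)
          rw [hf]
          simp only []
          rw [hbb, hW1, hW2, show ((2 * r - 1 - j : ℕ) : ℤ) = 2 * (r:ℤ) - 1 - j by omega]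
          ring
        · have hW1 : W j = 0 := W_ge r j hjr
          have hW2 : W (2 * r - 1 - j) = 2 * (r : ℤ) - 1 - 2 * ((2 * r - 1 - j : ℕ) : ℤ) :=
            W_lt r _ (by omega)
          rw [hf]
          simp only []
          rw [hbb, hW1, hW2, show ((2 * r - 1 - j : ℕ) : ℤ) = 2 * (r:ℤ) - 1 - j by omega]
          ring
      have hrefl := Finset.sum_range_reflect f (2 * r)
      rw [Finset.sum_congr rfl hneg, Finset.sum_neg_distrib] at hrefl
      linarith
    rw [show 2 * r - 1 + 1 = 2 * r by omega]
    have expand : ∀ j ∈ range (2 * r),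
        bb n (2 * r - 1) (j : ℤ) * ((2 * (r : ℤ) - 1 - 2 * j) - 2 * W j)
        = bb n (2 * r - 1) (j : ℤ) * (2 * (r : ℤ) - 1 - 2 * j)
          - 2 * (bb n (2 * r - 1) (j : ℤ) * W j) := by
      intro j _; ring
    rw [Finset.sum_congr rfl expand, Finset.sum_sub_distrib, ← Finset.mul_sum] at key
    linarith
  -- final combination
  rw [hL1, hRHS]
  have e1 : (4 : ℤ) * ∑ i ∈ range n, bin ((2 * n : ℕ) : ℤ) (i : ℤ) * ((n : ℤ) - i) ^ (2 * r)
      = 2 ^ N * ∑ j ∈ range (2 * r - 1 + 1), bb n (2 * r - 1) j * (2 * (r : ℤ) - 1 - 2 * j) := by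
    calc (4 : ℤ) * ∑ i ∈ range n, bin ((2 * n : ℕ) : ℤ) (i : ℤ) * ((n : ℤ) - i) ^ (2 * r)
        = 2 * (2 * ∑ i ∈ range n, bin ((2 * n : ℕ) : ℤ) (i : ℤ) * ((n : ℤ) - i) ^ (2 * r)) := by
          ring
      _ = 2 * ∑ i ∈ range (2 * n + 1), bin ((2 * n : ℕ) : ℤ) (i : ℤ) * ((n : ℤ) - i) ^ (2 * r) := by
          rw [hF]
      _ = ∑ j ∈ range (2 * r - 1 + 1), bb n (2 * r - 1) j *
            (2 * ∑ i ∈ range (2 * n + 1), ((n : ℤ) - i) * bin ((N : ℕ) : ℤ) ((i : ℤ) - j)) := by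
          rw [hswap, Finset.mul_sum]
          exact Finset.sum_congr rfl fun j _ => by ring
      _ = ∑ j ∈ range (2 * r - 1 + 1), bb n (2 * r - 1) j * (2 ^ N * (2 * (r : ℤ) - 1 - 2 * j)) := by
          exact Finset.sum_congr rfl fun j hj => by rw [hrow j hj]
      _ = _ := by rw [Finset.mul_sum]; exact Finset.sum_congr rfl fun j _ => by ring
  have e2 : (4 : ℤ) * (4 ^ (n - r) * ∑ j ∈ range (2 * r - 1 + 1), bb n (2 * r - 1) j * W j)
      = 2 ^ N * (2 * ∑ j ∈ range (2 * r - 1 + 1), bb n (2 * r - 1) j * W j) := by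
    calc (4:ℤ) * (4 ^ (n - r) * ∑ j ∈ range (2 * r - 1 + 1), bb n (2 * r - 1) j * W j)
        = 2 ^ (2 + 2 * (n - r)) * ∑ j ∈ range (2 * r - 1 + 1), bb n (2 * r - 1) j * W j := by
          rw [show (4:ℤ) = 2 ^ 2 by norm_num, ← pow_mul, pow_add]; ring
      _ = 2 ^ N * (2 * ∑ j ∈ range (2 * r - 1 + 1), bb n (2 * r - 1) j * W j) := by
          rw [show 2 + 2 * (n - r) = N + 1 by omega, pow_succ]; ring
  refine mul_left_cancel₀ (show (4 : ℤ) ≠ 0 by norm_num) ?_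
  rw [e1, e2, hT]
end

section
/- For every integer n ≥ 1, the following identity holds in the polynomial ring ℤ[q]: (1 + q^n) · Σ_{k=1}^{n} (1 - q^k) · [2n choose n-k]_q · q^{k(k-1)/2} = (1 - q^n) · [2n choose n]_q. Equivalently, Σ_{k=1}^{n} ((1-q^k)/(1-q^n)) [2n choose n-k]_q q^{binom(k,2)} = [2n choose n]_q / (1+q^n). -/
open Finset Polynomial

private lemma one_sub_X_pow_ne_zero (m : ℕ) (hm : 1 ≤ m) :
    (1 - (X : Polynomial ℤ) ^ m) ≠ 0 := by
  intro h
  have h0 := congrArg (Polynomial.eval 0) h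
  simp [zero_pow (by omega : m ≠ 0)] at h0

private lemma prod_one_sub_X_pow_ne_zero (N : ℕ) :
    (∏ i ∈ Finset.range N, (1 - (X : Polynomial ℤ) ^ (i + 1))) ≠ 0 := by
  apply Finset.prod_ne_zero_iff.mpr
  intro i _
  exact one_sub_X_pow_ne_zero (i + 1) (by omega)

private lemma B_rec (B : ℕ → ℕ → Polynomial ℤ)
    (hB : ∀ M N : ℕ, N ≤ M →
      (∏ i ∈ Finset.range N, (1 - (X : Polynomial ℤ) ^ (i + 1))) * B M N
        = ∏ i ∈ Finset.range N, (1 - (X : Polynomial ℤ) ^ (M - N + i + 1)))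
    (M m : ℕ) (h1 : 1 ≤ m) (h2 : m ≤ M) :
    (1 - (X : Polynomial ℤ) ^ m) * B M m
      = (1 - (X : Polynomial ℤ) ^ (M - m + 1)) * B M (m - 1) := by
  obtain ⟨m', rfl⟩ : ∃ m', m = m' + 1 := ⟨m - 1, by omega⟩
  have hA := hB M (m' + 1) h2
  have hA' := hB M m' (by omega)
  have key : (∏ i ∈ Finset.range (m' + 1), (1 - (X : Polynomial ℤ) ^ (M - (m' + 1) + i + 1)))
      = (∏ i ∈ Finset.range m', (1 - (X : Polynomial ℤ) ^ (M - m' + i + 1)))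
        * (1 - (X : Polynomial ℤ) ^ (M - (m' + 1) + 1)) := by
    rw [Finset.prod_range_succ']
    refine congrArg₂ _ (Finset.prod_congr rfl fun i _ => ?_) (by norm_num)
    congr 2
    omega
  rw [Finset.prod_range_succ, key, ← hA'] at hA
  simp only [Nat.add_sub_cancel]
  apply mul_left_cancel₀ (prod_one_sub_X_pow_ne_zero m')
  linear_combination hA

/-- For every integer `n ≥ 1`, the identity
`(1 + q^n) · Σ_{k=1}^{n} (1 - q^k) · [2n choose n-k]_q · q^{k(k-1)/2} = (1 - q^n) · [2n choose n]_q`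
holds in `ℤ[q]`.  Here the Gaussian binomial coefficients are encoded by any family
`B : ℕ → ℕ → ℤ[q]` satisfying, for `N ≤ M`, the defining product relation
`(Π_{i=1}^{N} (1 - q^i)) · B M N = Π_{i=1}^{N} (1 - q^{M-N+i})`,
which determines `B M N` uniquely (ℤ[q] being an integral domain). -/
theorem q_shapiro_identity (B : ℕ → ℕ → Polynomial ℤ)
    (hB : ∀ M N : ℕ, N ≤ M →
      (∏ i ∈ Finset.range N, (1 - (X : Polynomial ℤ) ^ (i + 1))) * B M N
        = ∏ i ∈ Finset.range N, (1 - (X : Polynomial ℤ) ^ (M - N + i + 1)))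
    (n : ℕ) (hn : 1 ≤ n) :
    (1 + (X : Polynomial ℤ) ^ n) *
        ∑ k ∈ Finset.Icc 1 n,
          (1 - (X : Polynomial ℤ) ^ k) * B (2 * n) (n - k) * (X : Polynomial ℤ) ^ (k * (k - 1) / 2)
      = (1 - (X : Polynomial ℤ) ^ n) * B (2 * n) n := by
  set F : ℕ → Polynomial ℤ := fun k =>
    (X : Polynomial ℤ) ^ (k * (k - 1) / 2) * ((X : Polynomial ℤ) ^ k - (X : Polynomial ℤ) ^ n)
      * B (2 * n) (n - k) with hF
  have key : ∀ i ∈ Finset.range n,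
      (1 + (X : Polynomial ℤ) ^ n) *
        ((1 - (X : Polynomial ℤ) ^ (1 + i)) * B (2 * n) (n - (1 + i))
          * (X : Polynomial ℤ) ^ ((1 + i) * ((1 + i) - 1) / 2))
      = F i - F (i + 1) := by
    intro i hi
    rw [Finset.mem_range] at hi
    rw [show (1 : ℕ) + i = i + 1 from by omega]
    have hrec := B_rec B hB (2 * n) (n - i) (by omega) (by omega)
    rw [show 2 * n - (n - i) + 1 = n + i + 1 from by omega, Nat.sub_sub] at hrec
    have hc : (i + 1) * ((i + 1) - 1) / 2 = i * (i - 1) / 2 + i := by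
      rw [← Nat.choose_two_right, ← Nat.choose_two_right, Nat.choose_succ_succ,
        Nat.choose_one_right, Nat.add_comm]
    apply mul_left_cancel₀ (one_sub_X_pow_ne_zero (n - i) (by omega))
    simp only [hF]
    rw [hc]
    rw [show (X : Polynomial ℤ) ^ n = (X : Polynomial ℤ) ^ (i + (n - i)) from by congr 1; omega]
    rw [show (X : Polynomial ℤ) ^ (n + i + 1)
        = (X : Polynomial ℤ) ^ (i + (n - i) + i + 1) from by congr 1; omega] at hrec
    linear_combination (-(X : Polynomial ℤ) ^ (i * (i - 1) / 2)
      * ((X : Polynomial ℤ) ^ i - (X : Polynomial ℤ) ^ (i + (n - i)))) * hrec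
  rw [← Finset.Ico_add_one_right_eq_Icc, Finset.sum_Ico_eq_sum_range, Nat.add_sub_cancel, Finset.mul_sum,
    Finset.sum_congr rfl key, Finset.sum_range_sub']
  simp [hF]
end
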